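/- arXiv:1704.02660 — 8 statements merged into one kernel-verified Lean document; each statement's English description precedes it below -/
import Mathlib

section
/- If the n-tuple (μ₁,…,μₙ) of Borel probability measures on ℝ is jointly mixable with center C, then the average measure μ = (μ₁ + ⋯ + μₙ)/n is n-completely mixable with n-center C/n. -/
open MeasureTheory ENNReal

/-- The tuple `μ` of Borel probability measures on ℝ is jointly mixable with center `C`:
there is a probability measure on ℝⁿ whose `i`-th one-dimensional marginal is `μ i` for each `i`
and which gives probability one to the hyperplane `{x : x₁ + ⋯ + xₙ = C}`. -/
def IsJointMix (n : ℕ) (μ : Fin n → Measure ℝ) (C : ℝ) : Prop :=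
  ∃ P : Measure (Fin n → ℝ), IsProbabilityMeasure P ∧
    (∀ i, P.map (fun x => x i) = μ i) ∧
    P {x | ∑ i, x i = C} = 1

/-- A Borel probability measure `μ` on ℝ is `n`-completely mixable with `n`-center `c`. -/
def IsCompletelyMixable (n : ℕ) (μ : Measure ℝ) (c : ℝ) : Prop :=
  IsJointMix n (fun _ => μ) (n * c)

theorem stmt0 (n : ℕ) (hn : 0 < n) (μ : Fin n → Measure ℝ)
    (hprob : ∀ i, IsProbabilityMeasure (μ i)) (C : ℝ)
    (hJM : IsJointMix n μ C) :
    IsCompletelyMixable n ((n : ℝ≥0∞)⁻¹ • ∑ i, μ i) (C / n) := by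
  haveI : NeZero n := ⟨hn.ne'⟩
  obtain ⟨P, hP, hmarg, hconc⟩ := hJM
  have hn0 : (n : ℝ≥0∞) ≠ 0 := by exact_mod_cast hn.ne'
  have hnR0 : (n : ℝ) ≠ 0 := by exact_mod_cast hn.ne'
  have hnt : (n : ℝ≥0∞) ≠ ⊤ := ENNReal.natCast_ne_top n
  -- cyclic shifts
  set σ : Fin n → (Fin n → ℝ) → (Fin n → ℝ) := fun k x i => x (i + k) with hσ
  have hσmeas : ∀ k, Measurable (σ k) := fun k =>
    measurable_pi_lambda _ (fun i => measurable_pi_apply _)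
  refine ⟨(n : ℝ≥0∞)⁻¹ • ∑ k : Fin n, P.map (σ k), ?_, ?_, ?_⟩
  · constructor
    simp only [Measure.smul_apply, Measure.coe_finset_sum, Finset.sum_apply, smul_eq_mul]
    have h1 : ∀ k : Fin n, P.map (σ k) Set.univ = 1 := by
      intro k
      rw [Measure.map_apply (hσmeas k) MeasurableSet.univ]
      simp [measure_univ]
    rw [Finset.sum_congr rfl (fun k _ => h1 k)]
    simp [ENNReal.inv_mul_cancel hn0 hnt]
  · intro i
    ext s hs
    have hpi : Measurable (fun x : Fin n → ℝ => x i) := measurable_pi_apply i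
    rw [Measure.map_apply hpi hs]
    simp only [Measure.smul_apply, Measure.coe_finset_sum, Finset.sum_apply, smul_eq_mul]
    have h2 : ∀ k : Fin n, P.map (σ k) ((fun x : Fin n → ℝ => x i) ⁻¹' s) = μ (i + k) s := by
      intro k
      rw [Measure.map_apply (hσmeas k) (hpi hs)]
      have : σ k ⁻¹' ((fun x : Fin n → ℝ => x i) ⁻¹' s)
          = (fun x : Fin n → ℝ => x (i + k)) ⁻¹' s := rfl
      rw [this, ← Measure.map_apply (measurable_pi_apply (i + k)) hs, hmarg (i + k)]
    rw [Finset.sum_congr rfl (fun k _ => h2 k)]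
    have h3 : ∑ k : Fin n, μ (i + k) s = ∑ j : Fin n, μ j s :=
      Fintype.sum_equiv (Equiv.addLeft i) _ _ (fun k => rfl)
    rw [h3]
  · have hCeq : (n : ℝ) * (C / n) = C := by field_simp
    have hset : {x : Fin n → ℝ | ∑ i, x i = (n : ℝ) * (C / n)}
        = {x : Fin n → ℝ | ∑ i, x i = C} := by rw [hCeq]
    rw [hset]
    have hmeasset : MeasurableSet {x : Fin n → ℝ | ∑ i, x i = C} := by
      have : Measurable fun x : Fin n → ℝ => ∑ i, x i :=
        Finset.measurable_sum _ (fun i _ => measurable_pi_apply i)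
      exact this (measurableSet_singleton C)
    simp only [Measure.smul_apply, Measure.coe_finset_sum, Finset.sum_apply, smul_eq_mul]
    have h4 : ∀ k : Fin n, P.map (σ k) {x : Fin n → ℝ | ∑ i, x i = C} = 1 := by
      intro k
      rw [Measure.map_apply (hσmeas k) hmeasset]
      have : σ k ⁻¹' {x : Fin n → ℝ | ∑ i, x i = C} = {x : Fin n → ℝ | ∑ i, x i = C} := by
        ext x
        simp only [Set.mem_preimage, Set.mem_setOf_eq, hσ]
        constructor <;> intro h
        · rw [← h]; exact (Fintype.sum_equiv (Equiv.addRight k) _ _ (fun i => rfl)).symm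
        · rw [← h]; exact Fintype.sum_equiv (Equiv.addRight k) _ _ (fun i => rfl)
      rw [this, hconc]
    rw [Finset.sum_congr rfl (fun k _ => h4 k)]
    simp [ENNReal.inv_mul_cancel hn0 hnt]
end

section
/- Let 1 ≤ k < n and let ν and γ be Borel probability measures on ℝ such that ν is k-completely mixable with k-center c₁ and γ is (n−k)-completely mixable with (n−k)-center c₂. Then the mixture (k·ν + (n−k)·γ)/n is n-completely mixable with n-center (k·c₁ + (n−k)·c₂)/n. In particular, for any x, y ∈ ℝ, the measure (k·δₓ + (n−k)·δ_y)/n is n-completely mixable. -/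
open MeasureTheory ENNReal

lemma map_finset_sum_meas {α β ι : Type*} [MeasurableSpace α] [MeasurableSpace β]
    {f : α → β} (hf : Measurable f) (s : Finset ι) (μ : ι → Measure α) :
    (∑ i ∈ s, μ i).map f = ∑ i ∈ s, (μ i).map f := by
  classical
  induction s using Finset.induction with
  | empty => simp
  | insert _ _ h ih => rw [Finset.sum_insert h, Finset.sum_insert h, Measure.map_add _ _ hf, ih]

lemma dirac_CM (j : ℕ) (x : ℝ) : IsCompletelyMixable j (Measure.dirac x) x := by
  refine ⟨Measure.dirac (fun _ => x), by infer_instance, ?_, ?_⟩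
  · intro i
    rw [Measure.map_dirac' (measurable_pi_apply i)]
  · rw [Measure.dirac_apply_of_mem]
    simp [Finset.sum_const, mul_comm]

lemma main_mix (n k : ℕ) (hk : 1 ≤ k) (hkn : k < n)
    (ν γ : Measure ℝ) [IsProbabilityMeasure ν] [IsProbabilityMeasure γ]
    (c₁ c₂ : ℝ)
    (hν : IsCompletelyMixable k ν c₁) (hγ : IsCompletelyMixable (n - k) γ c₂) :
    IsCompletelyMixable n
      ((n : ℝ≥0∞)⁻¹ • ((k : ℝ≥0∞) • ν + ((n - k : ℕ) : ℝ≥0∞) • γ))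
      ((k * c₁ + ((n - k : ℕ) : ℝ) * c₂) / n) := by
  haveI : NeZero n := ⟨by omega⟩
  set m := n - k with hm
  have hnm : k + m = n := by omega
  obtain ⟨P, hP, hPm, hPs⟩ := hν
  obtain ⟨Q, hQ, hQm, hQs⟩ := hγ
  -- the gluing map
  set f : (Fin k → ℝ) × (Fin m → ℝ) → Fin n → ℝ :=
    fun pq i => Fin.append pq.1 pq.2 (Fin.cast hnm.symm i) with hf
  have hfm : Measurable f := by
    apply measurable_pi_lambda
    intro i
    refine Fin.addCases (motive := fun j => Measurable fun pq : (Fin k → ℝ) × (Fin m → ℝ) =>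
      Fin.append pq.1 pq.2 j) ?_ ?_ (Fin.cast hnm.symm i)
    · intro j; simpa [Fin.append_left, Function.comp_def] using (measurable_pi_apply j).comp measurable_fst
    · intro j; simpa [Fin.append_right, Function.comp_def] using (measurable_pi_apply j).comp measurable_snd
  have hfsum : ∀ pq, ∑ i, f pq i = (∑ i, pq.1 i) + ∑ i, pq.2 i := by
    intro pq
    have := Equiv.sum_comp (finCongr hnm) (fun i => f pq i)
    rw [← this]
    simp only [hf, finCongr_apply, Fin.cast_cast, Fin.cast_eq_self]
    rw [Fin.sum_univ_add]
    simp [Fin.append_left, Fin.append_right]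
  set R : Measure (Fin n → ℝ) := (P.prod Q).map f with hR
  haveI : IsProbabilityMeasure R := Measure.isProbabilityMeasure_map hfm.aemeasurable
  -- marginals of R
  have margR : ∀ t : Fin n, R.map (fun x => x t) = if (t : ℕ) < k then ν else γ := by
    intro t
    rw [hR, Measure.map_map (measurable_pi_apply t) hfm]
    have : ((fun x : Fin n → ℝ => x t) ∘ f) = fun pq => Fin.append pq.1 pq.2 (Fin.cast hnm.symm t) := rfl
    rw [this]
    by_cases ht : (t : ℕ) < k
    · have he : (Fin.cast hnm.symm t) = Fin.castAdd m ⟨(t : ℕ), ht⟩ := by ext; simp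
      rw [he]
      simp only [Fin.append_left]
      have : (fun pq : (Fin k → ℝ) × (Fin m → ℝ) => pq.1 ⟨(t : ℕ), ht⟩) =
          (fun p : Fin k → ℝ => p ⟨(t : ℕ), ht⟩) ∘ Prod.fst := rfl
      rw [this, ← Measure.map_map (measurable_pi_apply _) measurable_fst,
        ← Measure.fst, Measure.fst_prod, hPm, if_pos ht]
    · have hge : k ≤ (t : ℕ) := le_of_not_gt ht
      have he : (Fin.cast hnm.symm t) = Fin.natAdd k ⟨(t : ℕ) - k, by omega⟩ := by
        ext; simp; omega
      rw [he]
      simp only [Fin.append_right]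
      have : (fun pq : (Fin k → ℝ) × (Fin m → ℝ) => pq.2 ⟨(t : ℕ) - k, by omega⟩) =
          (fun q : Fin m → ℝ => q ⟨(t : ℕ) - k, by omega⟩) ∘ Prod.snd := rfl
      rw [this, ← Measure.map_map (measurable_pi_apply _) measurable_snd,
        ← Measure.snd, Measure.snd_prod, hQm, if_neg ht]
  -- rotations
  set rot : Fin n → (Fin n → ℝ) → Fin n → ℝ := fun j x i => x (i + j) with hrot
  have hrotm : ∀ j, Measurable (rot j) := fun j =>
    measurable_pi_lambda _ fun i => measurable_pi_apply _
  set lam : Measure (Fin n → ℝ) := (n : ℝ≥0∞)⁻¹ • ∑ j : Fin n, R.map (rot j) with hlam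
  haveI hprj : ∀ j : Fin n, IsProbabilityMeasure (R.map (rot j)) := fun j =>
    Measure.isProbabilityMeasure_map (hrotm j).aemeasurable
  refine ⟨lam, ?_, ?_, ?_⟩
  · constructor
    rw [hlam]
    simp only [Measure.smul_apply, Measure.coe_finset_sum, Finset.sum_apply, smul_eq_mul]
    rw [Finset.sum_congr rfl (fun j _ => (hprj j).measure_univ)]
    have hn0 : n ≠ 0 := NeZero.ne n
    simp only [Finset.sum_const, Finset.card_univ, Fintype.card_fin, nsmul_eq_mul, mul_one]
    exact ENNReal.inv_mul_cancel (by exact_mod_cast hn0) (ENNReal.natCast_ne_top n)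
  · intro i
    rw [hlam, Measure.map_smul, map_finset_sum_meas (measurable_pi_apply i)]
    have step : ∀ j : Fin n, (R.map (rot j)).map (fun x => x i) =
        (if ((i + j : Fin n) : ℕ) < k then ν else γ) := by
      intro j
      rw [Measure.map_map (measurable_pi_apply i) (hrotm j)]
      have : ((fun x : Fin n → ℝ => x i) ∘ rot j) = fun x => x (i + j) := rfl
      rw [this, margR]
    rw [Finset.sum_congr rfl (fun j _ => step j)]
    have : ∑ j : Fin n, (if ((i + j : Fin n) : ℕ) < k then ν else γ) =
        ∑ t : Fin n, (if (t : ℕ) < k then ν else γ) :=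
      Equiv.sum_comp (Equiv.addLeft i) (fun t => if (t : ℕ) < k then ν else γ)
    rw [this, ← Equiv.sum_comp (finCongr hnm) (fun t => if (t : ℕ) < k then ν else γ),
      Fin.sum_univ_add]
    simp only [finCongr_apply, Fin.coe_cast, Fin.coe_castAdd, Fin.coe_natAdd]
    have h1 : ∀ j : Fin k, (if (j : ℕ) < k then ν else γ) = ν := fun j => if_pos j.isLt
    have h2 : ∀ j : Fin m, (if k + (j : ℕ) < k then ν else γ) = γ := fun j =>
      if_neg (by omega)
    rw [Finset.sum_congr rfl (fun j _ => h1 j), Finset.sum_congr rfl (fun j _ => h2 j)]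
    simp only [Finset.sum_const, Finset.card_univ, Fintype.card_fin]
    rw [← Nat.cast_smul_eq_nsmul ℝ≥0∞ k ν, ← Nat.cast_smul_eq_nsmul ℝ≥0∞ m γ]
  · -- hyperplane
    have hn0' : (n : ℝ) ≠ 0 := Nat.cast_ne_zero.mpr (NeZero.ne n)
    have hC : (n : ℝ) * ((k * c₁ + ((n - k : ℕ) : ℝ) * c₂) / n) = k * c₁ + (m : ℝ) * c₂ := by
      rw [mul_comm, div_mul_cancel₀ _ hn0']
    rw [hC]
    set S : Set (Fin n → ℝ) := {x | ∑ i, x i = k * c₁ + (m : ℝ) * c₂} with hS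
    have hSm : MeasurableSet S := by
      apply measurableSet_eq_fun
      · exact Finset.measurable_sum _ (fun i _ => measurable_pi_apply i)
      · exact measurable_const
    have hRS : R S = 1 := by
      rw [hR, Measure.map_apply hfm hSm]
      have hsub : ({p : Fin k → ℝ | ∑ i, p i = k * c₁} ×ˢ {q : Fin m → ℝ | ∑ i, q i = (m : ℝ) * c₂}) ⊆ f ⁻¹' S := by
        rintro ⟨p, q⟩ ⟨hp, hq⟩
        simp only [Set.mem_preimage, hS, Set.mem_setOf_eq, hfsum]
        rw [hp, hq]
      refine le_antisymm (prob_le_one) ?_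
      calc (1 : ℝ≥0∞) = P {p : Fin k → ℝ | ∑ i, p i = k * c₁} * Q {q : Fin m → ℝ | ∑ i, q i = (m : ℝ) * c₂} := by
            rw [hPs, hQs]; simp
        _ = (P.prod Q) (_ ×ˢ _) := (Measure.prod_prod _ _).symm
        _ ≤ (P.prod Q) (f ⁻¹' S) := measure_mono hsub
    have hrotS : ∀ j, rot j ⁻¹' S = S := by
      intro j
      ext x
      simp only [Set.mem_preimage, hS, Set.mem_setOf_eq, hrot]
      have hsum : ∑ i : Fin n, x (i + j) = ∑ i, x i :=
        Fintype.sum_equiv (Equiv.addRight j) _ _ (fun i => rfl)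
      rw [hsum]
    rw [hlam]
    simp only [Measure.smul_apply, Measure.coe_finset_sum, Finset.sum_apply, smul_eq_mul]
    have : ∀ j : Fin n, (R.map (rot j)) S = 1 := by
      intro j
      rw [Measure.map_apply (hrotm j) hSm, hrotS j, hRS]
    rw [Finset.sum_congr rfl (fun j _ => this j)]
    have hn0 : n ≠ 0 := NeZero.ne n
    simp only [Finset.sum_const, Finset.card_univ, Fintype.card_fin, nsmul_eq_mul, mul_one]
    exact ENNReal.inv_mul_cancel (by exact_mod_cast hn0) (ENNReal.natCast_ne_top n)

theorem stmt2 (n k : ℕ) (hk : 1 ≤ k) (hkn : k < n)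
    (ν γ : Measure ℝ) [IsProbabilityMeasure ν] [IsProbabilityMeasure γ]
    (c₁ c₂ : ℝ)
    (hν : IsCompletelyMixable k ν c₁) (hγ : IsCompletelyMixable (n - k) γ c₂) :
    IsCompletelyMixable n
      ((n : ℝ≥0∞)⁻¹ • ((k : ℝ≥0∞) • ν + ((n - k : ℕ) : ℝ≥0∞) • γ))
      ((k * c₁ + ((n - k : ℕ) : ℝ) * c₂) / n) ∧
    ∀ x y : ℝ, ∃ c : ℝ, IsCompletelyMixable n
      ((n : ℝ≥0∞)⁻¹ • ((k : ℝ≥0∞) • Measure.dirac x + ((n - k : ℕ) : ℝ≥0∞) • Measure.dirac y)) c := by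
  refine ⟨main_mix n k hk hkn ν γ c₁ c₂ hν hγ, fun x y => ?_⟩
  exact ⟨(k * x + ((n - k : ℕ) : ℝ) * y) / n,
    main_mix n k hk hkn (Measure.dirac x) (Measure.dirac y) x y
      (dirac_CM k x) (dirac_CM (n - k) y)⟩
end

section
/- Let (μ₁,…,μₙ) be an n-tuple of Borel probability measures on ℝ that is jointly mixable, and suppose that at least n−2 of the measures μ₁,…,μₙ have finite mean (i.e., ∫|x| dμᵢ(x) < ∞). Then the center of (μ₁,…,μₙ) is unique: if (μ₁,…,μₙ) is jointly mixable with center C₁ and with center C₂, then C₁ = C₂. -/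
open MeasureTheory ENNReal

section Aux
open Filter

noncomputable def tr (M : ℕ) (t : ℝ) : ℝ := max (-(M:ℝ)) (min (M:ℝ) t)

lemma tr_lip (M : ℕ) (a b : ℝ) : |tr M a - tr M b| ≤ |a - b| := by
  unfold tr
  simp only [max_def, min_def]
  split_ifs <;> cases abs_cases (a - b) <;> rw [abs_le] <;> constructor <;> linarith

lemma tr_neg (M : ℕ) (t : ℝ) : tr M (-t) = - tr M t := by
  unfold tr
  simp only [max_def, min_def]
  split_ifs <;> push_cast at * <;> linarith

lemma tr_add_le (M : ℕ) (a b : ℝ) : |tr M a + tr M b| ≤ |a + b| := by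
  have h := tr_lip M a (-b)
  rw [tr_neg] at h
  simpa [sub_neg_eq_add] using h

lemma tr_zero (M : ℕ) : tr M 0 = 0 := by
  unfold tr; simp

lemma tr_abs_le (M : ℕ) (a : ℝ) : |tr M a| ≤ |a| := by
  have := tr_add_le M a 0
  simpa [tr_zero] using this

lemma tr_bound (M : ℕ) (t : ℝ) : |tr M t| ≤ (M : ℝ) := by
  unfold tr
  rw [abs_le]
  constructor
  · exact le_max_left _ _
  · exact max_le ((neg_nonpos.mpr (Nat.cast_nonneg M)).trans (Nat.cast_nonneg M)) (min_le_left _ _)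

lemma tr_continuous (M : ℕ) : Continuous (tr M) :=
  continuous_const.max (continuous_const.min continuous_id)

lemma tr_tendsto (t : ℝ) : Tendsto (fun M : ℕ => tr M t) atTop (nhds t) := by
  have : ∀ᶠ M : ℕ in atTop, tr M t = t := by
    obtain ⟨N, hN⟩ := exists_nat_ge |t|
    filter_upwards [eventually_ge_atTop N] with M hM
    have h1 : |t| ≤ (M : ℝ) := hN.trans (by exact_mod_cast hM)
    rw [abs_le] at h1
    unfold tr
    rw [min_eq_right h1.2, max_eq_right h1.1]
  exact Tendsto.congr' (this.mono fun M h => h.symm) tendsto_const_nhds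

lemma tr_sum_le {ι : Type*} [DecidableEq ι] (M : ℕ) (T : Finset ι) (hT : T.card ≤ 2)
    (f : ι → ℝ) : |∑ k ∈ T, tr M (f k)| ≤ |∑ k ∈ T, f k| := by
  rcases (show T.card = 0 ∨ T.card = 1 ∨ T.card = 2 by omega) with h | h | h
  · rw [Finset.card_eq_zero] at h
    simp [h]
  · obtain ⟨i, rfl⟩ := Finset.card_eq_one.mp h
    simpa using tr_abs_le M (f i)
  · obtain ⟨i, j, hij, rfl⟩ := Finset.card_eq_two.mp h
    rw [Finset.sum_pair hij, Finset.sum_pair hij]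
    exact tr_add_le M (f i) (f j)

lemma key (n : ℕ) (μ : Fin n → Measure ℝ)
    (S : Finset (Fin n)) (hS : n - 2 ≤ S.card)
    (hInt : ∀ i ∈ S, Integrable (fun x : ℝ => x) (μ i))
    (C : ℝ) (P : Measure (Fin n → ℝ)) (hP : IsProbabilityMeasure P)
    (hmarg : ∀ i, P.map (fun x => x i) = μ i)
    (hC : P {x | ∑ i, x i = C} = 1) :
    Tendsto (fun M : ℕ => ∑ k ∈ Sᶜ, ∫ t, tr M t ∂(μ k)) atTop
      (nhds (C - ∑ k ∈ S, ∫ t, t ∂(μ k))) := by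
  have hmc : ∀ k, Measurable fun x : Fin n → ℝ => x k := fun k => measurable_pi_apply k
  -- a.e. the sum is C
  have hsetm : MeasurableSet {x : Fin n → ℝ | ∑ i, x i = C} :=
    measurableSet_eq_fun (Finset.measurable_sum _ fun i _ => hmc i) measurable_const
  have hae : ∀ᵐ x ∂P, ∑ i, x i = C := by
    rw [ae_iff]
    have := (prob_compl_eq_zero_iff hsetm).mpr hC
    simpa [Set.compl_setOf] using this
  -- coordinates in S are integrable
  have hck : ∀ k ∈ S, Integrable (fun x : Fin n → ℝ => x k) P := by
    intro k hk
    have h1 := hInt k hk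
    rw [← hmarg k] at h1
    exact (integrable_map_measure measurable_id.aestronglyMeasurable
      (hmc k).aemeasurable).mp h1
  have hg : Integrable (fun x : Fin n → ℝ => ∑ k ∈ S, x k) P :=
    integrable_finset_sum _ hck
  have hgval : ∫ x, ∑ k ∈ S, x k ∂P = ∑ k ∈ S, ∫ t, t ∂(μ k) := by
    rw [integral_finset_sum _ hck]
    refine Finset.sum_congr rfl fun k _ => ?_
    rw [← hmarg k]
    exact (integral_map (hmc k).aemeasurable measurable_id.aestronglyMeasurable).symm
  have hTcard : (Sᶜ : Finset (Fin n)).card ≤ 2 := by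
    have h1 : (Sᶜ : Finset (Fin n)).card = Fintype.card (Fin n) - S.card := Finset.card_compl S
    have h2 : S.card ≤ Fintype.card (Fin n) := Finset.card_le_univ S
    simp only [Fintype.card_fin] at h1 h2
    omega
  -- the complementary sum
  have hsplit : ∀ᵐ x ∂P, (∑ k ∈ Sᶜ, x k) = C - ∑ k ∈ S, x k := by
    filter_upwards [hae] with x hx
    have h3 : (∑ k ∈ S, x k) + (∑ k ∈ Sᶜ, x k) = ∑ k, x k := Finset.sum_add_sum_compl S _
    rw [hx] at h3
    linarith
  have hh : Integrable (fun x : Fin n → ℝ => ∑ k ∈ Sᶜ, x k) P :=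
    ((integrable_const C).sub hg).congr (hsplit.mono fun x hx => hx.symm)
  have hhval : ∫ x, ∑ k ∈ Sᶜ, x k ∂P = C - ∑ k ∈ S, ∫ t, t ∂(μ k) := by
    rw [integral_congr_ae hsplit, integral_sub (integrable_const C) hg, integral_const,
      hgval]
    simp
  -- dominated convergence
  have hdct : Tendsto (fun M : ℕ => ∫ x, ∑ k ∈ Sᶜ, tr M (x k) ∂P) atTop
      (nhds (∫ x, ∑ k ∈ Sᶜ, x k ∂P)) := by
    refine tendsto_integral_of_dominated_convergence (fun x => |∑ k ∈ Sᶜ, x k|)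
      (fun M => ?_) hh.abs (fun M => ?_) ?_
    · exact (Finset.measurable_sum _ fun k _ =>
        ((tr_continuous M).measurable).comp (hmc k)).aestronglyMeasurable
    · exact Eventually.of_forall fun x => by
        simpa [Real.norm_eq_abs] using tr_sum_le M Sᶜ hTcard (fun k => x k)
    · exact Eventually.of_forall fun x =>
        tendsto_finset_sum _ fun k _ => tr_tendsto (x k)
  have heq : ∀ M : ℕ, ∫ x, ∑ k ∈ Sᶜ, tr M (x k) ∂P = ∑ k ∈ Sᶜ, ∫ t, tr M t ∂(μ k) := by
    intro M
    have hint : ∀ k ∈ Sᶜ, Integrable (fun x : Fin n → ℝ => tr M (x k)) P := by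
      intro k _
      refine Integrable.mono' (integrable_const (M : ℝ))
        (((tr_continuous M).measurable.comp (hmc k)).aestronglyMeasurable)
        (Eventually.of_forall fun x => by simpa [Real.norm_eq_abs] using tr_bound M (x k))
    rw [integral_finset_sum _ hint]
    refine Finset.sum_congr rfl fun k _ => ?_
    rw [← hmarg k]
    exact (integral_map (hmc k).aemeasurable (tr_continuous M).measurable.aestronglyMeasurable).symm
  rw [hhval] at hdct
  exact hdct.congr heq

end Aux

theorem stmt4 (n : ℕ) (μ : Fin n → Measure ℝ) (hprob : ∀ i, IsProbabilityMeasure (μ i))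
    (S : Finset (Fin n)) (hS : n - 2 ≤ S.card)
    (hInt : ∀ i ∈ S, Integrable (fun x : ℝ => x) (μ i))
    (C₁ C₂ : ℝ) (h₁ : IsJointMix n μ C₁) (h₂ : IsJointMix n μ C₂) :
    C₁ = C₂ := by
  obtain ⟨P₁, hP₁, hm₁, hc₁⟩ := h₁
  obtain ⟨P₂, hP₂, hm₂, hc₂⟩ := h₂
  have k₁ := key n μ S hS hInt C₁ P₁ hP₁ hm₁ hc₁
  have k₂ := key n μ S hS hInt C₂ P₂ hP₂ hm₂ hc₂
  have h := tendsto_nhds_unique k₁ k₂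
  linarith
end

section
/- Let (μ₁,…,μₙ) be an n-tuple of Borel probability measures on ℝ that is jointly mixable, and suppose that at least n−1 of the measures μ₁,…,μₙ satisfy lim_{x→∞} x·μ({y ∈ ℝ : |y| > x}) = 0. Then the center of (μ₁,…,μₙ) is unique: if (μ₁,…,μₙ) is jointly mixable with center C₁ and with center C₂, then C₁ = C₂. -/
open MeasureTheory Filter

namespace JMU

lemma msAbsLe (c : ℝ) : MeasurableSet {y : ℝ | |y| ≤ c} :=
  measurableSet_le (measurable_abs) measurable_const

lemma msAbsGt (c : ℝ) : MeasurableSet {y : ℝ | c < |y|} :=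
  measurableSet_lt measurable_const (measurable_abs)

lemma integrable_of_bound {α E : Type*} [MeasurableSpace α] [NormedAddCommGroup E]
    (P : Measure α) [IsFiniteMeasure P] {f : α → E} (hm : AEStronglyMeasurable f P)
    (C : ℝ) (h : ∀ x, ‖f x‖ ≤ C) : Integrable f P :=
  (integrable_const C).mono' hm (Filter.Eventually.of_forall h)

noncomputable def trsq (μ : Measure ℝ) (c : ℝ) : ℝ :=
  ∫ y, ({y : ℝ | |y| ≤ c}).indicator (fun y => y ^ 2) y ∂μ

lemma meas_indsq (c : ℝ) : Measurable (({y : ℝ | |y| ≤ c}).indicator (fun y : ℝ => y ^ 2)) :=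
  (measurable_id.pow_const 2).indicator (msAbsLe c)

lemma indsq_nonneg (c : ℝ) (y : ℝ) : 0 ≤ ({y : ℝ | |y| ≤ c}).indicator (fun y : ℝ => y ^ 2) y :=
  Set.indicator_nonneg (fun y _ => sq_nonneg y) y

lemma indsq_le (c : ℝ) (hc : 0 ≤ c) (y : ℝ) :
    ({y : ℝ | |y| ≤ c}).indicator (fun y : ℝ => y ^ 2) y ≤ c ^ 2 := by
  by_cases hy : y ∈ {y : ℝ | |y| ≤ c}
  · rw [Set.indicator_of_mem hy]
    have : |y| ≤ c := hy
    nlinarith [sq_abs y, abs_nonneg y]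
  · rw [Set.indicator_of_notMem hy]; positivity

lemma integrable_indsq (μ : Measure ℝ) [IsFiniteMeasure μ] (c : ℝ) (hc : 0 ≤ c) :
    Integrable (({y : ℝ | |y| ≤ c}).indicator (fun y : ℝ => y ^ 2)) μ := by
  refine integrable_of_bound μ (meas_indsq c).aestronglyMeasurable (c ^ 2) fun y => ?_
  rw [Real.norm_eq_abs, _root_.abs_of_nonneg (indsq_nonneg c y)]
  exact indsq_le c hc y

lemma trsq_nonneg (μ : Measure ℝ) (c : ℝ) : 0 ≤ trsq μ c :=
  integral_nonneg (indsq_nonneg c)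

lemma trsq_mono (μ : Measure ℝ) [IsFiniteMeasure μ] {c c' : ℝ} (hc : 0 ≤ c) (h : c ≤ c') :
    trsq μ c ≤ trsq μ c' := by
  refine integral_mono (integrable_indsq μ c hc) (integrable_indsq μ c' (hc.trans h)) ?_
  refine Set.indicator_le_indicator_of_subset (fun y hy => ?_) (fun y => sq_nonneg y)
  exact le_trans hy h

lemma trsq_le (μ : Measure ℝ) [IsProbabilityMeasure μ] (c : ℝ) (hc : 0 ≤ c) :
    trsq μ c ≤ c ^ 2 := by
  have := integral_mono (integrable_indsq μ c hc) (integrable_const (c ^ 2))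
    (fun y => indsq_le c hc y)
  simpa [trsq] using this

lemma trsq_step (μ : Measure ℝ) [IsProbabilityMeasure μ] {s : ℝ} (hs : 0 < s) :
    trsq μ (2 * s) ≤ trsq μ s + 4 * s ^ 2 * (μ {y : ℝ | s < |y|}).toReal := by
  have hpt : ∀ y : ℝ, ({y : ℝ | |y| ≤ 2 * s}).indicator (fun y : ℝ => y ^ 2) y ≤
      ({y : ℝ | |y| ≤ s}).indicator (fun y : ℝ => y ^ 2) y +
      ({y : ℝ | s < |y|}).indicator (fun _ : ℝ => 4 * s ^ 2) y := by
    intro y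
    by_cases h1 : |y| ≤ s
    · have h2 : y ∈ {y : ℝ | |y| ≤ 2 * s} := by
        simp only [Set.mem_setOf_eq]; linarith
      have h3 : y ∉ {y : ℝ | s < |y|} := by
        simp only [Set.mem_setOf_eq]; exact not_lt.2 h1
      rw [Set.indicator_of_mem h2, Set.indicator_of_mem (show y ∈ {y : ℝ | |y| ≤ s} from h1),
        Set.indicator_of_notMem h3, add_zero]
    · push_neg at h1
      have h1' : y ∉ {y : ℝ | |y| ≤ s} := by
        simp only [Set.mem_setOf_eq]; exact not_le.2 h1
      have h3 : y ∈ {y : ℝ | s < |y|} := h1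
      rw [Set.indicator_of_notMem h1', Set.indicator_of_mem h3, zero_add]
      by_cases h2 : y ∈ {y : ℝ | |y| ≤ 2 * s}
      · rw [Set.indicator_of_mem h2]
        have h2' : |y| ≤ 2 * s := h2
        nlinarith [sq_abs y, abs_nonneg y]
      · rw [Set.indicator_of_notMem h2]; positivity
  have hint2 : Integrable (({y : ℝ | s < |y|}).indicator (fun _ : ℝ => 4 * s ^ 2)) μ := by
    refine integrable_of_bound μ
      (measurable_const.indicator (msAbsGt s)).aestronglyMeasurable (4 * s ^ 2) fun y => ?_
    by_cases hy : y ∈ {y : ℝ | s < |y|}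
    · rw [Set.indicator_of_mem hy, Real.norm_eq_abs, _root_.abs_of_nonneg (by positivity)]
    · rw [Set.indicator_of_notMem hy]; simp; positivity
  have hmono := integral_mono (integrable_indsq μ (2 * s) (by positivity))
    ((integrable_indsq μ s hs.le).add hint2) hpt
  simp only [Pi.add_apply] at hmono
  rw [integral_add (integrable_indsq μ s hs.le) hint2,
    integral_indicator_const _ (msAbsGt s)] at hmono
  calc trsq μ (2 * s) ≤ trsq μ s + (μ {y : ℝ | s < |y|}).toReal • (4 * s ^ 2) := hmono
    _ = trsq μ s + 4 * s ^ 2 * (μ {y : ℝ | s < |y|}).toReal := by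
        rw [smul_eq_mul]; ring

end JMU

namespace JMU

lemma trsq_dyadic (μ : Measure ℝ) [IsProbabilityMeasure μ] {s₀ ε : ℝ} (hs₀ : 1 ≤ s₀)
    (hε : ∀ s, s₀ ≤ s → s * (μ {y : ℝ | s < |y|}).toReal ≤ ε) :
    ∀ N : ℕ, trsq μ (s₀ * 2 ^ N) ≤ s₀ ^ 2 + 4 * ε * (s₀ * 2 ^ N) := by
  have hs₀0 : 0 < s₀ := lt_of_lt_of_le one_pos hs₀
  have hε0 : 0 ≤ ε := le_trans (by positivity) (hε s₀ le_rfl)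
  intro N
  induction N with
  | zero =>
    simp only [pow_zero, mul_one]
    have := trsq_le μ s₀ hs₀0.le
    nlinarith
  | succ N ih =>
    have hsN : 0 < s₀ * 2 ^ N := by positivity
    have hsN0 : s₀ ≤ s₀ * 2 ^ N := by
      have h2N : (1:ℝ) ≤ 2 ^ N := one_le_pow₀ (by norm_num)
      nlinarith
    have hstep := trsq_step μ hsN
    have htail := hε (s₀ * 2 ^ N) hsN0
    have h2 : (2 : ℝ) * (s₀ * 2 ^ N) = s₀ * 2 ^ (N + 1) := by ring
    rw [h2] at hstep
    have htt : 4 * (s₀ * 2 ^ N) ^ 2 * (μ {y : ℝ | s₀ * 2 ^ N < |y|}).toReal ≤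
        4 * ε * (s₀ * 2 ^ N) := by
      have hnn : 0 ≤ (μ {y : ℝ | s₀ * 2 ^ N < |y|}).toReal := ENNReal.toReal_nonneg
      nlinarith
    calc trsq μ (s₀ * 2 ^ (N + 1)) ≤
        trsq μ (s₀ * 2 ^ N) + 4 * (s₀ * 2 ^ N) ^ 2 * (μ {y : ℝ | s₀ * 2 ^ N < |y|}).toReal :=
          hstep
      _ ≤ s₀ ^ 2 + 4 * ε * (s₀ * 2 ^ N) + 4 * ε * (s₀ * 2 ^ N) := by linarith
      _ ≤ s₀ ^ 2 + 4 * ε * (s₀ * 2 ^ (N + 1)) := by nlinarith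

lemma exists_pow_between {s₀ c : ℝ} (hs₀ : 0 < s₀) (hc : s₀ ≤ c) :
    ∃ N : ℕ, c ≤ s₀ * 2 ^ N ∧ s₀ * 2 ^ N ≤ 2 * c := by
  have hex : ∃ n : ℕ, c ≤ s₀ * 2 ^ n := by
    obtain ⟨n, hn⟩ := pow_unbounded_of_one_lt (c / s₀) (show (1:ℝ) < 2 by norm_num)
    exact ⟨n, by rw [div_lt_iff₀ hs₀] at hn; nlinarith⟩
  classical
  let N := Nat.find hex
  have hN : c ≤ s₀ * 2 ^ N := Nat.find_spec hex
  refine ⟨N, hN, ?_⟩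
  rcases Nat.eq_zero_or_pos N with h0 | hpos
  · rw [h0]; simp; linarith
  · obtain ⟨M, hM⟩ := Nat.exists_eq_succ_of_ne_zero (Nat.pos_iff_ne_zero.1 hpos)
    have hmin : ¬ c ≤ s₀ * 2 ^ M := Nat.find_min hex (by omega)
    push_neg at hmin
    have : s₀ * 2 ^ N = 2 * (s₀ * 2 ^ M) := by rw [hM, pow_succ]; ring
    linarith

lemma trsq_div_tendsto (μ : Measure ℝ) [IsProbabilityMeasure μ]
    (hT : Tendsto (fun x : ℝ => x * ((μ) {y : ℝ | x < |y|}).toReal) atTop (nhds 0)) :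
    Tendsto (fun c : ℝ => trsq μ c / c) atTop (nhds 0) := by
  rw [Metric.tendsto_atTop]
  intro ε hε
  have h16 : (0:ℝ) < ε / 16 := by positivity
  obtain ⟨s₁, hs₁⟩ := (Metric.tendsto_atTop.1 hT) (ε / 16) h16
  set s₀ : ℝ := max s₁ 1 with hs₀def
  have hs₀1 : 1 ≤ s₀ := le_max_right _ _
  have hs₀0 : 0 < s₀ := lt_of_lt_of_le one_pos hs₀1
  have htail : ∀ s, s₀ ≤ s → s * (μ {y : ℝ | s < |y|}).toReal ≤ ε / 16 := by
    intro s hs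
    have := hs₁ s (le_trans (le_max_left _ _) hs)
    rw [Real.dist_eq, sub_zero] at this
    calc s * (μ {y : ℝ | s < |y|}).toReal ≤ |s * (μ {y : ℝ | s < |y|}).toReal| := le_abs_self _
      _ ≤ ε / 16 := this.le
  refine ⟨max s₀ (4 * s₀ ^ 2 / ε), fun c hc => ?_⟩
  have hcs₀ : s₀ ≤ c := le_trans (le_max_left _ _) hc
  have hc0 : 0 < c := lt_of_lt_of_le hs₀0 hcs₀
  obtain ⟨N, hN1, hN2⟩ := exists_pow_between hs₀0 hcs₀
  have hb := trsq_dyadic μ hs₀1 htail N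
  have hmono := trsq_mono μ hc0.le hN1
  have h1 : trsq μ c ≤ s₀ ^ 2 + 4 * (ε / 16) * (2 * c) := by
    calc trsq μ c ≤ trsq μ (s₀ * 2 ^ N) := hmono
      _ ≤ s₀ ^ 2 + 4 * (ε / 16) * (s₀ * 2 ^ N) := hb
      _ ≤ s₀ ^ 2 + 4 * (ε / 16) * (2 * c) := by nlinarith
  have h2 : trsq μ c / c ≤ s₀ ^ 2 / c + ε / 2 := by
    rw [div_le_iff₀ hc0]
    have hdc : s₀ ^ 2 / c * c = s₀ ^ 2 := div_mul_cancel₀ _ (ne_of_gt hc0)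
    nlinarith
  have h3 : s₀ ^ 2 / c ≤ ε / 4 := by
    have hc4 : 4 * s₀ ^ 2 / ε ≤ c := le_trans (le_max_right _ _) hc
    rw [div_le_iff₀ hc0]
    rw [div_le_iff₀ hε] at hc4
    nlinarith
  rw [Real.dist_eq, sub_zero,
    _root_.abs_of_nonneg (div_nonneg (trsq_nonneg μ c) hc0.le)]
  linarith

end JMU

namespace JMU

lemma exp_bound (r : ℝ) : ‖Complex.exp (↑r * Complex.I) - 1 - ↑r * Complex.I‖ ≤ 3 * r ^ 2 := by
  by_cases hr : |r| ≤ 1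
  · have h := Complex.norm_exp_sub_one_sub_id_le (x := ↑r * Complex.I) (by
      rw [norm_mul, Complex.norm_I, Complex.norm_real, Real.norm_eq_abs, mul_one]; exact hr)
    calc ‖Complex.exp (↑r * Complex.I) - 1 - ↑r * Complex.I‖ ≤
        ‖(↑r * Complex.I : ℂ)‖ ^ 2 := h
      _ = r ^ 2 := by rw [norm_mul, Complex.norm_I, Complex.norm_real, Real.norm_eq_abs, mul_one, sq_abs]
      _ ≤ 3 * r ^ 2 := by nlinarith
  · push_neg at hr
    have h1 : ‖Complex.exp (↑r * Complex.I)‖ = 1 := by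
      rw [Complex.norm_exp_ofReal_mul_I]
    have h2 : ‖(↑r * Complex.I : ℂ)‖ = |r| := by
      rw [norm_mul, Complex.norm_I, Complex.norm_real, Real.norm_eq_abs, mul_one]
    have hr2 : 1 < r ^ 2 := by nlinarith [sq_abs r]
    have habs : |r| ≤ r ^ 2 := by nlinarith [sq_abs r, abs_nonneg r]
    calc ‖Complex.exp (↑r * Complex.I) - 1 - ↑r * Complex.I‖ ≤
        ‖Complex.exp (↑r * Complex.I) - 1‖ + ‖(↑r * Complex.I : ℂ)‖ := norm_sub_le _ _
      _ ≤ ‖Complex.exp (↑r * Complex.I)‖ + ‖(1:ℂ)‖ + |r| := by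
          rw [h2]; gcongr; exact norm_sub_le _ _
      _ = 2 + |r| := by rw [h1, norm_one]; norm_num
      _ ≤ 3 * r ^ 2 := by nlinarith

lemma meas_trunc (c : ℝ) : Measurable (({y : ℝ | |y| ≤ c}).indicator (fun y : ℝ => y)) :=
  measurable_id.indicator (msAbsLe c)

lemma trunc_abs_le (c : ℝ) (hc : 0 ≤ c) (y : ℝ) :
    |({y : ℝ | |y| ≤ c}).indicator (fun y : ℝ => y) y| ≤ c := by
  by_cases hy : y ∈ {y : ℝ | |y| ≤ c}
  · rw [Set.indicator_of_mem hy]; exact hy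
  · rw [Set.indicator_of_notMem hy]; simpa using hc

end JMU

namespace JMU

set_option maxHeartbeats 1000000 in
open Complex in
lemma approx {n : ℕ} (P : Measure (Fin n → ℝ)) [IsProbabilityMeasure P]
    (ν : Fin n → Measure ℝ) (hprob : ∀ i, IsProbabilityMeasure (ν i))
    (hm : ∀ i, P.map (fun x => x i) = ν i) (E : Finset (Fin n)) {c : ℝ} (hc : 0 < c) :
    ‖(∫ x : Fin n → ℝ, Complex.exp (↑(-(c⁻¹ * ∑ i ∈ E, x i)) * Complex.I) ∂P) -
        (1 - ↑(c⁻¹ * ∑ i ∈ E, ∫ y, ({y : ℝ | |y| ≤ c}).indicator (fun y => y) y ∂(ν i)) *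
          Complex.I)‖ ≤
      3 * (c⁻¹) ^ 2 * E.card * (∑ i ∈ E, trsq (ν i) c) +
        (E.card + 2) * ∑ i ∈ E, ((ν i) {y : ℝ | c < |y|}).toReal := by
  have ht : (0:ℝ) < c⁻¹ := inv_pos.2 hc
  set t : ℝ := c⁻¹ with htdef
  set tr : ℝ → ℝ := ({y : ℝ | |y| ≤ c}).indicator (fun y : ℝ => y) with htrdef
  set isq : ℝ → ℝ := ({y : ℝ | |y| ≤ c}).indicator (fun y : ℝ => y ^ 2) with hisqdef
  set A : Set (Fin n → ℝ) := {x : Fin n → ℝ | ∀ i ∈ E, |x i| ≤ c} with hAdef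
  have hproj : ∀ i : Fin n, Measurable fun x : Fin n → ℝ => x i := measurable_pi_apply
  have hA : MeasurableSet A := by
    have : A = ⋂ i ∈ E, (fun x : Fin n → ℝ => x i) ⁻¹' {y : ℝ | |y| ≤ c} := by
      ext x
      simp only [hAdef, Set.mem_setOf_eq, Set.mem_iInter, Set.mem_preimage]
    rw [this]
    exact MeasurableSet.biInter E.countable_toSet fun i _ => (hproj i) (msAbsLe c)
  have hmeasT : Measurable fun x : Fin n → ℝ => ∑ i ∈ E, x i :=
    Finset.measurable_sum E fun i _ => hproj i
  have hmf1 : Measurable fun x : Fin n → ℝ => Complex.exp (↑(-(t * ∑ i ∈ E, x i)) * Complex.I) :=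
    Complex.measurable_exp.comp
      ((Complex.measurable_ofReal.comp (hmeasT.const_mul t).neg).mul_const Complex.I)
  have hint1 : Integrable (fun x : Fin n → ℝ =>
      Complex.exp (↑(-(t * ∑ i ∈ E, x i)) * Complex.I)) P := by
    refine integrable_of_bound P hmf1.aestronglyMeasurable 1 fun x => ?_
    rw [Complex.norm_exp_ofReal_mul_I]
  have hinttr : ∀ i : Fin n, Integrable (fun x : Fin n → ℝ => tr (x i)) P := by
    intro i
    refine integrable_of_bound P ((meas_trunc c).comp (hproj i)).aestronglyMeasurable c
      fun x => ?_
    rw [Real.norm_eq_abs]; exact trunc_abs_le c hc.le _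
  have hisqint : ∀ i : Fin n, Integrable (fun x : Fin n → ℝ => isq (x i)) P := by
    intro i
    refine integrable_of_bound P ((meas_indsq c).comp (hproj i)).aestronglyMeasurable (c ^ 2)
      fun x => ?_
    rw [Real.norm_eq_abs, _root_.abs_of_nonneg (indsq_nonneg c _)]
    exact indsq_le c hc.le _
  have hmtr : Measurable fun x : Fin n → ℝ => ∑ i ∈ E, tr (x i) :=
    Finset.measurable_sum E fun i _ => (meas_trunc c).comp (hproj i)
  have hsumtr_abs : ∀ x : Fin n → ℝ, |∑ i ∈ E, tr (x i)| ≤ E.card * c := by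
    intro x
    calc |∑ i ∈ E, tr (x i)| ≤ ∑ i ∈ E, |tr (x i)| := Finset.abs_sum_le_sum_abs _ _
      _ ≤ ∑ _i ∈ E, c := Finset.sum_le_sum fun i _ => trunc_abs_le c hc.le _
      _ = E.card * c := by rw [Finset.sum_const, nsmul_eq_mul]
  have hint3 : Integrable (fun x : Fin n → ℝ =>
      (↑(t * ∑ i ∈ E, tr (x i)) * Complex.I : ℂ)) P := by
    refine integrable_of_bound P
      ((Complex.measurable_ofReal.comp (hmtr.const_mul t)).mul_const Complex.I).aestronglyMeasurable
      (t * (E.card * c)) fun x => ?_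
    rw [norm_mul, Complex.norm_I, mul_one,
      Complex.norm_real, Real.norm_eq_abs, abs_mul, _root_.abs_of_nonneg ht.le]
    exact mul_le_mul_of_nonneg_left (hsumtr_abs x) ht.le
  set g : (Fin n → ℝ) → ℂ := fun x =>
    Complex.exp (↑(-(t * ∑ i ∈ E, x i)) * Complex.I) - 1 +
      ↑(t * ∑ i ∈ E, tr (x i)) * Complex.I with hgdef
  have hintsub : Integrable (fun x : Fin n → ℝ =>
      Complex.exp (↑(-(t * ∑ i ∈ E, x i)) * Complex.I) - 1) P :=
    hint1.sub (integrable_const 1)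
  have hgint : Integrable g P := hintsub.add hint3
  have hmargtr : ∀ i : Fin n, ∫ x : Fin n → ℝ, tr (x i) ∂P = ∫ y, tr y ∂(ν i) := by
    intro i
    rw [← hm i, integral_map (hproj i).aemeasurable (meas_trunc c).aestronglyMeasurable]
  have hmargsq : ∀ i : Fin n, ∫ x : Fin n → ℝ, isq (x i) ∂P = trsq (ν i) c := by
    intro i
    rw [trsq, ← hm i, integral_map (hproj i).aemeasurable (meas_indsq c).aestronglyMeasurable]
  have hIg : ∫ x, g x ∂P =
      (∫ x : Fin n → ℝ, Complex.exp (↑(-(t * ∑ i ∈ E, x i)) * Complex.I) ∂P) - 1 +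
        ↑(t * ∑ i ∈ E, ∫ y, tr y ∂(ν i)) * Complex.I := by
    simp only [hgdef]
    rw [integral_add hintsub hint3, integral_sub hint1 (integrable_const 1)]
    congr 1
    · simp
    · rw [integral_mul_const]
      have hcast : (∫ x : Fin n → ℝ, (↑(t * ∑ i ∈ E, tr (x i)) : ℂ) ∂P)
          = ((∫ x : Fin n → ℝ, (t * ∑ i ∈ E, tr (x i)) ∂P : ℝ) : ℂ) := integral_ofReal
      rw [hcast, integral_const_mul, integral_finset_sum E fun i _ => hinttr i]
      norm_cast
      rw [Finset.sum_congr rfl fun i _ => hmargtr i]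
  have hgoal_eq : (∫ x : Fin n → ℝ, Complex.exp (↑(-(t * ∑ i ∈ E, x i)) * Complex.I) ∂P) -
      (1 - ↑(t * ∑ i ∈ E, ∫ y, tr y ∂(ν i)) * Complex.I) = ∫ x, g x ∂P := by
    rw [hIg]; ring
  -- pointwise bound
  have hpt : ∀ x : Fin n → ℝ, ‖g x‖ ≤
      3 * t ^ 2 * E.card * (∑ i ∈ E, isq (x i)) +
        (Aᶜ).indicator (fun _ => (E.card + 2 : ℝ)) x := by
    intro x
    by_cases hx : x ∈ A
    · have htr : ∀ i ∈ E, tr (x i) = x i := fun i hi =>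
        Set.indicator_of_mem (show x i ∈ {y : ℝ | |y| ≤ c} from hx i hi) (fun y : ℝ => y)
      have hsum : ∑ i ∈ E, tr (x i) = ∑ i ∈ E, x i := Finset.sum_congr rfl htr
      have hgx : g x = Complex.exp (↑(-(t * ∑ i ∈ E, x i)) * Complex.I) - 1 -
          ↑(-(t * ∑ i ∈ E, x i)) * Complex.I := by
        rw [hgdef]
        simp only [hsum]
        push_cast
        ring
      have hb := exp_bound (-(t * ∑ i ∈ E, x i))
      rw [hgx]
      have hcs : (∑ i ∈ E, x i) ^ 2 ≤ E.card * ∑ i ∈ E, (x i) ^ 2 := by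
        exact_mod_cast sq_sum_le_card_mul_sum_sq (s := E) (f := fun i => x i)
      have hx2 : ∀ i ∈ E, (x i) ^ 2 = isq (x i) := fun i hi =>
        (Set.indicator_of_mem (show x i ∈ {y : ℝ | |y| ≤ c} from hx i hi)
          (fun y : ℝ => y ^ 2)).symm
      have hind0 : (Aᶜ).indicator (fun _ => (E.card + 2 : ℝ)) x = 0 :=
        Set.indicator_of_notMem (Set.notMem_compl_iff.2 hx) _
      rw [hind0, add_zero]
      calc ‖Complex.exp (↑(-(t * ∑ i ∈ E, x i)) * Complex.I) - 1 -
          ↑(-(t * ∑ i ∈ E, x i)) * Complex.I‖ ≤ 3 * (-(t * ∑ i ∈ E, x i)) ^ 2 := hb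
        _ = 3 * t ^ 2 * (∑ i ∈ E, x i) ^ 2 := by ring
        _ ≤ 3 * t ^ 2 * (E.card * ∑ i ∈ E, (x i) ^ 2) := by nlinarith [sq_nonneg t]
        _ = 3 * t ^ 2 * E.card * (∑ i ∈ E, isq (x i)) := by
            rw [Finset.sum_congr rfl hx2]; ring
    · have hind : (Aᶜ).indicator (fun _ => (E.card + 2 : ℝ)) x = E.card + 2 :=
        Set.indicator_of_mem (by simpa using hx) _
      have h1 : ‖g x‖ ≤ 1 + 1 + t * (E.card * c) := by
        rw [hgdef]
        calc ‖Complex.exp (↑(-(t * ∑ i ∈ E, x i)) * Complex.I) - 1 +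
            ↑(t * ∑ i ∈ E, tr (x i)) * Complex.I‖ ≤
            ‖Complex.exp (↑(-(t * ∑ i ∈ E, x i)) * Complex.I) - 1‖ +
              ‖(↑(t * ∑ i ∈ E, tr (x i)) * Complex.I : ℂ)‖ := norm_add_le _ _
          _ ≤ (‖Complex.exp (↑(-(t * ∑ i ∈ E, x i)) * Complex.I)‖ + ‖(1:ℂ)‖) +
              t * (E.card * c) := by
              gcongr
              · exact norm_sub_le _ _
              · rw [norm_mul, Complex.norm_I, mul_one,
                  Complex.norm_real, Real.norm_eq_abs, abs_mul,
                  _root_.abs_of_nonneg ht.le]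
                exact mul_le_mul_of_nonneg_left (hsumtr_abs x) ht.le
          _ = 1 + 1 + t * (E.card * c) := by
              rw [Complex.norm_exp_ofReal_mul_I, norm_one]
      have htc : t * c = 1 := inv_mul_cancel₀ (ne_of_gt hc)
      have h2 : (1:ℝ) + 1 + t * (E.card * c) = E.card + 2 := by
        have : t * (E.card * c) = E.card * (t * c) := by ring
        rw [this, htc]; ring
      have hnn : 0 ≤ 3 * t ^ 2 * E.card * (∑ i ∈ E, isq (x i)) := by
        have : (0:ℝ) ≤ ∑ i ∈ E, isq (x i) :=
          Finset.sum_nonneg fun i _ => indsq_nonneg c _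
        positivity
      rw [hind]
      linarith [h1, h2.le]
  -- integrate the bound
  have hinth1 : Integrable (fun x : Fin n → ℝ =>
      3 * t ^ 2 * E.card * (∑ i ∈ E, isq (x i))) P :=
    (integrable_finset_sum E fun i _ => hisqint i).const_mul _
  have hinth2 : Integrable ((Aᶜ).indicator (fun _ => (E.card + 2 : ℝ))) P := by
    refine integrable_of_bound P
      (measurable_const.indicator hA.compl).aestronglyMeasurable (E.card + 2) fun x => ?_
    by_cases hx : x ∈ Aᶜ
    · rw [Set.indicator_of_mem hx, Real.norm_eq_abs, _root_.abs_of_nonneg (by positivity)]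
    · simp only [Set.indicator_of_notMem hx, norm_zero]; positivity
  have hnormint : ‖∫ x, g x ∂P‖ ≤
      ∫ x, (3 * t ^ 2 * E.card * (∑ i ∈ E, isq (x i)) +
        (Aᶜ).indicator (fun _ => (E.card + 2 : ℝ)) x) ∂P := by
    calc ‖∫ x, g x ∂P‖ ≤ ∫ x, ‖g x‖ ∂P := norm_integral_le_integral_norm g
      _ ≤ _ := integral_mono hgint.norm (hinth1.add hinth2) hpt
  have hIh1 : ∫ x : Fin n → ℝ, 3 * t ^ 2 * E.card * (∑ i ∈ E, isq (x i)) ∂P =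
      3 * t ^ 2 * E.card * (∑ i ∈ E, trsq (ν i) c) := by
    rw [integral_const_mul, integral_finset_sum E fun i _ => hisqint i,
      Finset.sum_congr rfl fun i _ => hmargsq i]
  have hIh2 : ∫ x : Fin n → ℝ, (Aᶜ).indicator (fun _ => (E.card + 2 : ℝ)) x ∂P =
      (P Aᶜ).toReal * (E.card + 2) := by
    rw [integral_indicator_const _ hA.compl, smul_eq_mul, Measure.real]
  -- tail bound for P Aᶜ
  have hPAc : (P Aᶜ).toReal ≤ ∑ i ∈ E, ((ν i) {y : ℝ | c < |y|}).toReal := by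
    have hsub : Aᶜ ⊆ ⋃ i ∈ E, (fun x : Fin n → ℝ => x i) ⁻¹' {y : ℝ | c < |y|} := by
      intro x hx
      simp only [hAdef, Set.mem_compl_iff, Set.mem_setOf_eq, not_forall] at hx
      obtain ⟨i, hi, hxi⟩ := hx
      exact Set.mem_biUnion hi (by simpa using not_le.1 hxi)
    have hle : P Aᶜ ≤ ∑ i ∈ E, (ν i) {y : ℝ | c < |y|} := by
      calc P Aᶜ ≤ P (⋃ i ∈ E, (fun x : Fin n → ℝ => x i) ⁻¹' {y : ℝ | c < |y|}) :=
            measure_mono hsub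
        _ ≤ ∑ i ∈ E, P ((fun x : Fin n → ℝ => x i) ⁻¹' {y : ℝ | c < |y|}) :=
            measure_biUnion_finset_le E _
        _ = ∑ i ∈ E, (ν i) {y : ℝ | c < |y|} := by
            refine Finset.sum_congr rfl fun i _ => ?_
            rw [← hm i, Measure.map_apply (hproj i) (msAbsGt c)]
    have hfin : ∀ i ∈ E, (ν i) {y : ℝ | c < |y|} ≠ ⊤ := fun i _ => by
      haveI := hprob i
      exact measure_ne_top _ _
    have hne : (∑ i ∈ E, (ν i) {y : ℝ | c < |y|}) ≠ ⊤ :=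
      (ENNReal.sum_lt_top.2 fun i hi => lt_top_iff_ne_top.2 (hfin i hi)).ne
    calc (P Aᶜ).toReal ≤ (∑ i ∈ E, (ν i) {y : ℝ | c < |y|}).toReal :=
          ENNReal.toReal_mono hne hle
      _ = ∑ i ∈ E, ((ν i) {y : ℝ | c < |y|}).toReal := ENNReal.toReal_sum hfin
  -- combine
  have htail_nonneg : (0:ℝ) ≤ E.card + 2 := by positivity
  rw [hgoal_eq]
  calc ‖∫ x, g x ∂P‖ ≤ ∫ x, (3 * t ^ 2 * E.card * (∑ i ∈ E, isq (x i)) +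
        (Aᶜ).indicator (fun _ => (E.card + 2 : ℝ)) x) ∂P := hnormint
    _ = 3 * t ^ 2 * E.card * (∑ i ∈ E, trsq (ν i) c) + (P Aᶜ).toReal * (E.card + 2) := by
        rw [integral_add hinth1 hinth2, hIh1, hIh2]
    _ ≤ 3 * t ^ 2 * E.card * (∑ i ∈ E, trsq (ν i) c) +
        (∑ i ∈ E, ((ν i) {y : ℝ | c < |y|}).toReal) * (E.card + 2) := by
        exact add_le_add (le_refl _) (mul_le_mul_of_nonneg_right hPAc htail_nonneg)
    _ = 3 * t ^ 2 * E.card * (∑ i ∈ E, trsq (ν i) c) +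
        (E.card + 2) * ∑ i ∈ E, ((ν i) {y : ℝ | c < |y|}).toReal := by ring

end JMU

namespace JMU

open Complex in
lemma ident {n : ℕ} (P : Measure (Fin n → ℝ)) [IsProbabilityMeasure P]
    (ν : Fin n → Measure ℝ) (hm : ∀ i, P.map (fun x => x i) = ν i)
    (C : ℝ) (hC : P {x : Fin n → ℝ | ∑ i, x i = C} = 1) (i₀ : Fin n) (t : ℝ) :
    ∫ y, Complex.exp (↑(t * y) * Complex.I) ∂(ν i₀) =
      Complex.exp (↑(t * C) * Complex.I) *
        ∫ x : Fin n → ℝ,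
          Complex.exp (↑(-(t * ∑ i ∈ Finset.univ.erase i₀, x i)) * Complex.I) ∂P := by
  have hms : MeasurableSet {x : Fin n → ℝ | ∑ i, x i = C} :=
    measurableSet_eq_fun (Finset.measurable_sum _ fun i _ => measurable_pi_apply i)
      measurable_const
  have hae : ∀ᵐ x ∂P, ∑ i, x i = C := by
    rw [ae_iff]
    exact (prob_compl_eq_zero_iff hms).2 hC
  have hmchar : Measurable fun y : ℝ => Complex.exp (↑(t * y) * Complex.I) :=
    Complex.measurable_exp.comp
      ((Complex.measurable_ofReal.comp (measurable_id.const_mul t)).mul_const Complex.I)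
  have h1 : ∫ y, Complex.exp (↑(t * y) * Complex.I) ∂(ν i₀) =
      ∫ x : Fin n → ℝ, Complex.exp (↑(t * x i₀) * Complex.I) ∂P := by
    rw [← hm i₀, integral_map (measurable_pi_apply i₀).aemeasurable
      hmchar.aestronglyMeasurable]
  have h2 : ∫ x : Fin n → ℝ, Complex.exp (↑(t * x i₀) * Complex.I) ∂P =
      ∫ x : Fin n → ℝ, Complex.exp (↑(t * C) * Complex.I) *
        Complex.exp (↑(-(t * ∑ i ∈ Finset.univ.erase i₀, x i)) * Complex.I) ∂P := by
    refine integral_congr_ae ?_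
    filter_upwards [hae] with x hx
    have hsplit : x i₀ + ∑ i ∈ Finset.univ.erase i₀, x i = C := by
      rw [Finset.add_sum_erase Finset.univ (fun i => x i) (Finset.mem_univ i₀)]
      exact hx
    have hx0 : x i₀ = C - ∑ i ∈ Finset.univ.erase i₀, x i := by linarith
    rw [hx0, ← Complex.exp_add]
    congr 1
    push_cast
    ring
  rw [h1, h2, integral_const_mul]

end JMU

open MeasureTheory ENNReal

open JMU Filter in
set_option maxHeartbeats 1000000 in
theorem stmt5 (n : ℕ) (μ : Fin n → Measure ℝ) (hprob : ∀ i, IsProbabilityMeasure (μ i))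
    (S : Finset (Fin n)) (hS : n - 1 ≤ S.card)
    (hTail : ∀ i ∈ S,
      Filter.Tendsto (fun x : ℝ => x * ((μ i) {y : ℝ | x < |y|}).toReal)
        Filter.atTop (nhds 0))
    (C₁ C₂ : ℝ) (h₁ : IsJointMix n μ C₁) (h₂ : IsJointMix n μ C₂) :
    C₁ = C₂ := by
  classical
  obtain ⟨P₁, hP₁i, hm₁, hs₁⟩ := h₁
  obtain ⟨P₂, hP₂i, hm₂, hs₂⟩ := h₂
  haveI := hP₁i; haveI := hP₂i
  rcases Nat.eq_zero_or_pos n with hn0 | hn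
  · -- degenerate case n = 0
    subst hn0
    have hzero : ∀ C : ℝ, (P₁ : Measure (Fin 0 → ℝ)) {x : Fin 0 → ℝ | ∑ i, x i = C} = 1 →
        C = 0 := by
      intro C hC
      by_contra hC0
      have he : {x : Fin 0 → ℝ | ∑ i, x i = C} = ∅ := by
        ext x
        simp only [Set.mem_setOf_eq, Set.mem_empty_iff_false, iff_false]
        intro h
        apply hC0
        rw [← h]
        simp
      rw [he, measure_empty] at hC
      exact zero_ne_one hC
    have hz2 : ∀ C : ℝ, (P₂ : Measure (Fin 0 → ℝ)) {x : Fin 0 → ℝ | ∑ i, x i = C} = 1 →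
        C = 0 := by
      intro C hC
      by_contra hC0
      have he : {x : Fin 0 → ℝ | ∑ i, x i = C} = ∅ := by
        ext x
        simp only [Set.mem_setOf_eq, Set.mem_empty_iff_false, iff_false]
        intro h
        apply hC0
        rw [← h]
        simp
      rw [he, measure_empty] at hC
      exact zero_ne_one hC
    rw [hzero C₁ hs₁, hz2 C₂ hs₂]
  · -- main case
    obtain ⟨i₀, hi₀⟩ : ∃ i₀ : Fin n, ∀ i, i ≠ i₀ → i ∈ S := by
      rcases (Sᶜ : Finset (Fin n)).eq_empty_or_nonempty with he | ⟨j, hj⟩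
      · refine ⟨⟨0, hn⟩, fun i _ => ?_⟩
        by_contra hiS
        have : i ∈ (Sᶜ : Finset (Fin n)) := Finset.mem_compl.2 hiS
        rw [he] at this
        exact absurd this (Finset.notMem_empty i)
      · refine ⟨j, fun i hij => ?_⟩
        by_contra hiS
        have hi : i ∈ (Sᶜ : Finset (Fin n)) := Finset.mem_compl.2 hiS
        have h2 : 1 < (Sᶜ : Finset (Fin n)).card := Finset.one_lt_card.2 ⟨i, hi, j, hj, hij⟩
        have h3 : (Sᶜ : Finset (Fin n)).card = n - S.card := by
          rw [Finset.card_compl]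
          simp
        have h4 : S.card ≤ n := by simpa using S.card_le_univ
        omega
    set E : Finset (Fin n) := Finset.univ.erase i₀ with hEdef
    have hES : ∀ i ∈ E, i ∈ S := fun i hi => hi₀ i (Finset.ne_of_mem_erase hi)
    -- the error bound function
    set B : ℝ → ℝ := fun c => 3 * (c⁻¹) ^ 2 * E.card * (∑ i ∈ E, trsq (μ i) c) +
        (E.card + 2) * ∑ i ∈ E, ((μ i) {y : ℝ | c < |y|}).toReal with hBdef
    have hBnn : ∀ c : ℝ, 0 ≤ B c := by
      intro c
      have h1 : (0:ℝ) ≤ ∑ i ∈ E, trsq (μ i) c :=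
        Finset.sum_nonneg fun i _ => trsq_nonneg (μ i) c
      have h2 : (0:ℝ) ≤ ∑ i ∈ E, ((μ i) {y : ℝ | c < |y|}).toReal :=
        Finset.sum_nonneg fun i _ => ENNReal.toReal_nonneg
      have h3 : (0:ℝ) ≤ (E.card : ℝ) + 2 := by positivity
      have h4 : (0:ℝ) ≤ 3 * (c⁻¹) ^ 2 * E.card := by positivity
      simp only [hBdef]
      exact add_nonneg (mul_nonneg h4 h1) (mul_nonneg h3 h2)
    -- c * B c → 0
    have hcB : Tendsto (fun c : ℝ => c * B c) atTop (nhds 0) := by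
      have hA1 : Tendsto (fun c : ℝ => ∑ i ∈ E, trsq (μ i) c / c) atTop (nhds 0) := by
        have := tendsto_finset_sum E (fun i hi =>
          haveI := hprob i
          trsq_div_tendsto (μ i) (hTail i (hES i hi)))
        simpa using this
      have hA2 : Tendsto (fun c : ℝ => ∑ i ∈ E, c * ((μ i) {y : ℝ | c < |y|}).toReal)
          atTop (nhds 0) := by
        have := tendsto_finset_sum E (fun i hi => hTail i (hES i hi))
        simpa using this
      have hG : Tendsto (fun c : ℝ => 3 * (E.card : ℝ) * (∑ i ∈ E, trsq (μ i) c / c) +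
          ((E.card : ℝ) + 2) * (∑ i ∈ E, c * ((μ i) {y : ℝ | c < |y|}).toReal))
          atTop (nhds 0) := by
        have := (hA1.const_mul (3 * (E.card : ℝ))).add (hA2.const_mul ((E.card : ℝ) + 2))
        simpa using this
      refine hG.congr' ?_
      filter_upwards [eventually_gt_atTop (0:ℝ)] with c hc
      have hc0 : c ≠ 0 := ne_of_gt hc
      simp only [hBdef]
      rw [← Finset.sum_div, ← Finset.mul_sum]
      field_simp
    -- the identity
    have hid : ∀ c : ℝ,
        Complex.exp (↑(c⁻¹ * C₁) * Complex.I) *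
          ∫ x : Fin n → ℝ, Complex.exp (↑(-(c⁻¹ * ∑ i ∈ E, x i)) * Complex.I) ∂P₁ =
        Complex.exp (↑(c⁻¹ * C₂) * Complex.I) *
          ∫ x : Fin n → ℝ, Complex.exp (↑(-(c⁻¹ * ∑ i ∈ E, x i)) * Complex.I) ∂P₂ := by
      intro c
      rw [hEdef, ← ident P₁ μ hm₁ C₁ hs₁ i₀ c⁻¹, ← ident P₂ μ hm₂ C₂ hs₂ i₀ c⁻¹]
    by_contra hne
    set δ : ℝ := C₁ - C₂ with hδdef
    have hδ : δ ≠ 0 := sub_ne_zero.2 hne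
    set d : ℝ := |δ| with hddef
    have hd : 0 < d := abs_pos.2 hδ
    -- find a good c
    have hev : ∀ᶠ c : ℝ in atTop, 1 ≤ c ∧ d ≤ c ∧ c * B c < min (1/2) (d/16) := by
      have h1 : ∀ᶠ c : ℝ in atTop, (1:ℝ) ≤ c := eventually_ge_atTop 1
      have h2 : ∀ᶠ c : ℝ in atTop, d ≤ c := eventually_ge_atTop d
      have h3 : ∀ᶠ c : ℝ in atTop, c * B c < min (1/2) (d/16) := by
        have hmin : 0 < min (1/2) (d/16) := by
          apply lt_min (by norm_num) (by positivity)
        have := (Metric.tendsto_nhds.1 hcB) _ hmin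
        filter_upwards [this] with c hc
        rw [Real.dist_eq, sub_zero] at hc
        exact lt_of_le_of_lt (le_abs_self _) hc
      filter_upwards [h1, h2, h3] with c e1 e2 e3
      exact ⟨e1, e2, e3⟩
    obtain ⟨c, hc1, hcd, hcB3⟩ := hev.exists
    have hc0 : (0:ℝ) < c := lt_of_lt_of_le one_pos hc1
    have hcBhalf : c * B c < 1/2 := lt_of_lt_of_le hcB3 (min_le_left _ _)
    have hcBd : c * B c < d/16 := lt_of_lt_of_le hcB3 (min_le_right _ _)
    have hBhalf : B c ≤ 1/2 := by
      have h : B c ≤ c * B c := by nlinarith [hBnn c]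
      exact h.trans hcBhalf.le
    -- the approximations
    have happ1 := approx P₁ μ hprob hm₁ E hc0
    have happ2 := approx P₂ μ hprob hm₂ E hc0
    set ψ₁ : ℂ := ∫ x : Fin n → ℝ, Complex.exp (↑(-(c⁻¹ * ∑ i ∈ E, x i)) * Complex.I) ∂P₁
      with hψ₁def
    set ψ₂ : ℂ := ∫ x : Fin n → ℝ, Complex.exp (↑(-(c⁻¹ * ∑ i ∈ E, x i)) * Complex.I) ∂P₂
      with hψ₂def
    set z : ℂ := 1 - ↑(c⁻¹ * ∑ i ∈ E, ∫ y, ({y : ℝ | |y| ≤ c}).indicator (fun y => y) y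
      ∂(μ i)) * Complex.I with hzdef
    have hB1 : ‖ψ₁ - z‖ ≤ B c := happ1
    have hB2 : ‖ψ₂ - z‖ ≤ B c := happ2
    have h12 : ‖ψ₁ - ψ₂‖ ≤ 2 * B c := by
      calc ‖ψ₁ - ψ₂‖ = ‖(ψ₁ - z) - (ψ₂ - z)‖ := by ring_nf
        _ ≤ ‖ψ₁ - z‖ + ‖ψ₂ - z‖ := norm_sub_le _ _
        _ ≤ 2 * B c := by linarith
    -- lower bound on ‖ψ₁‖
    have hzre : z.re = 1 := by
      rw [hzdef]
      simp [Complex.sub_re, Complex.mul_re, Complex.I_re, Complex.I_im]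
    have hre1 : 1 - B c ≤ ψ₁.re := by
      have habs := Complex.abs_re_le_norm (ψ₁ - z)
      have h5 : |ψ₁.re - 1| ≤ B c := by
        calc |ψ₁.re - 1| = |(ψ₁ - z).re| := by rw [Complex.sub_re, hzre]
          _ ≤ ‖ψ₁ - z‖ := habs
          _ ≤ B c := hB1
      linarith [(abs_le.1 h5).1]
    have hψnorm : 1/2 ≤ ‖ψ₁‖ := by
      have hra := Complex.re_le_norm ψ₁
      have hh : (1:ℝ)/2 ≤ 1 - B c := by linarith [hBhalf]
      exact hh.trans (hre1.trans hra)
    -- relate ψ₂ and ψ₁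
    have hψeq : Complex.exp (↑(c⁻¹ * δ) * Complex.I) * ψ₁ = ψ₂ := by
      have hexp : Complex.exp (↑(c⁻¹ * C₂) * Complex.I) *
          (Complex.exp (↑(c⁻¹ * δ) * Complex.I) * ψ₁) =
          Complex.exp (↑(c⁻¹ * C₂) * Complex.I) * ψ₂ := by
        rw [← mul_assoc, ← Complex.exp_add]
        have harg : (↑(c⁻¹ * C₂) : ℂ) * Complex.I + ↑(c⁻¹ * δ) * Complex.I =
            ↑(c⁻¹ * C₁) * Complex.I := by
          rw [hδdef]
          push_cast
          ring
        rw [harg]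
        exact hid c
      exact mul_left_cancel₀ (Complex.exp_ne_zero _) hexp
    have hdiff : ψ₁ - ψ₂ = (1 - Complex.exp (↑(c⁻¹ * δ) * Complex.I)) * ψ₁ := by
      rw [← hψeq]
      ring
    have hkey : ‖1 - Complex.exp (↑(c⁻¹ * δ) * Complex.I)‖ * ‖ψ₁‖ ≤ 2 * B c := by
      rw [← norm_mul, ← hdiff]
      exact h12
    -- lower bound on ‖1 - exp(...)‖ via sine
    have hsin_abs : |Real.sin (c⁻¹ * δ)| ≤ ‖1 - Complex.exp (↑(c⁻¹ * δ) * Complex.I)‖ := by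
      have him : (1 - Complex.exp (↑(c⁻¹ * δ) * Complex.I)).im = -Real.sin (c⁻¹ * δ) := by
        rw [Complex.sub_im, Complex.one_im, Complex.exp_ofReal_mul_I_im]
        ring
      calc |Real.sin (c⁻¹ * δ)| = |(1 - Complex.exp (↑(c⁻¹ * δ) * Complex.I)).im| := by
            rw [him, abs_neg]
        _ ≤ ‖1 - Complex.exp (↑(c⁻¹ * δ) * Complex.I)‖ := Complex.abs_im_le_norm _
        _ = ‖1 - Complex.exp (↑(c⁻¹ * δ) * Complex.I)‖ := rfl
    have hsin_eq : |Real.sin (c⁻¹ * δ)| = |Real.sin (c⁻¹ * d)| := by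
      rcases abs_cases δ with ⟨h, _⟩ | ⟨h, _⟩
      · rw [hddef, h]
      · rw [hddef, h, mul_neg, Real.sin_neg, abs_neg]
    have hu1 : 0 < c⁻¹ * d := by positivity
    have hu2 : c⁻¹ * d ≤ 1 := by
      rw [inv_mul_le_iff₀ hc0]
      linarith
    have hsin_lb : 3/4 * (c⁻¹ * d) ≤ Real.sin (c⁻¹ * d) := by
      have hcube := Real.sin_gt_sub_cube hu1
      have hu3 : (c⁻¹ * d) ^ 3 ≤ c⁻¹ * d := by nlinarith [hu1.le, hu2, sq_nonneg (c⁻¹ * d)]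
      linarith
    have hsin_pos : 0 < Real.sin (c⁻¹ * d) := by nlinarith
    -- combine everything
    have hfinal : 3/4 * (c⁻¹ * d) * (1/2) ≤ 2 * B c := by
      calc 3/4 * (c⁻¹ * d) * (1/2) ≤ Real.sin (c⁻¹ * d) * (1/2) := by
            apply mul_le_mul_of_nonneg_right hsin_lb (by norm_num)
        _ = |Real.sin (c⁻¹ * d)| * (1/2) := by rw [_root_.abs_of_pos hsin_pos]
        _ = |Real.sin (c⁻¹ * δ)| * (1/2) := by rw [hsin_eq]
        _ ≤ ‖1 - Complex.exp (↑(c⁻¹ * δ) * Complex.I)‖ * ‖ψ₁‖ := by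
            apply mul_le_mul hsin_abs hψnorm (by norm_num) (norm_nonneg _)
        _ ≤ 2 * B c := hkey
    have hstep : 3/8 * d ≤ 2 * (c * B c) := by
      have h := mul_le_mul_of_nonneg_right hfinal hc0.le
      calc 3/8 * d = 3/4 * (c⁻¹ * d) * (1/2) * c := by field_simp; ring
        _ ≤ 2 * B c * c := h
        _ = 2 * (c * B c) := by ring
    linarith [hstep, hcBd, hd]
end

section
/- Let ν be the Borel probability measure on ℝ with ν({2ᵏ}) = 2^{−(k+1)} for every integer k ≥ 0, and let γ be the Borel probability measure with γ({−2^{k+1}}) = 2^{−(k+1)} for every integer k ≥ 0. Then the triplet (ν, ν, γ) is jointly mixable with center 0 and also jointly mixable with center 1. Consequently, the measure μ = (2ν + γ)/3 is 3-completely mixable with 3-centers 0 and 1/3. -/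
open MeasureTheory ENNReal

namespace Stmt6Aux

lemma hsum_meas : Measurable (fun x : Fin 3 → ℝ => ∑ i, x i) :=
  Finset.measurable_sum _ fun i _ => measurable_pi_apply i

lemma hHmeas (C : ℝ) : MeasurableSet {x : Fin 3 → ℝ | ∑ i, x i = C} :=
  hsum_meas (measurableSet_singleton C)

lemma three_inv_mul : (3:ℝ≥0∞)⁻¹ * 3 = 1 :=
  ENNReal.inv_mul_cancel (by norm_num) (by norm_num)

noncomputable def w (k : ℕ) : ℝ≥0∞ := ((2 : ℝ≥0∞) ^ (k + 1))⁻¹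

lemma w_eq (k : ℕ) : w k = (2⁻¹ : ℝ≥0∞) ^ (k + 1) := by
  simp [w, ENNReal.inv_pow]

lemma geom : ∑' k : ℕ, ((2:ℝ≥0∞)⁻¹) ^ k = 2 := by
  rw [ENNReal.tsum_geometric]
  have h : (1:ℝ≥0∞) - 2⁻¹ = 2⁻¹ := by
    rw [ENNReal.sub_eq_of_eq_add (by simp)]
    rw [← two_mul, ENNReal.mul_inv_cancel] <;> norm_num
  rw [h, inv_inv]

lemma tsum_w : ∑' k, w k = 1 := by
  simp only [w_eq, pow_succ, ENNReal.tsum_mul_right, geom]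
  rw [ENNReal.mul_inv_cancel] <;> norm_num

lemma tsum_w_succ : ∑' k, w (k + 1) = 2⁻¹ := by
  simp only [w_eq]
  have : ∀ k : ℕ, (2⁻¹ : ℝ≥0∞) ^ (k + 1 + 1) = 2⁻¹ ^ k * (2⁻¹ * 2⁻¹) := by
    intro k; ring
  simp only [this, ENNReal.tsum_mul_right, geom]
  rw [← mul_assoc, ENNReal.mul_inv_cancel (by norm_num) (by norm_num), one_mul]

lemma w_succ_add (k : ℕ) : w (k + 1) + w (k + 1) = w k := by
  simp only [w_eq, ← two_mul]
  rw [show k + 1 + 1 = (k+1) + 1 from rfl, pow_succ (2⁻¹ : ℝ≥0∞) (k+1), ← mul_assoc,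
    mul_comm (2:ℝ≥0∞) _, mul_assoc, ENNReal.mul_inv_cancel (by norm_num) (by norm_num), mul_one]

lemma sum_dirac_apply {α ι : Type*} [MeasurableSpace α] (c : ι → ℝ≥0∞) (p : ι → α)
    {A : Set α} (hA : MeasurableSet A) :
    Measure.sum (fun i => c i • Measure.dirac (p i)) A = ∑' i, c i * A.indicator 1 (p i) := by
  rw [Measure.sum_apply _ hA]
  congr 1; funext i
  rw [Measure.smul_apply, Measure.dirac_apply' _ hA, smul_eq_mul]

lemma eq_sum_dirac (μ : Measure ℝ) [IsProbabilityMeasure μ] (f : ℕ → ℝ)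
    (hf : Function.Injective f) (c : ℕ → ℝ≥0∞) (hc : ∀ k, μ {f k} = c k)
    (hsum : ∑' k, c k = 1) :
    μ = Measure.sum (fun k => c k • Measure.dirac (f k)) := by
  have hdisj : Pairwise (Function.onFun Disjoint fun k => ({f k} : Set ℝ)) := by
    intro i j hij
    simp [Function.onFun, Set.disjoint_singleton, hf.ne hij]
  have hrmeas : MeasurableSet (Set.range f) :=
    (Set.countable_range f).measurableSet
  have hrange : μ (Set.range f) = 1 := by
    rw [← Set.iUnion_singleton_eq_range,
      measure_iUnion hdisj (fun k => measurableSet_singleton _)]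
    simpa [hc] using hsum
  have hcompl : μ (Set.range f)ᶜ = 0 := by
    have := measure_compl hrmeas (measure_ne_top μ _)
    rw [hrange, measure_univ, tsub_self] at this
    exact this
  ext A hA
  have h2 : μ (A \ Set.range f) = 0 :=
    measure_mono_null (fun x hx => hx.2) hcompl
  have h1 : μ A = μ (A ∩ Set.range f) := by
    rw [← measure_inter_add_diff A hrmeas, h2, add_zero]
  have h3 : A ∩ Set.range f = ⋃ k, A ∩ {f k} := by
    rw [← Set.iUnion_singleton_eq_range, Set.inter_iUnion]
  rw [h1, h3, measure_iUnion (hdisj.mono fun i j h => h.mono Set.inter_subset_right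
      Set.inter_subset_right) (fun k => hA.inter (measurableSet_singleton _)),
    sum_dirac_apply c f hA]
  congr 1; funext k
  by_cases hk : f k ∈ A
  · rw [Set.inter_eq_right.mpr (Set.singleton_subset_iff.mpr hk), hc,
      Set.indicator_of_mem hk, Pi.one_apply, mul_one]
  · rw [Set.indicator_of_notMem hk, mul_zero]
    have : A ∩ {f k} = ∅ := by
      ext x; simp only [Set.mem_inter_iff, Set.mem_singleton_iff, Set.mem_empty_iff_false,
        iff_false, not_and]
      rintro hx rfl; exact hk hx
    rw [this, measure_empty]

lemma map_sum_dirac {ι : Type*} {β : Type*} [MeasurableSpace β]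
    (c : ι → ℝ≥0∞) (p : ι → (Fin 3 → ℝ)) {g : (Fin 3 → ℝ) → β} (hg : Measurable g) :
    (Measure.sum (fun i => c i • Measure.dirac (p i))).map g
      = Measure.sum (fun i => c i • Measure.dirac (g (p i))) := by
  ext A hA
  rw [Measure.map_apply hg hA]
  rw [sum_dirac_apply c p (hg hA), sum_dirac_apply c _ hA]
  refine tsum_congr fun i => ?_
  by_cases h : g (p i) ∈ A
  · rw [Set.indicator_of_mem h, Set.indicator_of_mem (Set.mem_preimage.mpr h)]
    simp
  · rw [Set.indicator_of_notMem h, Set.indicator_of_notMem (fun hh : p i ∈ g ⁻¹' A => h hh)]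

lemma jm_to_cm (ν γ : Measure ℝ) [IsProbabilityMeasure ν] [IsProbabilityMeasure γ]
    (C : ℝ) (h : IsJointMix 3 ![ν, ν, γ] C) :
    IsJointMix 3 (fun _ => (3:ℝ≥0∞)⁻¹ • ((2:ℝ≥0∞) • ν + γ)) C := by
  obtain ⟨P, hP, hmarg, hH⟩ := h
  set T1 : (Fin 3 → ℝ) → (Fin 3 → ℝ) := fun x i => x (i + 1) with hT1
  set T2 : (Fin 3 → ℝ) → (Fin 3 → ℝ) := fun x i => x (i + 2) with hT2
  have hT1m : Measurable T1 := measurable_pi_lambda _ fun i => measurable_pi_apply (i + 1)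
  have hT2m : Measurable T2 := measurable_pi_lambda _ fun i => measurable_pi_apply (i + 2)
  have hinv1 : T1 ⁻¹' {x : Fin 3 → ℝ | ∑ i, x i = C} = {x | ∑ i, x i = C} := by
    ext x
    simp only [Set.mem_preimage, Set.mem_setOf_eq, Fin.sum_univ_three, hT1]
    have e0 : (0:Fin 3) + 1 = 1 := rfl
    have e1 : (1:Fin 3) + 1 = 2 := rfl
    have e2 : (2:Fin 3) + 1 = 0 := rfl
    rw [e0, e1, e2]
    constructor <;> intro h <;> linarith
  have hinv2 : T2 ⁻¹' {x : Fin 3 → ℝ | ∑ i, x i = C} = {x | ∑ i, x i = C} := by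
    ext x
    simp only [Set.mem_preimage, Set.mem_setOf_eq, Fin.sum_univ_three, hT2]
    have e0 : (0:Fin 3) + 2 = 2 := rfl
    have e1 : (1:Fin 3) + 2 = 0 := rfl
    have e2 : (2:Fin 3) + 2 = 1 := rfl
    rw [e0, e1, e2]
    constructor <;> intro h <;> linarith
  refine ⟨(3:ℝ≥0∞)⁻¹ • (P + P.map T1 + P.map T2), ?_, ?_, ?_⟩
  · constructor
    rw [Measure.smul_apply, Measure.add_apply, Measure.add_apply,
      Measure.map_apply hT1m MeasurableSet.univ, Measure.map_apply hT2m MeasurableSet.univ]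
    simp only [Set.preimage_univ, measure_univ]
    rw [show (1:ℝ≥0∞) + 1 + 1 = 3 by norm_num, smul_eq_mul, three_inv_mul]
  · intro i
    rw [Measure.map_smul, Measure.map_add _ _ (measurable_pi_apply i),
      Measure.map_add _ _ (measurable_pi_apply i),
      Measure.map_map (measurable_pi_apply i) hT1m,
      Measure.map_map (measurable_pi_apply i) hT2m,
      show ((fun x : Fin 3 → ℝ => x i) ∘ T1) = (fun x => x (i + 1)) from rfl,
      show ((fun x : Fin 3 → ℝ => x i) ∘ T2) = (fun x => x (i + 2)) from rfl,
      hmarg i, hmarg (i + 1), hmarg (i + 2)]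
    congr 1
    have h2 : (2:ℝ≥0∞) • ν = ν + ν := two_smul _ ν
    fin_cases i <;> simp [Matrix.cons_val_zero, Matrix.cons_val_one, Matrix.head_cons, h2] <;> abel
  · rw [Measure.smul_apply, Measure.add_apply, Measure.add_apply,
      Measure.map_apply hT1m (hHmeas C), Measure.map_apply hT2m (hHmeas C),
      hinv1, hinv2, hH, show (1:ℝ≥0∞) + 1 + 1 = 3 by norm_num, smul_eq_mul, three_inv_mul]

lemma jm_zero (ν γ : Measure ℝ) [IsProbabilityMeasure ν] [IsProbabilityMeasure γ]
    (hν : ∀ k : ℕ, ν {(2 : ℝ) ^ k} = ((2 : ℝ≥0∞) ^ (k + 1))⁻¹)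
    (hγ : ∀ k : ℕ, γ {-(2 : ℝ) ^ (k + 1)} = ((2 : ℝ≥0∞) ^ (k + 1))⁻¹) :
    IsJointMix 3 ![ν, ν, γ] 0 := by
  have hsm : StrictMono (fun k : ℕ => (2:ℝ)^k) := fun a b h => pow_lt_pow_right₀ one_lt_two h
  have hinj1 : Function.Injective (fun k : ℕ => (2:ℝ)^k) := hsm.injective
  have hinj2 : Function.Injective (fun k : ℕ => -(2:ℝ)^(k+1)) := by
    intro a b h
    have h2 : (fun k : ℕ => (2:ℝ)^k) (a+1) = (fun k : ℕ => (2:ℝ)^k) (b+1) := by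
      simpa using neg_injective h
    have := hinj1 h2
    omega
  have ν_repr : ν = Measure.sum (fun k => w k • Measure.dirac ((2:ℝ)^k)) :=
    eq_sum_dirac ν _ hinj1 w (fun k => hν k) tsum_w
  have γ_repr : γ = Measure.sum (fun k => w k • Measure.dirac (-(2:ℝ)^(k+1))) :=
    eq_sum_dirac γ _ hinj2 w (fun k => hγ k) tsum_w
  refine ⟨Measure.sum (fun k => w k • Measure.dirac ![(2:ℝ)^k, (2:ℝ)^k, -(2:ℝ)^(k+1)]), ?_, ?_, ?_⟩
  · constructor
    rw [sum_dirac_apply _ _ MeasurableSet.univ]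
    simp only [Set.indicator_univ, Pi.one_apply, mul_one]
    exact tsum_w
  · intro i
    rw [map_sum_dirac _ _ (measurable_pi_apply i)]
    fin_cases i
    · simpa using ν_repr.symm
    · simpa using ν_repr.symm
    · simpa using γ_repr.symm
  · rw [sum_dirac_apply _ _ (hHmeas 0)]
    have hm : ∀ k : ℕ, (![(2:ℝ)^k, (2:ℝ)^k, -(2:ℝ)^(k+1)]) ∈ {x : Fin 3 → ℝ | ∑ i, x i = 0} := by
      intro k
      show ∑ i, (![(2:ℝ)^k, (2:ℝ)^k, -(2:ℝ)^(k+1)]) i = 0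
      rw [Fin.sum_univ_three]
      simp only [Matrix.cons_val_zero, Matrix.cons_val_one, Matrix.head_cons,
        Matrix.cons_val_two, Matrix.tail_cons]
      rw [pow_succ]; ring
    calc (∑' k, w k * Set.indicator {x : Fin 3 → ℝ | ∑ i, x i = 0} 1
            ![(2:ℝ)^k, (2:ℝ)^k, -(2:ℝ)^(k+1)])
        = ∑' k, w k := tsum_congr fun k => by
          rw [Set.indicator_of_mem (hm k), Pi.one_apply, mul_one]
      _ = 1 := tsum_w

lemma jm_one (ν γ : Measure ℝ) [IsProbabilityMeasure ν] [IsProbabilityMeasure γ]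
    (hν : ∀ k : ℕ, ν {(2 : ℝ) ^ k} = ((2 : ℝ≥0∞) ^ (k + 1))⁻¹)
    (hγ : ∀ k : ℕ, γ {-(2 : ℝ) ^ (k + 1)} = ((2 : ℝ≥0∞) ^ (k + 1))⁻¹) :
    IsJointMix 3 ![ν, ν, γ] 1 := by
  have hsm : StrictMono (fun k : ℕ => (2:ℝ)^k) := fun a b h => pow_lt_pow_right₀ one_lt_two h
  have hinj1 : Function.Injective (fun k : ℕ => (2:ℝ)^k) := hsm.injective
  have hinj2 : Function.Injective (fun k : ℕ => -(2:ℝ)^(k+1)) := by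
    intro a b h
    have h2 : (fun k : ℕ => (2:ℝ)^k) (a+1) = (fun k : ℕ => (2:ℝ)^k) (b+1) := by
      simpa using neg_injective h
    have := hinj1 h2
    omega
  have ν_repr : ν = Measure.sum (fun k => w k • Measure.dirac ((2:ℝ)^k)) :=
    eq_sum_dirac ν _ hinj1 w (fun k => hν k) tsum_w
  have γ_repr : γ = Measure.sum (fun k => w k • Measure.dirac (-(2:ℝ)^(k+1))) :=
    eq_sum_dirac γ _ hinj2 w (fun k => hγ k) tsum_w
  have hw0 : w 0 = 2⁻¹ := by simp [w]
  refine ⟨Measure.sum (fun k => w (k+1) • Measure.dirac ![(1:ℝ), (2:ℝ)^(k+1), -(2:ℝ)^(k+1)])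
      + Measure.sum (fun k => w (k+1) • Measure.dirac ![(2:ℝ)^(k+1), (1:ℝ), -(2:ℝ)^(k+1)]),
      ?_, ?_, ?_⟩
  · constructor
    rw [Measure.add_apply, sum_dirac_apply _ _ MeasurableSet.univ,
      sum_dirac_apply _ _ MeasurableSet.univ]
    simp only [Set.indicator_univ, Pi.one_apply, mul_one]
    rw [tsum_w_succ, ENNReal.inv_two_add_inv_two]
  · have key1 : Measure.sum (fun k => w (k+1) • Measure.dirac (1:ℝ))
        + Measure.sum (fun k => w (k+1) • Measure.dirac ((2:ℝ)^(k+1))) = ν := by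
      ext A hA
      rw [Measure.add_apply, sum_dirac_apply _ _ hA, sum_dirac_apply _ _ hA]
      rw [ν_repr, sum_dirac_apply _ _ hA]
      rw [tsum_eq_zero_add' (f := fun k => w k * A.indicator 1 ((2:ℝ)^k)) ENNReal.summable]
      rw [ENNReal.tsum_mul_right, tsum_w_succ, hw0, pow_zero]
    have key2 : Measure.sum (fun k => w (k+1) • Measure.dirac ((2:ℝ)^(k+1)))
        + Measure.sum (fun k => w (k+1) • Measure.dirac (1:ℝ)) = ν := by
      rw [add_comm]; exact key1
    have key3 : Measure.sum (fun k => w (k+1) • Measure.dirac (-(2:ℝ)^(k+1)))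
        + Measure.sum (fun k => w (k+1) • Measure.dirac (-(2:ℝ)^(k+1))) = γ := by
      ext A hA
      rw [Measure.add_apply, sum_dirac_apply _ _ hA]
      rw [γ_repr, sum_dirac_apply _ _ hA, ← ENNReal.tsum_add]
      exact tsum_congr fun k => by rw [← add_mul, w_succ_add]
    intro i
    rw [Measure.map_add _ _ (measurable_pi_apply i), map_sum_dirac _ _ (measurable_pi_apply i),
      map_sum_dirac _ _ (measurable_pi_apply i)]
    fin_cases i
    · simpa using key1
    · simpa using key2
    · simpa using key3
  · have hm1 : ∀ k : ℕ, (![(1:ℝ), (2:ℝ)^(k+1), -(2:ℝ)^(k+1)]) ∈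
        {x : Fin 3 → ℝ | ∑ i, x i = 1} := by
      intro k
      show ∑ i, (![(1:ℝ), (2:ℝ)^(k+1), -(2:ℝ)^(k+1)]) i = 1
      rw [Fin.sum_univ_three]
      simp only [Matrix.cons_val_zero, Matrix.cons_val_one, Matrix.head_cons,
        Matrix.cons_val_two, Matrix.tail_cons]
      ring
    have hm2 : ∀ k : ℕ, (![(2:ℝ)^(k+1), (1:ℝ), -(2:ℝ)^(k+1)]) ∈
        {x : Fin 3 → ℝ | ∑ i, x i = 1} := by
      intro k
      show ∑ i, (![(2:ℝ)^(k+1), (1:ℝ), -(2:ℝ)^(k+1)]) i = 1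
      rw [Fin.sum_univ_three]
      simp only [Matrix.cons_val_zero, Matrix.cons_val_one, Matrix.head_cons,
        Matrix.cons_val_two, Matrix.tail_cons]
      ring
    rw [Measure.add_apply, sum_dirac_apply _ _ (hHmeas 1), sum_dirac_apply _ _ (hHmeas 1)]
    have e1 : (∑' k, w (k+1) * Set.indicator {x : Fin 3 → ℝ | ∑ i, x i = 1} 1
        ![(1:ℝ), (2:ℝ)^(k+1), -(2:ℝ)^(k+1)]) = 2⁻¹ := by
      rw [← tsum_w_succ]
      exact tsum_congr fun k => by rw [Set.indicator_of_mem (hm1 k), Pi.one_apply, mul_one]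
    have e2 : (∑' k, w (k+1) * Set.indicator {x : Fin 3 → ℝ | ∑ i, x i = 1} 1
        ![(2:ℝ)^(k+1), (1:ℝ), -(2:ℝ)^(k+1)]) = 2⁻¹ := by
      rw [← tsum_w_succ]
      exact tsum_congr fun k => by rw [Set.indicator_of_mem (hm2 k), Pi.one_apply, mul_one]
    rw [e1, e2, ENNReal.inv_two_add_inv_two]

end Stmt6Aux

theorem stmt6 (ν γ : Measure ℝ) [IsProbabilityMeasure ν] [IsProbabilityMeasure γ]
    (hν : ∀ k : ℕ, ν {(2 : ℝ) ^ k} = ((2 : ℝ≥0∞) ^ (k + 1))⁻¹)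
    (hγ : ∀ k : ℕ, γ {-(2 : ℝ) ^ (k + 1)} = ((2 : ℝ≥0∞) ^ (k + 1))⁻¹) :
    IsJointMix 3 ![ν, ν, γ] 0 ∧ IsJointMix 3 ![ν, ν, γ] 1 ∧
    IsCompletelyMixable 3 ((3 : ℝ≥0∞)⁻¹ • ((2 : ℝ≥0∞) • ν + γ)) 0 ∧
    IsCompletelyMixable 3 ((3 : ℝ≥0∞)⁻¹ • ((2 : ℝ≥0∞) • ν + γ)) (1 / 3) := by
  have jm0 := Stmt6Aux.jm_zero ν γ hν hγ
  have jm1 := Stmt6Aux.jm_one ν γ hν hγ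
  refine ⟨jm0, jm1, ?_, ?_⟩
  · unfold IsCompletelyMixable
    rw [show ((3:ℕ):ℝ) * 0 = 0 by norm_num]
    exact Stmt6Aux.jm_to_cm ν γ 0 jm0
  · unfold IsCompletelyMixable
    rw [show ((3:ℕ):ℝ) * (1/3) = 1 by norm_num]
    exact Stmt6Aux.jm_to_cm ν γ 1 jm1
end

section
/- Let μ be a Borel probability measure on ℝ that is n-completely mixable, and let Λₙ(μ) be the set of probability measures λ on ℝⁿ whose one-dimensional marginals all equal μ and such that λ({x ∈ ℝⁿ : x₁+⋯+xₙ = C}) = 1 for some C ∈ ℝ. Then Λₙ(μ) is a compact subset of the space of probability measures on ℝⁿ with the topology of weak convergence, the map φ : Λₙ(μ) → ℝ sending λ to its center C/n is continuous, and consequently the set of n-centers of μ is a nonempty compact subset of ℝ. -/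
set_option linter.unusedSectionVars false
set_option linter.unusedVariables false
open MeasureTheory NNReal ENNReal Filter Set Topology Metric BoundedContinuousFunction

noncomputable section UltraLimit
variable {α : Type*}
def ulim (U : Ultrafilter α) (g : α → ℝ≥0∞) : ℝ≥0∞ := (U.map g).lim
lemma tendsto_ulim (U : Ultrafilter α) (g : α → ℝ≥0∞) : Tendsto g U (𝓝 (ulim U g)) :=
  Ultrafilter.le_nhds_lim (U.map g)
lemma ulim_eq {U : Ultrafilter α} {g : α → ℝ≥0∞} {x : ℝ≥0∞} (h : Tendsto g U (𝓝 x)) :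
    ulim U g = x := tendsto_nhds_unique (tendsto_ulim U g) h
lemma ulim_le_of_eventually {U : Ultrafilter α} {g : α → ℝ≥0∞} {x : ℝ≥0∞}
    (h : ∀ᶠ a in (U : Filter α), g a ≤ x) : ulim U g ≤ x :=
  le_of_tendsto (tendsto_ulim U g) h
lemma le_ulim_of_eventually {U : Ultrafilter α} {g : α → ℝ≥0∞} {x : ℝ≥0∞}
    (h : ∀ᶠ a in (U : Filter α), x ≤ g a) : x ≤ ulim U g :=
  ge_of_tendsto (tendsto_ulim U g) h
lemma ulim_mono {U : Ultrafilter α} {g h : α → ℝ≥0∞}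
    (hle : ∀ᶠ a in (U : Filter α), g a ≤ h a) : ulim U g ≤ ulim U h :=
  le_of_tendsto_of_tendsto (tendsto_ulim U g) (tendsto_ulim U h) hle
lemma ulim_add (U : Ultrafilter α) (g h : α → ℝ≥0∞) :
    ulim U (fun a => g a + h a) = ulim U g + ulim U h :=
  ulim_eq ((tendsto_ulim U g).add (tendsto_ulim U h))
end UltraLimit

noncomputable section ContentLimit

variable {X : Type*} [MetricSpace X] [MeasurableSpace X] [BorelSpace X]
  (U : Ultrafilter (ProbabilityMeasure X))

/-- Ultrafilter limit of the measures of a fixed set. -/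
def mlim (s : Set X) : ℝ≥0∞ := ulim U (fun P => (P : Measure X) s)

lemma tendsto_mlim (s : Set X) :
    Tendsto (fun P : ProbabilityMeasure X => (P : Measure X) s) U (𝓝 (mlim U s)) :=
  tendsto_ulim U _

lemma mlim_le_one (s : Set X) : mlim U s ≤ 1 :=
  ulim_le_of_eventually (Eventually.of_forall fun P => prob_le_one)

lemma mlim_mono {s t : Set X} (h : s ⊆ t) : mlim U s ≤ mlim U t :=
  ulim_mono (Eventually.of_forall fun P => measure_mono h)

lemma mlim_union_le (s t : Set X) : mlim U (s ∪ t) ≤ mlim U s + mlim U t := by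
  simp only [mlim]
  rw [← ulim_add]
  exact ulim_mono (Eventually.of_forall fun P => measure_union_le s t)

lemma mlim_union (s t : Set X) (hd : Disjoint s t) (ht : MeasurableSet t) :
    mlim U (s ∪ t) = mlim U s + mlim U t := by
  simp only [mlim]
  rw [← ulim_add]
  exact congrArg (ulim U) (funext fun P => measure_union hd ht)

/-- The inner content: infimum over positive thickenings of the ultrafilter limit measure. -/
def contE (K : Set X) : ℝ≥0∞ := ⨅ δ : Ioi (0:ℝ), mlim U (thickening δ K)

lemma contE_le_mlim_thickening (K : Set X) {δ : ℝ} (hδ : 0 < δ) :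
    contE U K ≤ mlim U (thickening δ K) :=
  iInf_le (fun δ : Ioi (0:ℝ) => mlim U (thickening δ K)) ⟨δ, hδ⟩

lemma contE_le_one (K : Set X) : contE U K ≤ 1 :=
  (contE_le_mlim_thickening U K one_pos).trans (mlim_le_one U _)

lemma mlim_le_contE (K : Set X) : mlim U K ≤ contE U K :=
  le_iInf fun δ => mlim_mono U (self_subset_thickening δ.2.out K)

lemma contE_mono {K L : Set X} (h : K ⊆ L) : contE U K ≤ contE U L :=
  iInf_mono fun δ => mlim_mono U (thickening_subset_of_subset _ h)

lemma contE_union_le (K L : Set X) : contE U (K ∪ L) ≤ contE U K + contE U L := by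
  have hsum : contE U K + contE U L
      = ⨅ δ : Ioi (0:ℝ), (mlim U (thickening δ K) + mlim U (thickening δ L)) := by
    rw [contE, contE]
    refine ENNReal.iInf_add_iInf fun i j => ?_
    refine ⟨⟨min i j, mem_Ioi.mpr (lt_min (mem_Ioi.mp i.2) (mem_Ioi.mp j.2))⟩, add_le_add
      (mlim_mono U (thickening_mono (min_le_left _ _) K))
      (mlim_mono U (thickening_mono (min_le_right _ _) L))⟩
  rw [hsum]
  refine le_iInf fun δ => ?_
  calc contE U (K ∪ L) ≤ mlim U (thickening δ (K ∪ L)) := contE_le_mlim_thickening U _ δ.2.out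
    _ = mlim U (thickening δ K ∪ thickening δ L) := by rw [thickening_union]
    _ ≤ mlim U (thickening δ K) + mlim U (thickening δ L) := mlim_union_le U _ _


lemma contE_union_disjoint {K L : Set X} (hK : IsCompact K) (hL : IsCompact L)
    (hd : Disjoint K L) : contE U (K ∪ L) = contE U K + contE U L := by
  refine le_antisymm (contE_union_le U K L) ?_
  obtain ⟨δ₀, hδ₀, hdisj⟩ := hd.exists_thickenings hK hL.isClosed
  refine le_iInf fun δ => ?_
  set δ' := min δ.1 δ₀ with hδ'
  have hδ'0 : 0 < δ' := lt_min δ.2.out hδ₀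
  have hdisj' : Disjoint (thickening δ' K) (thickening δ' L) :=
    hdisj.mono (thickening_mono (min_le_right _ _) K) (thickening_mono (min_le_right _ _) L)
  calc contE U K + contE U L
      ≤ mlim U (thickening δ' K) + mlim U (thickening δ' L) :=
        add_le_add (contE_le_mlim_thickening U K hδ'0) (contE_le_mlim_thickening U L hδ'0)
    _ = mlim U (thickening δ' K ∪ thickening δ' L) :=
        (mlim_union U _ _ hdisj' isOpen_thickening.measurableSet).symm
    _ = mlim U (thickening δ' (K ∪ L)) := by rw [thickening_union]
    _ ≤ mlim U (thickening δ (K ∪ L)) := mlim_mono U (thickening_mono (min_le_left _ _) _)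

lemma contE_ne_top (K : Set X) : contE U K ≠ ⊤ :=
  ((contE_le_one U K).trans_lt one_lt_top).ne

/-- The content associated to an ultrafilter of probability measures. -/
def ucontent : Content X where
  toFun K := (contE U K).toNNReal
  mono' K₁ K₂ h :=
    ENNReal.toNNReal_mono (contE_ne_top U _) (contE_mono U h)
  sup_disjoint' K₁ K₂ hd _ _ := by
    show (contE U ((K₁ : Set X) ∪ (K₂ : Set X))).toNNReal
      = (contE U (K₁ : Set X)).toNNReal + (contE U (K₂ : Set X)).toNNReal
    rw [← ENNReal.toNNReal_add (contE_ne_top U _) (contE_ne_top U _)]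
    exact congrArg ENNReal.toNNReal (contE_union_disjoint U K₁.2 K₂.2 hd)
  sup_le' K₁ K₂ := by
    show (contE U ((K₁ : Set X) ∪ (K₂ : Set X))).toNNReal
      ≤ (contE U (K₁ : Set X)).toNNReal + (contE U (K₂ : Set X)).toNNReal
    have := ENNReal.toNNReal_mono (add_ne_top.2 ⟨contE_ne_top U _, contE_ne_top U _⟩)
      (contE_union_le U (K₁ : Set X) K₂)
    rwa [ENNReal.toNNReal_add (contE_ne_top U _) (contE_ne_top U _)] at this

lemma ucontent_coe (K : TopologicalSpace.Compacts X) :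
    (ucontent U) K = contE U (K : Set X) := by
  show ((contE U (K : Set X)).toNNReal : ℝ≥0∞) = _
  exact ENNReal.coe_toNNReal (contE_ne_top U _)

/-- The candidate limit measure. -/
def ulimMeasure : Measure X := (ucontent U).measure

lemma ulimMeasure_open_le {G : Set X} (hG : IsOpen G) : ulimMeasure U G ≤ mlim U G := by
  rw [ulimMeasure, Content.measure_apply _ hG.measurableSet,
    (ucontent U).outerMeasure_of_isOpen G hG]
  refine iSup₂_le fun K hK => ?_
  rw [ucontent_coe]
  obtain ⟨δ, hδ, hsub⟩ := K.2.exists_thickening_subset_open hG hK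
  exact (contE_le_mlim_thickening U _ hδ).trans (mlim_mono U hsub)

lemma le_ulimMeasure_of_compact {K : Set X} (hK : IsCompact K) :
    mlim U K ≤ ulimMeasure U univ := by
  rw [ulimMeasure, Content.measure_apply _ MeasurableSet.univ,
    (ucontent U).outerMeasure_of_isOpen univ isOpen_univ]
  refine le_trans (mlim_le_contE U K) ?_
  have := (ucontent U).le_innerContent ⟨K, hK⟩ ⟨univ, isOpen_univ⟩ (subset_univ K)
  rwa [ucontent_coe] at this

lemma ulimMeasure_univ_le_one : ulimMeasure U univ ≤ 1 := by
  rw [ulimMeasure, Content.measure_apply _ MeasurableSet.univ,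
    (ucontent U).outerMeasure_of_isOpen univ isOpen_univ]
  refine iSup₂_le fun K _ => ?_
  rw [ucontent_coe]
  exact contE_le_one U _

end ContentLimit


section Counting

lemma counting_le {N : ℕ} {q a : ℝ≥0} (ha : a ≤ N * q) :
    q * ((Finset.range N).filter (fun j : ℕ => q * ((j : ℝ≥0) + 1) < a)).card ≤ a := by
  set F := (Finset.range N).filter (fun j : ℕ => q * ((j : ℝ≥0) + 1) < a) with hF
  rcases F.eq_empty_or_nonempty with h | h
  · simp [h]
  · obtain ⟨j₀, hj₀⟩ := F.exists_max_image id h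
    have hmem : q * ((j₀ : ℝ≥0) + 1) < a := (Finset.mem_filter.mp hj₀.1).2
    have hsub : F ⊆ Finset.range (j₀ + 1) := by
      intro j hj
      exact Finset.mem_range.mpr (Nat.lt_succ_of_le (hj₀.2 j hj))
    have hcard : F.card ≤ j₀ + 1 := by
      simpa using Finset.card_le_card hsub
    calc q * (F.card : ℝ≥0) ≤ q * ((j₀ + 1 : ℕ) : ℝ≥0) := by
          exact mul_le_mul_right (by exact_mod_cast hcard) q
      _ = q * ((j₀ : ℝ≥0) + 1) := by push_cast; ring
      _ ≤ a := hmem.le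

lemma counting_ge {N : ℕ} (hN : N ≠ 0) {q a : ℝ≥0} (ha : a ≤ N * q) :
    a ≤ q * ((Finset.range N).filter (fun j : ℕ => q * ((j : ℝ≥0) + 1) < a)).card + q := by
  set F := (Finset.range N).filter (fun j : ℕ => q * ((j : ℝ≥0) + 1) < a) with hF
  by_contra hcon
  push_neg at hcon
  have hk1 : q * ((F.card : ℝ≥0) + 1) < a := by
    rw [mul_add, mul_one]; exact hcon
  have hapos : 0 < a := lt_of_le_of_lt zero_le hk1
  have hqpos : 0 < q := by
    rcases eq_or_lt_of_le (show (0:ℝ≥0) ≤ q from zero_le) with h | h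
    · exfalso; rw [← h] at ha; simp at ha; exact hapos.ne' ha
    · exact h
  have hcardN : F.card + 1 < N := by
    have h1 : q * ((F.card : ℝ≥0) + 1) < q * N := lt_of_lt_of_le hk1 (ha.trans_eq (mul_comm _ _))
    have h2 : ((F.card : ℝ≥0) + 1) < N := lt_of_mul_lt_mul_left h1 (show (0:ℝ≥0) ≤ q from zero_le)
    exact_mod_cast h2
  have hsub : Finset.range (F.card + 1) ⊆ F := by
    intro j hj
    rw [Finset.mem_range] at hj
    refine Finset.mem_filter.mpr ⟨Finset.mem_range.mpr (lt_of_lt_of_le hj hcardN.le), ?_⟩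
    calc q * ((j : ℝ≥0) + 1) ≤ q * ((F.card : ℝ≥0) + 1) := by
          refine mul_le_mul_right ?_ q
          have : (j : ℝ≥0) ≤ (F.card : ℝ≥0) := by exact_mod_cast Nat.lt_succ_iff.mp hj
          exact add_le_add_left this 1
      _ < a := hk1
  have := Finset.card_le_card hsub
  simp [Finset.card_range] at this

end Counting


section Sandwich
variable {X : Type*} [MetricSpace X] [MeasurableSpace X] [BorelSpace X]

lemma sandwich_lintegral (Q : Measure X) [IsProbabilityMeasure Q] (f : X →ᵇ ℝ≥0) {N : ℕ}
    (hN : N ≠ 0) {q : ℝ≥0} (hq : ∀ x, f x ≤ N * q) :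
    (∑ j ∈ Finset.range N, (q : ℝ≥0∞) * Q {x | q * ((j : ℝ≥0) + 1) < f x}) ≤ ∫⁻ x, f x ∂Q ∧
      ∫⁻ x, f x ∂Q ≤
        (∑ j ∈ Finset.range N, (q : ℝ≥0∞) * Q {x | q * ((j : ℝ≥0) + 1) < f x}) + q := by
  set A : ℕ → Set X := fun j => {x | q * ((j : ℝ≥0) + 1) < f x} with hA
  have hAopen : ∀ j, IsOpen (A j) := fun j => isOpen_lt continuous_const f.continuous
  have hAmeas : ∀ j, MeasurableSet (A j) := fun j => (hAopen j).measurableSet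
  set s : X → ℝ≥0∞ := fun x => ∑ j ∈ Finset.range N, (A j).indicator (fun _ => (q : ℝ≥0∞)) x
    with hs
  have hsx : ∀ x, s x = (q : ℝ≥0∞) *
      ((Finset.range N).filter (fun j : ℕ => q * ((j : ℝ≥0) + 1) < f x)).card := by
    intro x
    simp only [hs, Set.indicator_apply, hA, Set.mem_setOf_eq]
    rw [← Finset.sum_filter, Finset.sum_const, nsmul_eq_mul, mul_comm]
  have hcount_le : ∀ x, s x ≤ (f x : ℝ≥0∞) := by
    intro x
    rw [hsx x]
    exact_mod_cast counting_le (N := N) (q := q) (a := f x) (hq x)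
  have hcount_ge : ∀ x, (f x : ℝ≥0∞) ≤ s x + q := by
    intro x
    rw [hsx x]
    exact_mod_cast counting_ge hN (q := q) (a := f x) (hq x)
  have hints : ∫⁻ x, s x ∂Q = ∑ j ∈ Finset.range N, (q : ℝ≥0∞) * Q (A j) := by
    rw [hs]
    rw [lintegral_finset_sum _ (fun j _ => measurable_const.indicator (hAmeas j))]
    exact Finset.sum_congr rfl fun j _ => lintegral_indicator_const (hAmeas j) _
  constructor
  · rw [← hints]
    exact lintegral_mono hcount_le
  · calc ∫⁻ x, f x ∂Q ≤ ∫⁻ x, s x + q ∂Q := lintegral_mono hcount_ge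
      _ = ∫⁻ x, s x ∂Q + (q : ℝ≥0∞) * Q univ := by
          rw [lintegral_add_right _ measurable_const, lintegral_const]
      _ = _ := by rw [hints, measure_univ, mul_one]

end Sandwich


noncomputable section Convergence
variable {X : Type*} [MetricSpace X] [MeasurableSpace X] [BorelSpace X]
  (U : Ultrafilter (ProbabilityMeasure X))

lemma ulim_finset_sum {ι : Type*} (s : Finset ι) (g : ι → ProbabilityMeasure X → ℝ≥0∞) :
    ulim U (fun P => ∑ j ∈ s, g j P) = ∑ j ∈ s, ulim U (g j) :=
  ulim_eq (tendsto_finset_sum s fun j _ => tendsto_ulim U (g j))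

lemma ulim_const_mul (c : ℝ≥0) (g : ProbabilityMeasure X → ℝ≥0∞) :
    ulim U (fun P => (c : ℝ≥0∞) * g P) = (c : ℝ≥0∞) * ulim U g :=
  ulim_eq (ENNReal.Tendsto.const_mul (tendsto_ulim U g) (Or.inr coe_ne_top))

lemma lintegral_ulimMeasure_le [IsProbabilityMeasure (ulimMeasure U)]
    (f : X →ᵇ ℝ≥0) {M : ℝ≥0} (hfM : ∀ x, f x ≤ M) :
    ∫⁻ x, f x ∂(ulimMeasure U) ≤ ulim U (fun P => ∫⁻ x, f x ∂(P : Measure X)) := by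
  refine ENNReal.le_of_forall_pos_le_add fun ε hε _ => ?_
  set N : ℕ := max 1 ⌈(M / ε : ℝ≥0)⌉₊ with hNdef
  have hN : N ≠ 0 := by positivity
  set q : ℝ≥0 := M / N with hqdef
  have hNcast : (N : ℝ≥0) ≠ 0 := by exact_mod_cast hN
  have hNq : (N : ℝ≥0) * q = M := mul_div_cancel₀ M hNcast
  have hfNq : ∀ x, f x ≤ (N : ℝ≥0) * q := fun x => (hfM x).trans hNq.ge
  have hqε : q ≤ ε := by
    rw [hqdef, div_le_iff₀ (by positivity : (0:ℝ≥0) < N)]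
    have h1 : (M / ε : ℝ≥0) ≤ (N : ℝ≥0) := by
      calc (M / ε : ℝ≥0) ≤ (⌈(M / ε : ℝ≥0)⌉₊ : ℝ≥0) := Nat.le_ceil _
        _ ≤ (N : ℝ≥0) := by exact_mod_cast le_max_right 1 _
    calc M = (M / ε) * ε := (div_mul_cancel₀ M hε.ne').symm
      _ ≤ (N : ℝ≥0) * ε := mul_le_mul_left h1 ε
      _ = ε * N := mul_comm _ _
  set A : ℕ → Set X := fun j => {x | q * ((j : ℝ≥0) + 1) < f x} with hA
  have hAopen : ∀ j, IsOpen (A j) := fun j => isOpen_lt continuous_const f.continuous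
  have step1 : ∫⁻ x, f x ∂(ulimMeasure U) ≤
      (∑ j ∈ Finset.range N, (q : ℝ≥0∞) * (ulimMeasure U) (A j)) + q :=
    (sandwich_lintegral (ulimMeasure U) f hN hfNq).2
  have step2 : (∑ j ∈ Finset.range N, (q : ℝ≥0∞) * (ulimMeasure U) (A j)) ≤
      ∑ j ∈ Finset.range N, (q : ℝ≥0∞) * mlim U (A j) :=
    Finset.sum_le_sum fun j _ => mul_le_mul_right
      (ulimMeasure_open_le U (hAopen j)) _
  have step3 : (∑ j ∈ Finset.range N, (q : ℝ≥0∞) * mlim U (A j)) =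
      ulim U (fun P => ∑ j ∈ Finset.range N, (q : ℝ≥0∞) * (P : Measure X) (A j)) := by
    rw [ulim_finset_sum]
    exact Finset.sum_congr rfl fun j _ => (ulim_const_mul U q _).symm
  have step4 : ulim U (fun P => ∑ j ∈ Finset.range N, (q : ℝ≥0∞) * (P : Measure X) (A j)) ≤
      ulim U (fun P => ∫⁻ x, f x ∂(P : Measure X)) :=
    ulim_mono (Eventually.of_forall fun P => (sandwich_lintegral (P : Measure X) f hN hfNq).1)
  calc ∫⁻ x, f x ∂(ulimMeasure U) ≤ _ + (q : ℝ≥0∞) := step1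
    _ ≤ ulim U (fun P => ∫⁻ x, f x ∂(P : Measure X)) + (q : ℝ≥0∞) :=
        add_le_add_left ((step2.trans step3.le).trans step4) _
    _ ≤ ulim U (fun P => ∫⁻ x, f x ∂(P : Measure X)) + (ε : ℝ≥0∞) :=
        add_le_add le_rfl (ENNReal.coe_le_coe.2 hqε)

lemma tendsto_lintegral_ulimMeasure [IsProbabilityMeasure (ulimMeasure U)] (f : X →ᵇ ℝ≥0) :
    Tendsto (fun P : ProbabilityMeasure X => ∫⁻ x, f x ∂(P : Measure X)) U
      (𝓝 (∫⁻ x, f x ∂(ulimMeasure U))) := by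
  set M : ℝ≥0 := nndist f 0 with hM
  have hfM : ∀ x, f x ≤ M := fun x => NNReal.upper_bound f x
  have hgcont : Continuous fun x => M - f x := continuous_const.sub f.continuous
  have hgbdd : ∀ x y : X, dist (M - f x) (M - f y) ≤ (M : ℝ) := by
    intro x y
    rw [NNReal.dist_eq]
    rw [abs_sub_le_iff]
    constructor
    · calc ((M - f x : ℝ≥0) : ℝ) - ((M - f y : ℝ≥0) : ℝ) ≤ ((M - f x : ℝ≥0) : ℝ) := by
            simp [NNReal.coe_le_coe]
        _ ≤ (M : ℝ) := by exact_mod_cast tsub_le_self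
    · calc ((M - f y : ℝ≥0) : ℝ) - ((M - f x : ℝ≥0) : ℝ) ≤ ((M - f y : ℝ≥0) : ℝ) := by
            simp [NNReal.coe_le_coe]
        _ ≤ (M : ℝ) := by exact_mod_cast tsub_le_self
  set g : X →ᵇ ℝ≥0 := ⟨⟨fun x => M - f x, hgcont⟩, ⟨M, hgbdd⟩⟩ with hg
  have hgM : ∀ x, g x ≤ M := fun x => tsub_le_self
  have hgf : ∀ x, (g x : ℝ≥0∞) = (M : ℝ≥0∞) - (f x : ℝ≥0∞) := fun x => by
    show ((M - f x : ℝ≥0) : ℝ≥0∞) = _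
    rw [ENNReal.coe_sub]
  have hfmeas : Measurable fun x => (f x : ℝ≥0∞) :=
    f.continuous.measurable.coe_nnreal_ennreal
  have hflint : ∀ (Q : Measure X), IsProbabilityMeasure Q → ∫⁻ x, f x ∂Q ≤ (M : ℝ≥0∞) := by
    intro Q hQ
    calc ∫⁻ x, f x ∂Q ≤ ∫⁻ _, (M : ℝ≥0∞) ∂Q := lintegral_mono fun x => coe_le_coe.2 (hfM x)
      _ = M := by rw [lintegral_const, measure_univ, mul_one]
  have hgint : ∀ (Q : Measure X), IsProbabilityMeasure Q →
      ∫⁻ x, g x ∂Q = (M : ℝ≥0∞) - ∫⁻ x, f x ∂Q := by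
    intro Q hQ
    calc ∫⁻ x, g x ∂Q = ∫⁻ x, (M : ℝ≥0∞) - f x ∂Q := by
          exact lintegral_congr fun x => hgf x
      _ = ∫⁻ _, (M : ℝ≥0∞) ∂Q - ∫⁻ x, f x ∂Q := by
          refine lintegral_sub hfmeas ?_ (Eventually.of_forall fun x => coe_le_coe.2 (hfM x))
          exact ((hflint Q hQ).trans_lt coe_lt_top).ne
      _ = (M : ℝ≥0∞) - ∫⁻ x, f x ∂Q := by rw [lintegral_const, measure_univ, mul_one]
  set ℓ := ulim U (fun P : ProbabilityMeasure X => ∫⁻ x, f x ∂(P : Measure X)) with hℓ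
  have hℓM : ℓ ≤ (M : ℝ≥0∞) :=
    ulim_le_of_eventually (Eventually.of_forall fun P => hflint _ inferInstance)
  have h1 : ∫⁻ x, f x ∂(ulimMeasure U) ≤ ℓ := lintegral_ulimMeasure_le U f hfM
  have hulimg : ulim U (fun P : ProbabilityMeasure X => ∫⁻ x, g x ∂(P : Measure X)) =
      (M : ℝ≥0∞) - ℓ := by
    refine ulim_eq ?_
    have htend : Tendsto (fun P : ProbabilityMeasure X => (M : ℝ≥0∞) - ∫⁻ x, f x ∂(P : Measure X))
        U (𝓝 ((M : ℝ≥0∞) - ℓ)) :=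
      ENNReal.Tendsto.sub tendsto_const_nhds (tendsto_ulim U _) (Or.inl coe_ne_top)
    exact htend.congr fun P => (hgint _ inferInstance).symm
  have hg1 : (M : ℝ≥0∞) - ∫⁻ x, f x ∂(ulimMeasure U) ≤ (M : ℝ≥0∞) - ℓ := by
    rw [← hgint _ inferInstance, ← hulimg]
    exact lintegral_ulimMeasure_le U g hgM
  have h2 : ℓ ≤ ∫⁻ x, f x ∂(ulimMeasure U) := by
    have := tsub_le_tsub_left (α := ℝ≥0∞) h1 (M : ℝ≥0∞)
    calc ℓ = (M : ℝ≥0∞) - ((M : ℝ≥0∞) - ℓ) := (ENNReal.sub_sub_cancel coe_ne_top hℓM).symm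
      _ ≤ (M : ℝ≥0∞) - ((M : ℝ≥0∞) - ∫⁻ x, f x ∂(ulimMeasure U)) := tsub_le_tsub_left hg1 _
      _ = ∫⁻ x, f x ∂(ulimMeasure U) :=
          ENNReal.sub_sub_cancel coe_ne_top (hflint _ inferInstance)
  have : ℓ = ∫⁻ x, f x ∂(ulimMeasure U) := le_antisymm h2 h1
  rw [← this]
  exact tendsto_ulim U _

lemma isProbability_ulimMeasure
    (htight : ∀ ε : ℝ≥0∞, 0 < ε →
      ∃ K : Set X, IsCompact K ∧ ∀ᶠ P : ProbabilityMeasure X in (U : Filter (ProbabilityMeasure X)),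
        1 - ε ≤ (P : Measure X) K) :
    IsProbabilityMeasure (ulimMeasure U) := by
  constructor
  refine le_antisymm (ulimMeasure_univ_le_one U) ?_
  refine ENNReal.le_of_forall_pos_le_add fun ε hε _ => ?_
  rw [← tsub_le_iff_right]
  obtain ⟨K, hK, hKmass⟩ := htight ε (by exact_mod_cast hε)
  calc (1 : ℝ≥0∞) - ε ≤ mlim U K := le_ulim_of_eventually hKmass
    _ ≤ ulimMeasure U univ := le_ulimMeasure_of_compact U hK

/-- The master convergence theorem: an ultrafilter of probability measures satisfying a
tightness condition converges weakly to a probability measure. -/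
theorem exists_tendsto_ulim
    (htight : ∀ ε : ℝ≥0∞, 0 < ε →
      ∃ K : Set X, IsCompact K ∧ ∀ᶠ P : ProbabilityMeasure X in (U : Filter (ProbabilityMeasure X)),
        1 - ε ≤ (P : Measure X) K) :
    ∃ Phat : ProbabilityMeasure X,
      Tendsto id (U : Filter (ProbabilityMeasure X)) (𝓝 Phat) ∧
      ∀ s : Set X, IsOpen s →
        (∀ᶠ P : ProbabilityMeasure X in (U : Filter (ProbabilityMeasure X)), (P : Measure X) s = 0) →
        (Phat : Measure X) s = 0 := by
  haveI := isProbability_ulimMeasure U htight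
  refine ⟨(⟨ulimMeasure U, inferInstance⟩ : ProbabilityMeasure X), ?_, ?_⟩
  · refine ProbabilityMeasure.tendsto_iff_forall_lintegral_tendsto.mpr ?_
    intro f
    exact tendsto_lintegral_ulimMeasure U f
  · intro s hs h0
    refine le_antisymm ?_ zero_le
    refine (ulimMeasure_open_le U hs).trans ?_
    exact ulim_le_of_eventually (h0.mono fun P hP => hP.le)

end Convergence


noncomputable section Application

variable {n : ℕ}

lemma measurableSet_hplane (n : ℕ) (C : ℝ) :
    MeasurableSet {x : Fin n → ℝ | ∑ i, x i = C} := by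
  have hS : Measurable fun x : Fin n → ℝ => ∑ i, x i :=
    Finset.measurable_sum _ fun i _ => measurable_pi_apply i
  exact hS (measurableSet_singleton C)

lemma center_unique {P : Measure (Fin n → ℝ)} [IsProbabilityMeasure P] {C C' : ℝ}
    (h : P {x | ∑ i, x i = C} = 1) (h' : P {x | ∑ i, x i = C'} = 1) : C = C' := by
  by_contra hne
  have h1 : P {x : Fin n → ℝ | ∑ i, x i = C}ᶜ = 0 :=
    (prob_compl_eq_zero_iff (measurableSet_hplane n C)).2 h
  have h2 : P {x : Fin n → ℝ | ∑ i, x i = C'}ᶜ = 0 :=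
    (prob_compl_eq_zero_iff (measurableSet_hplane n C')).2 h'
  have hsub : (univ : Set (Fin n → ℝ)) ⊆
      {x : Fin n → ℝ | ∑ i, x i = C}ᶜ ∪ {x : Fin n → ℝ | ∑ i, x i = C'}ᶜ := by
    intro x _
    by_cases hx : ∑ i, x i = C
    · right
      simp only [mem_compl_iff, mem_setOf_eq]
      rw [hx]
      exact fun hcc => hne hcc
    · left
      exact hx
  have : (1 : ℝ≥0∞) ≤ 0 := by
    calc (1 : ℝ≥0∞) = P univ := (measure_univ).symm
      _ ≤ P ({x : Fin n → ℝ | ∑ i, x i = C}ᶜ ∪ {x : Fin n → ℝ | ∑ i, x i = C'}ᶜ) :=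
          measure_mono hsub
      _ ≤ P {x : Fin n → ℝ | ∑ i, x i = C}ᶜ + P {x : Fin n → ℝ | ∑ i, x i = C'}ᶜ :=
          measure_union_le _ _
      _ = 0 := by rw [h1, h2, add_zero]
  simp at this

open Classical in
/-- The unique hyperplane constant of a probability measure concentrated on a hyperplane. -/
def cFun (n : ℕ) (P : ProbabilityMeasure (Fin n → ℝ)) : ℝ :=
  if h : ∃ C : ℝ, (P : Measure (Fin n → ℝ)) {x | ∑ i, x i = C} = 1 then h.choose else 0

lemma cFun_spec {P : ProbabilityMeasure (Fin n → ℝ)}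
    (h : ∃ C : ℝ, (P : Measure (Fin n → ℝ)) {x | ∑ i, x i = C} = 1) :
    (P : Measure (Fin n → ℝ)) {x | ∑ i, x i = cFun n P} = 1 := by
  unfold cFun
  rw [dif_pos h]
  exact h.choose_spec

lemma cFun_eq {P : ProbabilityMeasure (Fin n → ℝ)} {C : ℝ}
    (h : (P : Measure (Fin n → ℝ)) {x | ∑ i, x i = C} = 1) : cFun n P = C :=
  center_unique (cFun_spec ⟨C, h⟩) h

section WithMu
variable (μ : Measure ℝ) [IsProbabilityMeasure μ]

lemma marg_meas {P : ProbabilityMeasure (Fin n → ℝ)}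
    (h : ∀ i, (P : Measure (Fin n → ℝ)).map (fun x => x i) = μ) (i : Fin n) {s : Set ℝ}
    (hs : MeasurableSet s) :
    (P : Measure (Fin n → ℝ)) ((fun x : Fin n → ℝ => x i) ⁻¹' s) = μ s := by
  rw [← h i, Measure.map_apply (measurable_pi_apply i) hs]

lemma box_compl_bound (M : ℝ) {P : ProbabilityMeasure (Fin n → ℝ)}
    (h : ∀ i, (P : Measure (Fin n → ℝ)).map (fun x => x i) = μ) :
    (P : Measure (Fin n → ℝ)) (pi univ fun _ : Fin n => Icc (-M) M)ᶜ
      ≤ n * μ (Icc (-M) M)ᶜ := by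
  have hsub : (pi univ fun _ : Fin n => Icc (-M) M)ᶜ ⊆
      ⋃ i, (fun x : Fin n → ℝ => x i) ⁻¹' (Icc (-M) M)ᶜ := by
    intro x hx
    rw [Set.mem_compl_iff, Set.mem_pi] at hx
    push_neg at hx
    obtain ⟨i, -, hi⟩ := hx
    exact mem_iUnion.mpr ⟨i, hi⟩
  calc (P : Measure (Fin n → ℝ)) (pi univ fun _ : Fin n => Icc (-M) M)ᶜ
      ≤ (P : Measure (Fin n → ℝ)) (⋃ i, (fun x : Fin n → ℝ => x i) ⁻¹' (Icc (-M) M)ᶜ) :=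
        measure_mono hsub
    _ ≤ ∑' i : Fin n, (P : Measure (Fin n → ℝ)) ((fun x : Fin n → ℝ => x i) ⁻¹' (Icc (-M) M)ᶜ) :=
        measure_iUnion_le _
    _ = ∑' _ : Fin n, μ (Icc (-M) M)ᶜ :=
        tsum_congr fun i => marg_meas μ h i measurableSet_Icc.compl
    _ = n * μ (Icc (-M) M)ᶜ := by
        rw [tsum_fintype, Finset.sum_const, Finset.card_univ, Fintype.card_fin, nsmul_eq_mul]

lemma exists_M {ε : ℝ≥0∞} (hε : 0 < ε) :
    ∃ M : ℝ, 0 < M ∧ (n : ℝ≥0∞) * μ (Icc (-M) M)ᶜ ≤ ε := by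
  rcases Nat.eq_zero_or_pos n with hn0 | hn
  · exact ⟨1, one_pos, by simp [hn0]⟩
  have hiInter : ⋂ k : ℕ, (Icc (-(k : ℝ)) (k : ℝ))ᶜ = (∅ : Set ℝ) := by
    ext y
    simp only [mem_iInter, mem_compl_iff, mem_Icc, mem_empty_iff_false, iff_false, not_forall,
      not_not]
    obtain ⟨k, hk⟩ := exists_nat_ge |y|
    exact ⟨k, abs_le.mp hk⟩
  have htends : Tendsto (fun k : ℕ => μ (Icc (-(k : ℝ)) (k : ℝ))ᶜ) atTop (𝓝 0) := by
    have ht := tendsto_measure_iInter_atTop (μ := μ)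
      (s := fun k : ℕ => (Icc (-(k : ℝ)) (k : ℝ))ᶜ)
      (fun k => measurableSet_Icc.compl.nullMeasurableSet)
      (fun k l hkl => compl_subset_compl.mpr
        (Icc_subset_Icc (by exact_mod_cast neg_le_neg (Nat.cast_le.mpr hkl)) (Nat.cast_le.mpr hkl)))
      ⟨0, measure_ne_top μ _⟩
    rwa [hiInter, measure_empty] at ht
  have hpos : 0 < ε / n := ENNReal.div_pos hε.ne' (by simp)
  have hev : ∀ᶠ k : ℕ in atTop, μ (Icc (-(k : ℝ)) (k : ℝ))ᶜ < ε / n :=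
    htends.eventually_lt_const hpos
  obtain ⟨k, hk⟩ := hev.exists
  refine ⟨(k : ℝ) + 1, by positivity, ?_⟩
  have hmono : μ (Icc (-(((k : ℝ) + 1))) ((k : ℝ) + 1))ᶜ ≤ μ (Icc (-(k : ℝ)) (k : ℝ))ᶜ :=
    measure_mono (compl_subset_compl.mpr (Icc_subset_Icc (by linarith) (by linarith)))
  calc (n : ℝ≥0∞) * μ (Icc (-(((k : ℝ) + 1))) ((k : ℝ) + 1))ᶜ
      ≤ (n : ℝ≥0∞) * (ε / n) := mul_le_mul_right (hmono.trans hk.le) _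
    _ ≤ ε := ENNReal.mul_div_le

lemma box_lower (M : ℝ) {P : ProbabilityMeasure (Fin n → ℝ)}
    (h : ∀ i, (P : Measure (Fin n → ℝ)).map (fun x => x i) = μ) :
    1 - (n : ℝ≥0∞) * μ (Icc (-M) M)ᶜ
      ≤ (P : Measure (Fin n → ℝ)) (pi univ fun _ : Fin n => Icc (-M) M) := by
  have hbox : MeasurableSet (pi univ fun _ : Fin n => Icc (-M) M) :=
    MeasurableSet.univ_pi fun _ => measurableSet_Icc
  have := prob_compl_eq_one_sub (μ := (P : Measure (Fin n → ℝ))) hbox.compl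
  rw [compl_compl] at this
  rw [this]
  exact tsub_le_tsub_left (box_compl_bound μ M h) 1

lemma center_bound (hn : 0 < n) :
    ∃ R : ℝ, 0 ≤ R ∧ ∀ P : ProbabilityMeasure (Fin n → ℝ),
      (∀ i, (P : Measure (Fin n → ℝ)).map (fun x => x i) = μ) →
      ∀ C : ℝ, (P : Measure (Fin n → ℝ)) {x | ∑ i, x i = C} = 1 → |C| ≤ R := by
  obtain ⟨M, hM0, hM⟩ := exists_M μ (by norm_num : (0 : ℝ≥0∞) < 1 / 2)
  refine ⟨n * M, by positivity, fun P hmarg C hC => ?_⟩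
  have hbox : 0 < (P : Measure (Fin n → ℝ)) (pi univ fun _ : Fin n => Icc (-M) M) := by
    have h1 := box_lower μ M hmarg
    have h2 : (n : ℝ≥0∞) * μ (Icc (-M) M)ᶜ < 1 :=
      lt_of_le_of_lt hM (by norm_num)
    calc (0 : ℝ≥0∞) < 1 - (n : ℝ≥0∞) * μ (Icc (-M) M)ᶜ := tsub_pos_iff_lt.mpr h2
      _ ≤ _ := h1
  have hne : ((pi univ fun _ : Fin n => Icc (-M) M) ∩ {x | ∑ i, x i = C}).Nonempty := by
    by_contra hcon
    rw [not_nonempty_iff_eq_empty] at hcon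
    have hsub : (pi univ fun _ : Fin n => Icc (-M) M) ⊆ {x : Fin n → ℝ | ∑ i, x i = C}ᶜ := by
      intro x hx hxC
      have hmem : x ∈ (pi univ fun _ : Fin n => Icc (-M) M) ∩ {x | ∑ i, x i = C} := ⟨hx, hxC⟩
      rw [hcon] at hmem
      exact notMem_empty x hmem
    have hle : (P : Measure (Fin n → ℝ)) (pi univ fun _ : Fin n => Icc (-M) M)
        ≤ (P : Measure (Fin n → ℝ)) {x : Fin n → ℝ | ∑ i, x i = C}ᶜ := measure_mono hsub
    rw [(prob_compl_eq_zero_iff (measurableSet_hplane n C)).2 hC] at hle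
    exact hbox.ne' (le_antisymm hle zero_le)
  obtain ⟨x, hxbox, hxC⟩ := hne
  have hxC' : ∑ i, x i = C := hxC
  rw [← hxC']
  calc |∑ i, x i| ≤ ∑ i, |x i| := Finset.abs_sum_le_sum_abs _ _
    _ ≤ ∑ _i : Fin n, M := Finset.sum_le_sum fun i _ => abs_le.2
        ⟨(hxbox i (mem_univ i)).1, (hxbox i (mem_univ i)).2⟩
    _ = n * M := by rw [Finset.sum_const, Finset.card_univ, Fintype.card_fin, nsmul_eq_mul]

end WithMu
end Application


theorem stmt7 (n : ℕ) (hn : 0 < n) (μ : Measure ℝ) [IsProbabilityMeasure μ]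
    (hCM : ∃ c, IsCompletelyMixable n μ c) :
    IsCompact {P : ProbabilityMeasure (Fin n → ℝ) |
        (∀ i, (P : Measure (Fin n → ℝ)).map (fun x => x i) = μ) ∧
        ∃ C : ℝ, (P : Measure (Fin n → ℝ)) {x | ∑ i, x i = C} = 1} ∧
    (∃ φ : {P : ProbabilityMeasure (Fin n → ℝ) //
        (∀ i, (P : Measure (Fin n → ℝ)).map (fun x => x i) = μ) ∧
        ∃ C : ℝ, (P : Measure (Fin n → ℝ)) {x | ∑ i, x i = C} = 1} → ℝ,
      Continuous φ ∧
      ∀ P, (P.1 : Measure (Fin n → ℝ)) {x | ∑ i, x i = n * φ P} = 1) ∧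
    {c : ℝ | IsCompletelyMixable n μ c}.Nonempty ∧
    IsCompact {c : ℝ | IsCompletelyMixable n μ c} := by
  
  have hnR : (n : ℝ) ≠ 0 := Nat.cast_ne_zero.mpr hn.ne'
  set Λ : Set (ProbabilityMeasure (Fin n → ℝ)) :=
    {P : ProbabilityMeasure (Fin n → ℝ) |
      (∀ i, (P : Measure (Fin n → ℝ)).map (fun x => x i) = μ) ∧
      ∃ C : ℝ, (P : Measure (Fin n → ℝ)) {x | ∑ i, x i = C} = 1} with hΛdef
  obtain ⟨R, hR0, hRb⟩ := center_bound μ hn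
  have hcmem : ∀ P : ProbabilityMeasure (Fin n → ℝ), P ∈ Λ → cFun n P ∈ Icc (-R) R := by
    intro P hP
    have := hRb P hP.1 (cFun n P) (cFun_spec hP.2)
    exact abs_le.mp this
  have hsumcont : Continuous fun x : Fin n → ℝ => ∑ i, x i :=
    continuous_finset_sum Finset.univ fun i _ => continuous_apply i
  have hdecomp : ∀ C : ℝ, {x : Fin n → ℝ | ∑ i, x i = C}ᶜ
      = ⋃ k : ℕ, {x : Fin n → ℝ | 1 / ((k : ℝ) + 1) < |∑ i, x i - C|} := by
    intro C
    ext x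
    simp only [mem_compl_iff, mem_setOf_eq, mem_iUnion]
    constructor
    · intro hx
      have hpos : 0 < |∑ i, x i - C| := abs_pos.mpr (sub_ne_zero.mpr hx)
      obtain ⟨k, hk⟩ := exists_nat_one_div_lt hpos
      exact ⟨k, by exact_mod_cast hk⟩
    · rintro ⟨k, hk⟩ hx
      rw [hx, sub_self, abs_zero] at hk
      have : (0 : ℝ) < 1 / ((k : ℝ) + 1) := by positivity
      linarith
  have hopenk : ∀ (C : ℝ) (k : ℕ),
      IsOpen {x : Fin n → ℝ | 1 / ((k : ℝ) + 1) < |∑ i, x i - C|} := fun C k =>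
    isOpen_lt continuous_const ((hsumcont.sub continuous_const).abs)
  -- Compactness of Λ
  have hcomp : IsCompact Λ := by
    rw [isCompact_iff_ultrafilter_le_nhds]
    intro U hU
    rw [Filter.le_principal_iff] at hU
    have hUe : ∀ᶠ P in (U : Filter (ProbabilityMeasure (Fin n → ℝ))), P ∈ Λ := by
      rwa [Filter.eventually_iff, Set.setOf_mem_eq]
    have htight : ∀ ε : ℝ≥0∞, 0 < ε → ∃ K : Set (Fin n → ℝ), IsCompact K ∧
        ∀ᶠ P : ProbabilityMeasure (Fin n → ℝ) in (U : Filter (ProbabilityMeasure (Fin n → ℝ))),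
          1 - ε ≤ (P : Measure (Fin n → ℝ)) K := by
      intro ε hε
      obtain ⟨M, hM0, hM⟩ := exists_M μ hε
      refine ⟨pi univ fun _ : Fin n => Icc (-M) M,
        isCompact_univ_pi fun _ => isCompact_Icc, ?_⟩
      filter_upwards [hUe] with P hP
      calc (1 : ℝ≥0∞) - ε ≤ 1 - (n : ℝ≥0∞) * μ (Icc (-M) M)ᶜ := tsub_le_tsub_left hM 1
        _ ≤ _ := box_lower μ M hP.1
    obtain ⟨Phat, htend, hzero⟩ := exists_tendsto_ulim U htight
    have hUle : (U : Filter (ProbabilityMeasure (Fin n → ℝ))) ≤ 𝓝 Phat := by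
      rwa [Filter.tendsto_id'] at htend
    refine ⟨Phat, ?_, hUle⟩
    constructor
    · -- marginals
      intro i
      haveI : IsProbabilityMeasure ((Phat : Measure (Fin n → ℝ)).map (fun x => x i)) :=
        Measure.isProbabilityMeasure_map (measurable_pi_apply i).aemeasurable
      refine ext_of_forall_lintegral_eq_of_IsFiniteMeasure fun f => ?_
      set F : (Fin n → ℝ) →ᵇ ℝ≥0 :=
        f.compContinuous ⟨fun x : Fin n → ℝ => x i, continuous_apply i⟩ with hF
      have hfmeas : Measurable fun y : ℝ => (f y : ℝ≥0∞) :=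
        f.continuous.measurable.coe_nnreal_ennreal
      have hmapint : ∀ Q : ProbabilityMeasure (Fin n → ℝ),
          ∫⁻ y, f y ∂((Q : Measure (Fin n → ℝ)).map (fun x => x i))
            = ∫⁻ x, F x ∂(Q : Measure (Fin n → ℝ)) := by
        intro Q
        rw [lintegral_map hfmeas (measurable_pi_apply i)]
        rfl
      have hconv := ProbabilityMeasure.tendsto_iff_forall_lintegral_tendsto.mp htend F
      have hconst : ∀ᶠ P : ProbabilityMeasure (Fin n → ℝ) in
          (U : Filter (ProbabilityMeasure (Fin n → ℝ))),
          ∫⁻ x, F x ∂((id P : ProbabilityMeasure (Fin n → ℝ)) : Measure (Fin n → ℝ))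
            = ∫⁻ y, f y ∂μ := by
        filter_upwards [hUe] with P hP
        rw [show ((id P : ProbabilityMeasure (Fin n → ℝ)) : Measure (Fin n → ℝ))
          = (P : Measure (Fin n → ℝ)) from rfl, ← hmapint P, hP.1 i]
      have hlim : ∫⁻ x, F x ∂(Phat : Measure (Fin n → ℝ)) = ∫⁻ y, f y ∂μ :=
        tendsto_nhds_unique (hconv.congr' hconst) tendsto_const_nhds
      rw [hmapint Phat, hlim]
    · -- hyperplane
      have hmemb : ↑(U.map (cFun n)) ≤ 𝓟 (Icc (-R) R) := by
        rw [Filter.le_principal_iff]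
        exact Filter.mem_map.mpr (Filter.mem_of_superset hU fun P hP => hcmem P hP)
      obtain ⟨C₀, hC₀mem, hC₀le⟩ := isCompact_Icc.ultrafilter_le_nhds (U.map (cFun n)) hmemb
      have htendC : Tendsto (cFun n) (U : Filter (ProbabilityMeasure (Fin n → ℝ))) (𝓝 C₀) := by
        have h := hC₀le
        rwa [Ultrafilter.coe_map] at h
      refine ⟨C₀, ?_⟩
      rw [← prob_compl_eq_zero_iff (measurableSet_hplane n C₀), hdecomp C₀]
      refine measure_iUnion_null fun k => ?_
      refine hzero _ (hopenk C₀ k) ?_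
      have hball : ∀ᶠ P in (U : Filter (ProbabilityMeasure (Fin n → ℝ))),
          |cFun n P - C₀| < 1 / ((k : ℝ) + 1) := by
        have := Metric.tendsto_nhds.mp htendC (1 / ((k : ℝ) + 1)) (by positivity)
        simpa [Real.dist_eq] using this
      filter_upwards [hUe, hball] with P hP hb
      refine measure_mono_null ?_
        ((prob_compl_eq_zero_iff (measurableSet_hplane n (cFun n P))).2 (cFun_spec hP.2))
      intro x hx hxc
      have hxc' : ∑ i, x i = cFun n P := hxc
      have hx' : 1 / ((k : ℝ) + 1) < |∑ i, x i - C₀| := hx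
      rw [hxc'] at hx'
      exact absurd (hx'.trans hb) (lt_irrefl _)
  -- continuity of the center function on the subtype
  have hφcont : Continuous fun P : {P : ProbabilityMeasure (Fin n → ℝ) //
      (∀ i, (P : Measure (Fin n → ℝ)).map (fun x => x i) = μ) ∧
      ∃ C : ℝ, (P : Measure (Fin n → ℝ)) {x | ∑ i, x i = C} = 1} => cFun n P.1 / n := by
    refine Continuous.div_const ?_ _
    have hcomp_eq : (fun P : {P : ProbabilityMeasure (Fin n → ℝ) //
        (∀ i, (P : Measure (Fin n → ℝ)).map (fun x => x i) = μ) ∧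
        ∃ C : ℝ, (P : Measure (Fin n → ℝ)) {x | ∑ i, x i = C} = 1} => cFun n P.1)
        = (cFun n) ∘ Subtype.val := rfl
    rw [hcomp_eq, continuous_iff_continuousAt]
    intro P₀
    rw [ContinuousAt, tendsto_iff_ultrafilter]
    intro V hV
    have hmemb : ↑(V.map ((cFun n) ∘ Subtype.val)) ≤ 𝓟 (Icc (-R) R) := by
      rw [Filter.le_principal_iff]
      exact Filter.mem_map.mpr (Filter.univ_mem' fun Q => hcmem Q.1 Q.2)
    obtain ⟨y, hymem, hyle⟩ := isCompact_Icc.ultrafilter_le_nhds _ hmemb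
    have htendy := hyle
    rw [Ultrafilter.coe_map] at htendy
    have hPV := (Continuous.tendsto continuous_subtype_val P₀).comp (Filter.tendsto_id'.mpr hV)
    have hy : (P₀.1 : Measure (Fin n → ℝ)) {x | ∑ i, x i = y} = 1 := by
      rw [← prob_compl_eq_zero_iff (measurableSet_hplane n y), hdecomp y]
      refine measure_iUnion_null fun k => ?_
      have hlim := ProbabilityMeasure.le_liminf_measure_open_of_tendsto hPV (hopenk y k)
      have hball : ∀ᶠ Q : {P : ProbabilityMeasure (Fin n → ℝ) //
          (∀ i, (P : Measure (Fin n → ℝ)).map (fun x => x i) = μ) ∧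
          ∃ C : ℝ, (P : Measure (Fin n → ℝ)) {x | ∑ i, x i = C} = 1} in ↑V, |cFun n Q.1 - y| < 1 / ((k : ℝ) + 1) := by
        have := Metric.tendsto_nhds.mp htendy (1 / ((k : ℝ) + 1)) (by positivity)
        simpa [Real.dist_eq, Function.comp] using this
      have hev : ∀ᶠ Q : {P : ProbabilityMeasure (Fin n → ℝ) //
          (∀ i, (P : Measure (Fin n → ℝ)).map (fun x => x i) = μ) ∧
          ∃ C : ℝ, (P : Measure (Fin n → ℝ)) {x | ∑ i, x i = C} = 1} in ↑V,
          ((Q.1 : ProbabilityMeasure (Fin n → ℝ)) : Measure (Fin n → ℝ))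
            {x | 1 / ((k : ℝ) + 1) < |∑ i, x i - y|} = 0 := by
        filter_upwards [hball] with Q hb
        refine measure_mono_null ?_
          ((prob_compl_eq_zero_iff (measurableSet_hplane n (cFun n Q.1))).2 (cFun_spec Q.2.2))
        intro x hx hxc
        have hxc' : ∑ i, x i = cFun n Q.1 := hxc
        have hx' : 1 / ((k : ℝ) + 1) < |∑ i, x i - y| := hx
        rw [hxc'] at hx'
        exact absurd (hx'.trans hb) (lt_irrefl _)
      refine le_antisymm (hlim.trans ?_) zero_le
      refine Filter.liminf_le_of_frequently_le ?_
      exact ((hev.mono fun Q hQ => hQ.le).frequently)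
    have hyeq : cFun n P₀.1 = y := cFun_eq hy
    rw [show ((cFun n) ∘ Subtype.val) P₀ = cFun n P₀.1 from rfl, hyeq]
    exact htendy
  refine ⟨hcomp, ⟨fun P => cFun n P.1 / n, hφcont, ?_⟩, hCM, ?_⟩
  · intro P
    have hcc : (n : ℝ) * (cFun n P.1 / n) = cFun n P.1 := by field_simp
    rw [hcc]
    exact cFun_spec P.2.2
  · have himg : {c : ℝ | IsCompletelyMixable n μ c} =
        range (fun P : {P : ProbabilityMeasure (Fin n → ℝ) //
          (∀ i, (P : Measure (Fin n → ℝ)).map (fun x => x i) = μ) ∧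
          ∃ C : ℝ, (P : Measure (Fin n → ℝ)) {x | ∑ i, x i = C} = 1} => cFun n P.1 / n) := by
      ext c
      constructor
      · rintro ⟨P, hPprob, hPmarg, hPsum⟩
        haveI := hPprob
        refine ⟨⟨⟨P, hPprob⟩, ⟨hPmarg, ⟨(n : ℝ) * c, hPsum⟩⟩⟩, ?_⟩
        show cFun n (⟨P, hPprob⟩ : ProbabilityMeasure (Fin n → ℝ)) / n = c
        rw [cFun_eq (P := (⟨P, hPprob⟩ : ProbabilityMeasure (Fin n → ℝ))) hPsum]
        field_simp
      · rintro ⟨P, rfl⟩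
        refine ⟨(P.1 : Measure (Fin n → ℝ)), inferInstance, P.2.1, ?_⟩
        have hcc : (n : ℝ) * (cFun n P.1 / n) = cFun n P.1 := by field_simp
        show (P.1 : Measure (Fin n → ℝ)) {x | ∑ i, x i = (n : ℝ) * (cFun n P.1 / n)} = 1
        rw [hcc]
        exact cFun_spec P.2.2
    rw [himg, ← image_univ]
    haveI : CompactSpace {P : ProbabilityMeasure (Fin n → ℝ) //
        (∀ i, (P : Measure (Fin n → ℝ)).map (fun x => x i) = μ) ∧
        ∃ C : ℝ, (P : Measure (Fin n → ℝ)) {x | ∑ i, x i = C} = 1} :=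
      isCompact_iff_compactSpace.mp hcomp
    exact isCompact_univ.image hφcont
end

section
/- If (μ₁,…,μₙ) is a jointly mixable n-tuple of Borel probability measures on ℝ and each μᵢ is discrete (i.e., supported on a countable set), then the set of centers of (μ₁,…,μₙ) is finite. -/
open MeasureTheory ENNReal

/-- A discrete probability measure on ℝ is mostly carried by a finite set. -/
lemma exists_finset_compl_lt (μ : Measure ℝ) (hμ : IsProbabilityMeasure μ)
    (s : Set ℝ) (hs : s.Countable) (h0 : μ sᶜ = 0) {δ : ℝ≥0∞} (hδ : 0 < δ) :
    ∃ F : Finset ℝ, μ (↑F)ᶜ < δ := by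
  rcases s.eq_empty_or_nonempty with he | hne
  · exfalso
    rw [he, Set.compl_empty, measure_univ] at h0
    exact one_ne_zero h0
  obtain ⟨f, hf⟩ := Set.Countable.exists_eq_range hs hne
  set H : ℕ → Set ℝ := fun k => (↑(Finset.image f (Finset.range k)))ᶜ with hH
  have hanti : Antitone H := by
    intro a b hab
    apply Set.compl_subset_compl.2
    intro x hx
    simp only [Finset.coe_image, Set.mem_image, Finset.mem_coe, Finset.mem_range] at hx ⊢
    obtain ⟨k, hk, hkx⟩ := hx
    exact ⟨k, lt_of_lt_of_le hk hab, hkx⟩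
  have hInter : (⋂ k, H k) = (Set.range f)ᶜ := by
    ext x
    constructor
    · intro h hx
      obtain ⟨k, hk⟩ := hx
      have h2 := Set.mem_iInter.1 h (k + 1)
      apply h2
      simp only [Finset.coe_image, Set.mem_image, Finset.mem_coe, Finset.mem_range]
      exact ⟨k, Nat.lt_succ_self k, hk⟩
    · intro hx
      refine Set.mem_iInter.2 fun k hc => ?_
      simp only [Finset.coe_image, Set.mem_image, Finset.mem_coe, Finset.mem_range] at hc
      obtain ⟨j, _, hj⟩ := hc
      exact hx ⟨j, hj⟩
  have hzero : μ (⋂ k, H k) = 0 := by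
    rw [hInter, ← hf]
    exact h0
  have htend : Filter.Tendsto (fun k => μ (H k)) Filter.atTop (nhds (μ (⋂ k, H k))) := by
    apply tendsto_measure_iInter_atTop (fun k => (Finset.measurableSet _).compl) hanti
    exact ⟨0, (measure_lt_top μ _).ne⟩
  rw [hzero] at htend
  have := htend.eventually (gt_mem_nhds hδ)
  obtain ⟨k, hk⟩ := this.exists
  exact ⟨Finset.image f (Finset.range k), hk⟩

theorem stmt8 (n : ℕ) (μ : Fin n → Measure ℝ) (hprob : ∀ i, IsProbabilityMeasure (μ i))
    (hdisc : ∀ i, ∃ s : Set ℝ, s.Countable ∧ μ i sᶜ = 0)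
    (hJM : ∃ C, IsJointMix n μ C) :
    {C : ℝ | IsJointMix n μ C}.Finite := by
  classical
  set δ : ℝ≥0∞ := ((n : ℝ≥0∞) + 1)⁻¹ with hδdef
  have hδpos : 0 < δ := by
    apply ENNReal.inv_pos.2
    exact (ENNReal.add_lt_top.2 ⟨ENNReal.natCast_lt_top n, ENNReal.one_lt_top⟩).ne
  have hF : ∀ i, ∃ F : Finset ℝ, μ i (↑F)ᶜ < δ := by
    intro i
    obtain ⟨s, hs, h0⟩ := hdisc i
    exact exists_finset_compl_lt (μ i) (hprob i) s hs h0 hδpos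
  choose F hFlt using hF
  set T : Finset ℝ := Finset.image (fun y : Fin n → ℝ => ∑ i, y i) (Fintype.piFinset F) with hT
  apply Set.Finite.subset T.finite_toSet
  intro C hC
  obtain ⟨P, hP, hmarg, hsum⟩ := hC
  set bad : Set (Fin n → ℝ) := ⋃ i, (fun x : Fin n → ℝ => x i) ⁻¹' (↑(F i))ᶜ with hbad
  have hbadlt : P bad < 1 := by
    have h1 : P bad ≤ ∑ i, P ((fun x : Fin n → ℝ => x i) ⁻¹' (↑(F i))ᶜ) :=
      measure_iUnion_fintype_le P _
    have h2 : ∀ i, P ((fun x : Fin n → ℝ => x i) ⁻¹' (↑(F i))ᶜ) = μ i (↑(F i))ᶜ := by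
      intro i
      rw [← hmarg i, Measure.map_apply (measurable_pi_apply i) (Finset.measurableSet _).compl]
    calc P bad ≤ ∑ i, P ((fun x : Fin n → ℝ => x i) ⁻¹' (↑(F i))ᶜ) := h1
      _ ≤ ∑ _i : Fin n, δ := Finset.sum_le_sum (fun i _ => by rw [h2 i]; exact (hFlt i).le)
      _ = (n : ℝ≥0∞) * δ := by simp [mul_comm]
      _ < 1 := by
        rw [hδdef, ← div_eq_mul_inv]
        rw [ENNReal.div_lt_iff (Or.inl (by simp)) (Or.inl (by simp))]
        simpa using ENNReal.lt_add_right (ENNReal.natCast_lt_top n).ne one_ne_zero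
  have hex : ∃ x : Fin n → ℝ, (∑ i, x i) = C ∧ ∀ i, x i ∈ F i := by
    by_contra h
    push_neg at h
    have hsub : {x : Fin n → ℝ | ∑ i, x i = C} ⊆ bad := by
      intro x hx
      obtain ⟨i, hi⟩ := h x hx
      exact Set.mem_iUnion.2 ⟨i, hi⟩
    have hmono : P {x : Fin n → ℝ | ∑ i, x i = C} ≤ P bad := measure_mono hsub
    rw [hsum] at hmono
    exact absurd (lt_of_le_of_lt hmono hbadlt) (lt_irrefl 1)
  obtain ⟨x, hxsum, hxmem⟩ := hex
  simp only [hT, Finset.coe_image, Set.mem_image, Finset.mem_coe]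
  exact ⟨x, Fintype.mem_piFinset.2 hxmem, hxsum⟩
end

section
/- Suppose the n-tuple (μ₁,…,μₙ) of Borel probability measures on ℝ is jointly mixable with center C. Then for any β₁,…,βₙ ∈ (0,1) with β := β₁ + ⋯ + βₙ < 1, the following inequalities hold: Σᵢ R_{[βᵢ, 1−β+βᵢ]}(μᵢ) ≤ C ≤ Σᵢ R_{[β−βᵢ, 1−βᵢ]}(μᵢ). -/
open MeasureTheory ENNReal

/-- The quantile function of a probability measure on ℝ. -/
noncomputable def quantile (μ : Measure ℝ) (t : ℝ) : ℝ :=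
  sInf {x : ℝ | t ≤ (μ (Set.Iic x)).toReal}

/-- The average quantile functional `R_{[a,b]}(μ)`. -/
noncomputable def avgQuantile (μ : Measure ℝ) (a b : ℝ) : ℝ :=
  (b - a)⁻¹ * ∫ t in a..b, quantile μ t

open Set Filter

noncomputable def jmF {m : MeasurableSpace ℝ} (μ : MeasureTheory.Measure ℝ) (x : ℝ) : ℝ := (μ (Set.Iic x)).toReal

@[simp] lemma jmF_def {m : MeasurableSpace ℝ} (μ : MeasureTheory.Measure ℝ) (x : ℝ) : jmF μ x = (μ (Set.Iic x)).toReal := rfl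

open MeasureTheory ENNReal Set Filter

section QuantileLemmas
variable {μ : Measure ℝ} [IsProbabilityMeasure μ]



lemma q_bddBelow {t : ℝ} (ht : 0 < t) : BddBelow {x : ℝ | t ≤ jmF μ x} := by
  have h0 : Tendsto (fun x : ℝ => μ (Set.Iic x)) atBot (nhds (μ (⋂ x : ℝ, Set.Iic x))) := by
    apply tendsto_measure_iInter_atBot (fun x => (measurableSet_Iic).nullMeasurableSet)
      (fun a b hab => Set.Iic_subset_Iic.2 hab) ⟨0, measure_ne_top μ _⟩
  have h1 : (⋂ x : ℝ, Set.Iic x) = ∅ := by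
    ext y; simp only [Set.mem_iInter, Set.mem_Iic, Set.mem_empty_iff_false, iff_false, not_forall]
    exact ⟨y - 1, by linarith⟩
  rw [h1, measure_empty] at h0
  have h2 : Tendsto (fun x : ℝ => jmF μ x) atBot (nhds 0) := by
    simpa [Function.comp_def] using (ENNReal.tendsto_toReal (by simp)).comp h0
  have h3 : ∀ᶠ x in atBot, jmF μ x < t := h2.eventually_lt_const ht
  obtain ⟨x₀, hx₀⟩ := (Filter.eventually_atBot).1 h3
  exact ⟨x₀, fun x hx => by by_contra h; push_neg at h; exact absurd (hx₀ x h.le) (not_lt.2 hx)⟩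

lemma q_nonempty {t : ℝ} (ht : t < 1) : {x : ℝ | t ≤ jmF μ x}.Nonempty := by
  have h0 : Tendsto (fun x : ℝ => μ (Set.Iic x)) atTop (nhds (μ Set.univ)) :=
    tendsto_measure_Iic_atTop μ
  rw [measure_univ] at h0
  have h2 : Tendsto (fun x : ℝ => jmF μ x) atTop (nhds 1) := by
    have := (ENNReal.tendsto_toReal (by simp : (1:ℝ≥0∞) ≠ ⊤)).comp h0
    simpa [Function.comp_def] using this
  have h3 : ∀ᶠ x in atTop, t < jmF μ x := h2.eventually_const_lt ht
  obtain ⟨x₀, hx₀⟩ := (Filter.eventually_atTop).1 h3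
  exact ⟨x₀, (hx₀ x₀ le_rfl).le⟩

lemma q_mono {s t : ℝ} (hs : 0 < s) (ht : t < 1) (hst : s ≤ t) :
    quantile μ s ≤ quantile μ t :=
  csInf_le_csInf (q_bddBelow hs) (q_nonempty ht) (fun x hx => le_trans hst hx)

lemma q_le_of_le {t x : ℝ} (ht : 0 < t) (h : t ≤ jmF μ x) : quantile μ t ≤ x :=
  csInf_le (q_bddBelow ht) h

lemma le_F_quantile {t : ℝ} (ht : 0 < t) (ht1 : t < 1) : t ≤ jmF μ (quantile μ t) := by
  have key : ∀ ε > 0, t ≤ jmF μ (quantile μ t + ε) := by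
    intro ε hε
    obtain ⟨x, hx, hlt⟩ := (csInf_lt_iff (q_bddBelow ht) (q_nonempty ht1)).1
      (lt_add_of_pos_right (quantile μ t) hε)
    exact le_trans hx (ENNReal.toReal_mono (measure_ne_top μ _)
      (measure_mono (Set.Iic_subset_Iic.2 hlt.le)))
  -- continuity from above
  have h0 : Tendsto (fun n : ℕ => μ (Set.Iic (quantile μ t + 1/(n+1)))) atTop
      (nhds (μ (⋂ n : ℕ, Set.Iic (quantile μ t + 1/(n+1))))) := by
    apply tendsto_measure_iInter_atTop (fun n => measurableSet_Iic.nullMeasurableSet)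
    · intro a b hab
      apply Set.Iic_subset_Iic.2
      have : (1:ℝ)/(b+1) ≤ 1/(a+1) := by
        apply one_div_le_one_div_of_le (by positivity) (by exact_mod_cast Nat.add_le_add_right hab 1)
      linarith
    · exact ⟨0, measure_ne_top μ _⟩
  have hiInter : (⋂ n : ℕ, Set.Iic (quantile μ t + 1/(n+1))) = Set.Iic (quantile μ t) := by
    ext y
    simp only [Set.mem_iInter, Set.mem_Iic]
    constructor
    · intro h
      by_contra hy
      push_neg at hy
      obtain ⟨n, hn⟩ := exists_nat_one_div_lt (by linarith : (0:ℝ) < y - quantile μ t)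
      exact absurd (h n) (by push_neg; linarith)
    · intro h n
      have : (0:ℝ) < 1/(n+1) := by positivity
      linarith
  rw [hiInter] at h0
  have hge : ENNReal.ofReal t ≤ μ (Set.Iic (quantile μ t)) := by
    apply ge_of_tendsto h0
    filter_upwards with n
    have := key (1/(n+1)) (by positivity)
    rw [← ENNReal.ofReal_toReal (measure_ne_top μ _)]
    exact ENNReal.ofReal_le_ofReal this
  calc t = (ENNReal.ofReal t).toReal := by rw [ENNReal.toReal_ofReal ht.le]
  _ ≤ jmF μ (quantile μ t) := ENNReal.toReal_mono (measure_ne_top μ _) hge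

lemma Iio_quantile_le {t : ℝ} (ht : 0 < t) : (μ (Set.Iio (quantile μ t))).toReal ≤ t := by
  have h0 : Tendsto (fun n : ℕ => μ (Set.Iic (quantile μ t - 1/(n+1)))) atTop
      (nhds (μ (⋃ n : ℕ, Set.Iic (quantile μ t - 1/(n+1))))) := by
    apply tendsto_measure_iUnion_atTop
    intro a b hab
    apply Set.Iic_subset_Iic.2
    have : (1:ℝ)/(b+1) ≤ 1/(a+1) := by
      apply one_div_le_one_div_of_le (by positivity) (by exact_mod_cast Nat.add_le_add_right hab 1)
    linarith
  have hiUnion : (⋃ n : ℕ, Set.Iic (quantile μ t - 1/(n+1))) = Set.Iio (quantile μ t) := by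
    ext y
    simp only [Set.mem_iUnion, Set.mem_Iic, Set.mem_Iio]
    constructor
    · rintro ⟨n, hn⟩
      have : (0:ℝ) < 1/(n+1) := by positivity
      linarith
    · intro h
      obtain ⟨n, hn⟩ := exists_nat_one_div_lt (by linarith : (0:ℝ) < quantile μ t - y)
      exact ⟨n, by linarith⟩
  rw [hiUnion] at h0
  have hle : μ (Set.Iio (quantile μ t)) ≤ ENNReal.ofReal t := by
    apply le_of_tendsto h0
    filter_upwards with n
    have hx : quantile μ t - 1/(n+1) ∉ {x : ℝ | t ≤ jmF μ x} := by
      intro hmem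
      have h5 : quantile μ t ≤ quantile μ t - 1/(n+1) := csInf_le (q_bddBelow (μ := μ) ht) hmem
      have hpos : (0:ℝ) < 1/(n+1) := by positivity
      linarith
    simp only [Set.mem_setOf_eq, not_le] at hx
    calc μ (Set.Iic (quantile μ t - 1/(n+1)))
        = ENNReal.ofReal (jmF μ (quantile μ t - 1/(n+1))) := by
            rw [jmF_def, ENNReal.ofReal_toReal (measure_ne_top μ _)]
      _ ≤ ENNReal.ofReal t := ENNReal.ofReal_le_ofReal hx.le
  calc (μ (Set.Iio (quantile μ t))).toReal ≤ (ENNReal.ofReal t).toReal :=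
        ENNReal.toReal_mono (by simp) hle
    _ = t := ENNReal.toReal_ofReal ht.le

lemma q_lt_imp {t y : ℝ} (ht : 0 < t) (ht1 : t < 1) (h : quantile μ t < y) :
    t ≤ (μ (Set.Iio y)).toReal := by
  obtain ⟨x, hx, hlt⟩ := (csInf_lt_iff (q_bddBelow ht) (q_nonempty ht1)).1 h
  exact le_trans hx (ENNReal.toReal_mono (measure_ne_top μ _)
    (measure_mono (fun z hz => lt_of_le_of_lt hz hlt)))

end QuantileLemmas

section Meas
variable {μ : Measure ℝ} [IsProbabilityMeasure μ]

lemma quantile_aemeasurable {a b : ℝ} (ha : 0 ≤ a) (hb : b ≤ 1) :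
    AEMeasurable (quantile μ) (volume.restrict (Set.Ioc a b)) := by
  classical
  set S : Set ℝ := Set.Ioc a b ∩ Set.Iio 1 with hS
  have hSmeas : MeasurableSet S := measurableSet_Ioc.inter measurableSet_Iio
  set g : ℝ → ℝ := fun t => if t ∈ S then quantile μ t else 0 with hg
  have hgmeas : Measurable g := by
    apply measurable_of_Iic
    intro c
    have hset : g ⁻¹' Set.Iic c
        = {t ∈ S | quantile μ t ≤ c} ∪ (if (0:ℝ) ≤ c then Sᶜ else ∅) := by
      ext t
      by_cases htS : t ∈ S <;> by_cases hc : (0:ℝ) ≤ c <;>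
        simp [hg, htS, hc, Set.mem_preimage, Set.mem_Iic]
    rw [hset]
    apply MeasurableSet.union
    · have : OrdConnected {t ∈ S | quantile μ t ≤ c} := by
        constructor
        rintro t₁ ⟨hS1, hq1⟩ t₂ ⟨hS2, hq2⟩ t ⟨h1, h2⟩
        have htS : t ∈ S := ⟨⟨lt_of_lt_of_le hS1.1.1 h1, le_trans h2 hS2.1.2⟩,
          lt_of_le_of_lt h2 hS2.2⟩
        refine ⟨htS, le_trans ?_ hq2⟩
        exact q_mono (lt_of_le_of_lt ha htS.1.1) hS2.2 h2
      exact this.measurableSet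
    · split <;> simp [hSmeas, hSmeas.compl]
  refine ⟨g, hgmeas, ?_⟩
  rw [Filter.EventuallyEq, ae_restrict_iff' measurableSet_Ioc]
  have : ∀ᵐ t : ℝ, t ≠ 1 := by
    have h1 : {a : ℝ | ¬ a ≠ 1} = {1} := by ext t; simp
    rw [ae_iff, h1]
    exact Real.volume_singleton
  filter_upwards [this] with t ht1 htmem
  have : t ∈ S := ⟨htmem, lt_of_le_of_ne (le_trans htmem.2 hb) ht1⟩
  simp [hg, this]

end Meas

section Sweep
variable {α : Type*} [MeasurableSpace α] (P : Measure α) [IsProbabilityMeasure P]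

noncomputable def unif : Measure ℝ := volume.restrict (Set.Icc 0 1)

instance : IsProbabilityMeasure (unif) := by
  constructor
  rw [unif, Measure.restrict_apply_univ, Real.volume_Icc]
  norm_num

lemma unif_Iic (r : ℝ) (h0 : 0 ≤ r) (h1 : r ≤ 1) : unif (Set.Iic r) = ENNReal.ofReal r := by
  rw [unif, Measure.restrict_apply measurableSet_Iic]
  have : Set.Iic r ∩ Set.Icc 0 1 = Set.Icc 0 r := by
    ext x; simp only [Set.mem_inter_iff, Set.mem_Iic, Set.mem_Icc]
    constructor
    · rintro ⟨h, h2, h3⟩; exact ⟨h2, h⟩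
    · rintro ⟨h2, h⟩; exact ⟨h, h2, le_trans h h1⟩
  rw [this, Real.volume_Icc, sub_zero]

lemma map_snd_prod_unif : (P.prod unif).map Prod.snd = unif := by
  rw [Measure.map_snd_prod, measure_univ, one_smul]

lemma sweep (E : Set (α × ℝ)) (hE : MeasurableSet E) (m : ℝ) (hm0 : 0 ≤ m)
    (hmE : ENNReal.ofReal m ≤ (P.prod unif) E) :
    ∃ D : Set (α × ℝ), MeasurableSet D ∧ D ⊆ E ∧ (P.prod unif) D = ENNReal.ofReal m := by
  set ρ : Measure (α × ℝ) := P.prod unif with hρ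
  have hfin : ∀ s, ρ s ≠ ⊤ := fun s => measure_ne_top ρ s
  have hsnd : ∀ s : Set ℝ, MeasurableSet s → ρ (Prod.snd ⁻¹' s) = unif s := by
    intro s hs
    rw [← Measure.map_apply measurable_snd hs, map_snd_prod_unif]
  set h : ℝ → ℝ := fun r => (ρ (E ∩ (Prod.snd ⁻¹' Set.Iic r))).toReal with hh
  have hmono : Monotone h := by
    intro r r' hrr'
    exact ENNReal.toReal_mono (hfin _) (measure_mono (Set.inter_subset_inter_right _
      (Set.preimage_mono (Set.Iic_subset_Iic.2 hrr'))))
  have hlip : ∀ r r', r ≤ r' → h r' - h r ≤ r' - r := by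
    intro r r' hrr'
    have hsub : E ∩ (Prod.snd ⁻¹' Set.Iic r') ⊆ (E ∩ (Prod.snd ⁻¹' Set.Iic r)) ∪ (Prod.snd ⁻¹' Set.Ioc r r') := by
      rintro p ⟨hpE, hp2⟩
      by_cases hle : p.2 ≤ r
      · exact Or.inl ⟨hpE, hle⟩
      · exact Or.inr ⟨lt_of_not_ge hle, hp2⟩
    have := measure_union_le (μ := ρ) (E ∩ (Prod.snd ⁻¹' Set.Iic r)) (Prod.snd ⁻¹' Set.Ioc r r')
    have h2 : ρ (E ∩ (Prod.snd ⁻¹' Set.Iic r')) ≤ ρ (E ∩ (Prod.snd ⁻¹' Set.Iic r)) + ENNReal.ofReal (r' - r) := by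
      refine le_trans (measure_mono hsub) (le_trans this ?_)
      gcongr
      rw [hsnd _ measurableSet_Ioc, unif]
      rw [Measure.restrict_apply measurableSet_Ioc]
      refine le_trans (measure_mono (Set.inter_subset_left)) ?_
      rw [Real.volume_Ioc]
    have h3 := ENNReal.toReal_mono (by finiteness) h2
    rw [ENNReal.toReal_add (hfin _) (by finiteness), ENNReal.toReal_ofReal_eq_iff.2 ?_] at h3
    · linarith [h3]
    · linarith
  have hcont : Continuous h := by
    apply LipschitzWith.continuous (K := 1)
    apply LipschitzWith.of_dist_le_mul
    intro r r'
    rw [NNReal.coe_one, one_mul, Real.dist_eq, Real.dist_eq]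
    rcases le_total r r' with hc | hc
    · rw [abs_sub_comm, abs_of_nonneg (by linarith [hmono hc]), abs_of_nonpos (by linarith)]
      linarith [hlip r r' hc]
    · rw [abs_of_nonneg (by linarith [hmono hc]), abs_of_nonneg (by linarith)]
      linarith [hlip r' r hc]
  have h0 : h 0 = 0 := by
    have : ρ (E ∩ (Prod.snd ⁻¹' Set.Iic 0)) = 0 := by
      refine le_antisymm (le_trans (measure_mono Set.inter_subset_right) ?_) zero_le
      rw [hsnd _ measurableSet_Iic, unif, Measure.restrict_apply measurableSet_Iic]
      have : Set.Iic (0:ℝ) ∩ Set.Icc 0 1 = {0} := by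
        ext x; simp only [Set.mem_inter_iff, Set.mem_Iic, Set.mem_Icc, Set.mem_singleton_iff]
        constructor
        · rintro ⟨h1, h2, h3⟩; linarith
        · rintro rfl; norm_num
      rw [this, Real.volume_singleton]
    rw [hh]; simp [this]
  have h1 : h 1 = (ρ E).toReal := by
    rw [hh]
    simp only []
    congr 1
    refine le_antisymm (measure_mono Set.inter_subset_left) ?_
    have hd : ρ (E \ (Prod.snd ⁻¹' Set.Iic 1)) = 0 := by
      have hsub2 : E \ (Prod.snd ⁻¹' Set.Iic 1) ⊆ Prod.snd ⁻¹' (Set.Ioi 1) :=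
        fun p hp => show (1:ℝ) < p.2 from lt_of_not_ge fun hle => hp.2 hle
      refine le_antisymm (le_trans (measure_mono hsub2) ?_) zero_le
      · rw [hsnd _ measurableSet_Ioi, unif, Measure.restrict_apply measurableSet_Ioi]
        have h2 : Set.Ioi (1:ℝ) ∩ Set.Icc 0 1 = ∅ := by
          ext x; simp only [Set.mem_inter_iff, Set.mem_Ioi, Set.mem_Icc, Set.mem_empty_iff_false, iff_false]
          rintro ⟨h1, h2, h3⟩; linarith
        rw [h2, measure_empty]
    calc ρ E ≤ ρ (E ∩ (Prod.snd ⁻¹' Set.Iic 1)) + ρ (E \ (Prod.snd ⁻¹' Set.Iic 1)) :=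
          measure_le_inter_add_diff ρ E _
      _ = ρ (E ∩ (Prod.snd ⁻¹' Set.Iic 1)) := by rw [hd, add_zero]
  have hmem : m ∈ Set.Icc (h 0) (h 1) := by
    rw [h0, h1]
    exact ⟨hm0, by
      have := ENNReal.toReal_mono (hfin E) hmE
      rwa [ENNReal.toReal_ofReal hm0] at this⟩
  obtain ⟨r, _, hr⟩ := intermediate_value_Icc (by norm_num : (0:ℝ) ≤ 1) hcont.continuousOn hmem
  refine ⟨E ∩ (Prod.snd ⁻¹' Set.Iic r), hE.inter (measurable_snd measurableSet_Iic), Set.inter_subset_left, ?_⟩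
  rw [← ENNReal.ofReal_toReal (hfin (E ∩ (Prod.snd ⁻¹' Set.Iic r)))]
  have : (ρ (E ∩ Prod.snd ⁻¹' Set.Iic r)).toReal = m := hr
  rw [this]

end Sweep

variable {Ω : Type*} [MeasurableSpace Ω]

lemma key_upper (ρ : Measure Ω) [IsProbabilityMeasure ρ]
    (X : Ω → ℝ) (hX : Measurable X) (μ : Measure ℝ) [IsProbabilityMeasure μ]
    (hlaw : ρ.map X = μ) (a b : ℝ) (ha : 0 ≤ a) (hab : a < b) (hb : b < 1)
    (D : Set Ω) (hD : MeasurableSet D) (hρD : ρ D = ENNReal.ofReal (b - a))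
    (hDle : ∀ p ∈ D, X p ≤ quantile μ b)
    (hAi : ρ (Dᶜ ∩ {p | X p < quantile μ b}) ≤ ENNReal.ofReal a)
    (L : ℝ) (hlb : ∀ᵐ p ∂ρ.restrict D, L ≤ X p) :
    IntegrableOn X D ρ ∧ IntegrableOn (quantile μ) (Set.Ioc a b) volume ∧
      ∫ p in D, X p ∂ρ ≤ ∫ t in Set.Ioc a b, quantile μ t := by
  set k := quantile μ b with hk
  set W := Set.Ioc a b with hW
  have hmap : ∀ s : Set ℝ, MeasurableSet s → ρ (X ⁻¹' s) = μ s := by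
    intro s hs; rw [← hlaw, Measure.map_apply hX hs]
  -- window pointwise cap
  have hqle : ∀ t ∈ W, quantile μ t ≤ k := fun t ht =>
    q_mono (lt_of_le_of_lt ha ht.1) hb ht.2
  -- a.e. membership facts
  have hDmem : ∀ᵐ p ∂ρ.restrict D, p ∈ D := ae_restrict_mem hD
  have hXleD : ∀ᵐ p ∂ρ.restrict D, X p ≤ k := hDmem.mono (fun p hp => hDle p hp)
  have hWmeas : MeasurableSet W := by rw [hW]; exact measurableSet_Ioc
  have hmemW : ∀ᵐ t ∂volume.restrict W, t ∈ W := ae_restrict_mem hWmeas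
  have hnnW : 0 ≤ᵐ[volume.restrict W] fun t => k - quantile μ t :=
    hmemW.mono (fun t ht => by simpa using hqle t ht)
  have hnnD : 0 ≤ᵐ[ρ.restrict D] fun p => k - X p :=
    hXleD.mono (fun p hp => by simpa using hp)
  -- integrability of X on D
  have hXint : IntegrableOn X D ρ := by
    refine Integrable.mono' (integrable_const (max |k| |L|)) hX.aestronglyMeasurable ?_
    filter_upwards [hXleD, hlb] with p h1 h2
    rw [Real.norm_eq_abs, abs_le]
    constructor
    · calc -(max |k| |L|) ≤ -|L| := by simp [neg_le_neg_iff]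
        _ ≤ L := neg_abs_le L
        _ ≤ X p := h2
    · exact le_trans h1 (le_trans (le_abs_self k) (le_max_left _ _))
  -- lintegral comparison via layer cake
  have hql : AEMeasurable (quantile μ) (volume.restrict W) := quantile_aemeasurable ha hb.le
  have lcW : ∫⁻ t in W, ENNReal.ofReal (k - quantile μ t) ∂volume
      = ∫⁻ s in Set.Ioi (0:ℝ), (volume.restrict W) {t | s < k - quantile μ t} := by
    exact lintegral_eq_lintegral_meas_lt _ hnnW (aemeasurable_const.sub hql)
  have lcD : ∫⁻ p in D, ENNReal.ofReal (k - X p) ∂ρ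
      = ∫⁻ s in Set.Ioi (0:ℝ), (ρ.restrict D) {p | s < k - X p} := by
    exact lintegral_eq_lintegral_meas_lt _ hnnD (aemeasurable_const.sub hX.aemeasurable)
  have hcomp : ∀ s : ℝ, 0 < s →
      (volume.restrict W) {t | s < k - quantile μ t} ≤ (ρ.restrict D) {p | s < k - X p} := by
    intro s hs
    set m := (μ (Set.Iio (k - s))).toReal with hm
    have hsub3 : {t | s < k - quantile μ t} ∩ W ⊆ Set.Ioc a m := by
      rintro t ⟨ht1, ht2⟩
      refine ⟨ht2.1, ?_⟩
      have hlt : quantile μ t < k - s := by simp only [Set.mem_setOf_eq] at ht1; linarith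
      exact q_lt_imp (lt_of_le_of_lt ha ht2.1) (lt_of_le_of_lt ht2.2 hb) hlt
    have hLHS : (volume.restrict W) {t | s < k - quantile μ t} ≤ ENNReal.ofReal (m - a) := by
      rw [Measure.restrict_apply₀' hWmeas.nullMeasurableSet]
      refine le_trans (measure_mono hsub3) (le_of_eq ?_)
      rw [Real.volume_Ioc]
    have hRHS : ENNReal.ofReal (m - a) ≤ (ρ.restrict D) {p | s < k - X p} := by
      rw [Measure.restrict_apply₀' hD.nullMeasurableSet]
      have hset : {p | s < k - X p} = X ⁻¹' (Set.Iio (k - s)) := by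
        ext p; simp [Set.mem_preimage]; constructor <;> intro h <;> linarith
      have hfull : ρ (X ⁻¹' (Set.Iio (k - s))) = ENNReal.ofReal m := by
        rw [hmap _ measurableSet_Iio, hm, ENNReal.ofReal_toReal (measure_ne_top μ _)]
      have hsplit : ρ (X ⁻¹' (Set.Iio (k - s)))
          ≤ ρ ({p | s < k - X p} ∩ D) + ENNReal.ofReal a := by
        calc ρ (X ⁻¹' (Set.Iio (k - s)))
            ≤ ρ (({p | s < k - X p} ∩ D) ∪ (Dᶜ ∩ {p | X p < k})) := by
              apply measure_mono
              intro p hp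
              simp only [Set.mem_preimage, Set.mem_Iio] at hp
              by_cases hpD : p ∈ D
              · exact Or.inl ⟨by simp; linarith, hpD⟩
              · exact Or.inr ⟨hpD, by simp; linarith⟩
          _ ≤ _ := le_trans (measure_union_le _ _) (by gcongr)
      rw [hfull] at hsplit
      calc ENNReal.ofReal (m - a) = ENNReal.ofReal m - ENNReal.ofReal a := ENNReal.ofReal_sub _ ha
        _ ≤ ρ ({p | s < k - X p} ∩ D) := by
            rw [tsub_le_iff_right]; exact hsplit
    exact le_trans hLHS hRHS
  have hlint : ∫⁻ t in W, ENNReal.ofReal (k - quantile μ t) ∂volume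
      ≤ ∫⁻ p in D, ENNReal.ofReal (k - X p) ∂ρ := by
    rw [lcW, lcD]
    apply lintegral_mono_ae
    rw [ae_restrict_iff' measurableSet_Ioi]
    filter_upwards with s hs
    exact hcomp s hs
  have hfinD : ∫⁻ p in D, ENNReal.ofReal (k - X p) ∂ρ < ⊤ := by
    calc ∫⁻ p in D, ENNReal.ofReal (k - X p) ∂ρ
        ≤ ∫⁻ _ in D, ENNReal.ofReal (k - L) ∂ρ := by
          apply lintegral_mono_ae
          filter_upwards [hlb] with p hp
          exact ENNReal.ofReal_le_ofReal (by linarith)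
      _ = ENNReal.ofReal (k - L) * ρ D := by rw [setLIntegral_const]
      _ < ⊤ := by finiteness
  have hfinW : ∫⁻ t in W, ENNReal.ofReal (k - quantile μ t) ∂volume < ⊤ :=
    lt_of_le_of_lt hlint hfinD
  -- integrability of the differences
  have hintWd : IntegrableOn (fun t => k - quantile μ t) W volume := by
    constructor
    · exact (aestronglyMeasurable_const.sub hql.aestronglyMeasurable)
    · rw [hasFiniteIntegral_iff_ofReal hnnW]
      exact hfinW
  have hintq : IntegrableOn (quantile μ) W volume :=
    ((integrable_const k).sub hintWd).congr
      (Filter.Eventually.of_forall (fun t => by simp [Pi.sub_apply]))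
  have hintDd : IntegrableOn (fun p => k - X p) D ρ := (integrable_const k).sub hXint
  -- real comparison
  have hreal : ∫ t in W, (k - quantile μ t) ∂volume ≤ ∫ p in D, (k - X p) ∂ρ := by
    rw [integral_eq_lintegral_of_nonneg_ae hnnW (aestronglyMeasurable_const.sub hql.aestronglyMeasurable),
      integral_eq_lintegral_of_nonneg_ae hnnD (aestronglyMeasurable_const.sub hX.aestronglyMeasurable)]
    exact ENNReal.toReal_mono hfinD.ne hlint
  have hWvol : (volume.restrict W) Set.univ = ENNReal.ofReal (b - a) := by
    rw [Measure.restrict_apply_univ, Real.volume_Ioc]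
  have hconstW : ∫ _ in W, k ∂volume = (b - a) * k := by
    rw [setIntegral_const, Measure.restrict_apply_univ] at *
    rw [show volume.real W = b - a from by rw [measureReal_def, hW, Real.volume_Ioc, ENNReal.toReal_ofReal (by linarith)]]
    simp [smul_eq_mul]
  have hconstD : ∫ _ in D, k ∂ρ = (b - a) * k := by
    rw [setIntegral_const, measureReal_def, hρD, ENNReal.toReal_ofReal (by linarith)]
    simp [smul_eq_mul]
  have eqW : ∫ t in W, quantile μ t ∂volume = (b - a) * k - ∫ t in W, (k - quantile μ t) ∂volume := by
    rw [← hconstW, ← integral_sub (integrable_const k) hintWd]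
    simp
  have eqD : ∫ p in D, X p ∂ρ = (b - a) * k - ∫ p in D, (k - X p) ∂ρ := by
    rw [← hconstD, ← integral_sub (integrable_const k) hintDd]
    simp
  refine ⟨hXint, hintq, ?_⟩
  rw [eqW, eqD]
  linarith

lemma key_lower (ρ : Measure Ω) [IsProbabilityMeasure ρ]
    (X : Ω → ℝ) (hX : Measurable X) (μ : Measure ℝ) [IsProbabilityMeasure μ]
    (hlaw : ρ.map X = μ) (a b : ℝ) (ha : 0 < a) (hab : a < b) (hb : b ≤ 1)
    (D : Set Ω) (hD : MeasurableSet D) (hρD : ρ D = ENNReal.ofReal (b - a))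
    (hDge : ∀ p ∈ D, quantile μ a ≤ X p)
    (hAi : ρ (Dᶜ ∩ {p | quantile μ a < X p}) ≤ ENNReal.ofReal (1 - b))
    (U : ℝ) (hub : ∀ᵐ p ∂ρ.restrict D, X p ≤ U) :
    IntegrableOn X D ρ ∧ IntegrableOn (quantile μ) (Set.Ioc a b) volume ∧
      ∫ t in Set.Ioc a b, quantile μ t ≤ ∫ p in D, X p ∂ρ := by
  set k := quantile μ a with hk
  set W := Set.Ioc a b with hW
  have hmap : ∀ s : Set ℝ, MeasurableSet s → ρ (X ⁻¹' s) = μ s := by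
    intro s hs; rw [← hlaw, Measure.map_apply hX hs]
  have hne1 : ∀ᵐ t : ℝ, t ≠ 1 := by
    have h1 : {u : ℝ | ¬ u ≠ 1} = {1} := by ext u; simp
    rw [ae_iff, h1]
    exact Real.volume_singleton
  have hWmeas : MeasurableSet W := by rw [hW]; exact measurableSet_Ioc
  have hmemW : ∀ᵐ t ∂volume.restrict W, t ∈ W := ae_restrict_mem hWmeas
  have hqgeW : ∀ᵐ t ∂volume.restrict W, k ≤ quantile μ t := by
    filter_upwards [hmemW, ae_restrict_of_ae hne1] with t ht h1
    exact q_mono ha (lt_of_le_of_ne (le_trans ht.2 hb) h1) ht.1.le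
  have hnnW : 0 ≤ᵐ[volume.restrict W] fun t => quantile μ t - k :=
    hqgeW.mono (fun t ht => by simpa using ht)
  have hDmem : ∀ᵐ p ∂ρ.restrict D, p ∈ D := ae_restrict_mem hD
  have hXgeD : ∀ᵐ p ∂ρ.restrict D, k ≤ X p := hDmem.mono (fun p hp => hDge p hp)
  have hnnD : 0 ≤ᵐ[ρ.restrict D] fun p => X p - k :=
    hXgeD.mono (fun p hp => by simpa using hp)
  have hXint : IntegrableOn X D ρ := by
    refine Integrable.mono' (integrable_const (max |k| |U|)) hX.aestronglyMeasurable ?_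
    filter_upwards [hXgeD, hub] with p h1 h2
    rw [Real.norm_eq_abs, abs_le]
    constructor
    · calc -(max |k| |U|) ≤ -|k| := by simp [neg_le_neg_iff]
        _ ≤ k := neg_abs_le k
        _ ≤ X p := h1
    · exact le_trans h2 (le_trans (le_abs_self U) (le_max_right _ _))
  have hql : AEMeasurable (quantile μ) (volume.restrict W) := quantile_aemeasurable ha.le hb
  have lcW : ∫⁻ t in W, ENNReal.ofReal (quantile μ t - k) ∂volume
      = ∫⁻ s in Set.Ioi (0:ℝ), (volume.restrict W) {t | s < quantile μ t - k} :=
    lintegral_eq_lintegral_meas_lt _ hnnW (hql.sub aemeasurable_const)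
  have lcD : ∫⁻ p in D, ENNReal.ofReal (X p - k) ∂ρ
      = ∫⁻ s in Set.Ioi (0:ℝ), (ρ.restrict D) {p | s < X p - k} :=
    lintegral_eq_lintegral_meas_lt _ hnnD (hX.aemeasurable.sub aemeasurable_const)
  have hcomp : ∀ s : ℝ, 0 < s →
      (volume.restrict W) {t | s < quantile μ t - k} ≤ (ρ.restrict D) {p | s < X p - k} := by
    intro s hs
    set m := (μ (Set.Iic (k + s))).toReal with hm
    have hm1 : m ≤ 1 := by
      rw [hm]
      calc (μ (Set.Iic (k+s))).toReal ≤ (μ Set.univ).toReal :=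
            ENNReal.toReal_mono (measure_ne_top μ _) (measure_mono (Set.subset_univ _))
        _ = 1 := by simp
    have hm0 : 0 ≤ m := ENNReal.toReal_nonneg
    have hsub3 : {t | s < quantile μ t - k} ∩ W ⊆ Set.Ioc m b := by
      rintro t ⟨ht1, ht2⟩
      refine ⟨?_, ht2.2⟩
      simp only [Set.mem_setOf_eq] at ht1
      by_contra hc
      push_neg at hc
      have := q_le_of_le (μ := μ) (lt_of_lt_of_le ha ht2.1.le) (le_trans hc (le_of_eq hm))
      linarith
    have hLHS : (volume.restrict W) {t | s < quantile μ t - k} ≤ ENNReal.ofReal (b - m) := by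
      rw [Measure.restrict_apply₀' hWmeas.nullMeasurableSet]
      refine le_trans (measure_mono hsub3) (le_of_eq ?_)
      rw [Real.volume_Ioc]
    have hRHS : ENNReal.ofReal (b - m) ≤ (ρ.restrict D) {p | s < X p - k} := by
      rw [Measure.restrict_apply₀' hD.nullMeasurableSet]
      have hfull : ρ (X ⁻¹' (Set.Ioi (k + s))) = ENNReal.ofReal (1 - m) := by
        rw [hmap _ measurableSet_Ioi]
        have : Set.Ioi (k+s) = (Set.Iic (k+s))ᶜ := by simp
        rw [this, measure_compl measurableSet_Iic (measure_ne_top μ _), measure_univ]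
        rw [show μ (Set.Iic (k+s)) = ENNReal.ofReal m from
          (ENNReal.ofReal_toReal (measure_ne_top μ _)).symm]
        rw [← ENNReal.ofReal_one, ← ENNReal.ofReal_sub _ hm0]
      have hsplit : ρ (X ⁻¹' (Set.Ioi (k + s)))
          ≤ ρ ({p | s < X p - k} ∩ D) + ENNReal.ofReal (1 - b) := by
        calc ρ (X ⁻¹' (Set.Ioi (k + s)))
            ≤ ρ (({p | s < X p - k} ∩ D) ∪ (Dᶜ ∩ {p | k < X p})) := by
              apply measure_mono
              intro p hp
              simp only [Set.mem_preimage, Set.mem_Ioi] at hp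
              by_cases hpD : p ∈ D
              · exact Or.inl ⟨by simp only [Set.mem_setOf_eq]; linarith, hpD⟩
              · exact Or.inr ⟨hpD, by simp only [Set.mem_setOf_eq]; linarith⟩
          _ ≤ _ := le_trans (measure_union_le _ _) (by gcongr)
      rw [hfull] at hsplit
      calc ENNReal.ofReal (b - m) = ENNReal.ofReal (1 - m) - ENNReal.ofReal (1 - b) := by
            rw [← ENNReal.ofReal_sub _ (by linarith : (0:ℝ) ≤ 1 - b)]
            ring_nf
        _ ≤ ρ ({p | s < X p - k} ∩ D) := by
            rw [tsub_le_iff_right]; exact hsplit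
    exact le_trans hLHS hRHS
  have hlint : ∫⁻ t in W, ENNReal.ofReal (quantile μ t - k) ∂volume
      ≤ ∫⁻ p in D, ENNReal.ofReal (X p - k) ∂ρ := by
    rw [lcW, lcD]
    apply lintegral_mono_ae
    rw [ae_restrict_iff' measurableSet_Ioi]
    filter_upwards with s hs
    exact hcomp s hs
  have hfinD : ∫⁻ p in D, ENNReal.ofReal (X p - k) ∂ρ < ⊤ := by
    calc ∫⁻ p in D, ENNReal.ofReal (X p - k) ∂ρ
        ≤ ∫⁻ _ in D, ENNReal.ofReal (U - k) ∂ρ := by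
          apply lintegral_mono_ae
          filter_upwards [hub] with p hp
          exact ENNReal.ofReal_le_ofReal (by linarith)
      _ = ENNReal.ofReal (U - k) * ρ D := by rw [setLIntegral_const]
      _ < ⊤ := by finiteness
  have hfinW : ∫⁻ t in W, ENNReal.ofReal (quantile μ t - k) ∂volume < ⊤ :=
    lt_of_le_of_lt hlint hfinD
  have hintWd : IntegrableOn (fun t => quantile μ t - k) W volume := by
    constructor
    · exact (hql.aestronglyMeasurable.sub aestronglyMeasurable_const)
    · rw [hasFiniteIntegral_iff_ofReal hnnW]
      exact hfinW
  have hintq : IntegrableOn (quantile μ) W volume :=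
    (hintWd.add (integrable_const k)).congr
      (Filter.Eventually.of_forall (fun t => by simp))
  have hintDd : IntegrableOn (fun p => X p - k) D ρ := hXint.sub (integrable_const k)
  have hreal : ∫ t in W, (quantile μ t - k) ∂volume ≤ ∫ p in D, (X p - k) ∂ρ := by
    rw [integral_eq_lintegral_of_nonneg_ae hnnW (hql.aestronglyMeasurable.sub aestronglyMeasurable_const),
      integral_eq_lintegral_of_nonneg_ae hnnD (hX.aestronglyMeasurable.sub aestronglyMeasurable_const)]
    exact ENNReal.toReal_mono hfinD.ne hlint
  have hWvol : (volume W).toReal = b - a := by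
    rw [hW, Real.volume_Ioc, ENNReal.toReal_ofReal (by linarith)]
  have eqW : ∫ t in W, (quantile μ t - k) ∂volume = (∫ t in W, quantile μ t) - (b - a) * k := by
    rw [integral_sub hintq (integrable_const k), setIntegral_const, measureReal_def, hWvol]
    simp [smul_eq_mul]
  have eqD : ∫ p in D, (X p - k) ∂ρ = (∫ p in D, X p ∂ρ) - (b - a) * k := by
    rw [integral_sub hXint (integrable_const k), setIntegral_const, measureReal_def, hρD,
      ENNReal.toReal_ofReal (by linarith)]
    simp [smul_eq_mul]
  refine ⟨hXint, hintq, ?_⟩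
  rw [eqW, eqD] at hreal
  linarith

-- build the exact-measure avoidance set D
lemma buildD (n : ℕ) (P : Measure (Fin n → ℝ)) [IsProbabilityMeasure P]
    (μ : Fin n → Measure ℝ) [∀ i, IsProbabilityMeasure (μ i)]
    (hlaw : ∀ i, P.map (fun x => x i) = μ i)
    (β : Fin n → ℝ) (hβ : ∀ i, 0 < β i) (hsum : ∑ i, β i < 1)
    (T : Fin n → Set ℝ) (k : Fin n → ℝ)
    (hTmeas : ∀ i, MeasurableSet (T i)) (hknotT : ∀ i, k i ∉ T i)
    (hγ : ∀ i, μ i (T i) ≤ ENNReal.ofReal (β i))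
    (hatom : ∀ i, ENNReal.ofReal (β i) ≤ μ i (T i) + μ i {k i}) :
    ∃ D : Set ((Fin n → ℝ) × ℝ), MeasurableSet D ∧
      (P.prod unif) D = ENNReal.ofReal (1 - ∑ i, β i) ∧
      (∀ i, ∀ p ∈ D, p.1 i ∉ T i) ∧
      (∀ i, (P.prod unif) (Dᶜ ∩ {p | p.1 i ∉ T i ∧ p.1 i ≠ k i})
          ≤ ENNReal.ofReal ((∑ j, β j) - β i)) := by
  classical
  set B := ∑ i, β i with hB
  have hB0 : 0 ≤ B := Finset.sum_nonneg (fun i _ => (hβ i).le)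
  have hβB : ∀ i, β i ≤ B := fun i =>
    Finset.single_le_sum (fun j _ => (hβ j).le) (Finset.mem_univ i)
  set ρ : Measure ((Fin n → ℝ) × ℝ) := P.prod unif with hρ
  have hPmap : ∀ i, ∀ s : Set ℝ, MeasurableSet s → P ((fun x => x i) ⁻¹' s) = μ i s := by
    intro i s hs
    rw [← hlaw i, Measure.map_apply (measurable_pi_apply i) hs]
  -- parameters
  set γ : Fin n → ℝ := fun i => (μ i (T i)).toReal with hγdef
  set at' : Fin n → ℝ := fun i => (μ i {k i}).toReal with hatdef
  have hγ' : ∀ i, γ i ≤ β i := by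
    intro i
    have := ENNReal.toReal_mono (by simp) (hγ i)
    rwa [ENNReal.toReal_ofReal (hβ i).le] at this
  have hat' : ∀ i, β i ≤ γ i + at' i := by
    intro i
    have := ENNReal.toReal_mono (by
      exact ENNReal.add_ne_top.2 ⟨measure_ne_top _ _, measure_ne_top _ _⟩) (hatom i)
    rwa [ENNReal.toReal_ofReal (hβ i).le, ENNReal.toReal_add (measure_ne_top _ _) (measure_ne_top _ _)] at this
  set r : Fin n → ℝ := fun i => if at' i = 0 then 0 else (β i - γ i) / at' i with hr
  have hat0 : ∀ i, 0 ≤ at' i := fun i => ENNReal.toReal_nonneg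
  have hr0 : ∀ i, 0 ≤ r i := by
    intro i
    show (0:ℝ) ≤ (if at' i = 0 then 0 else (β i - γ i) / at' i)
    split_ifs with h
    · exact le_refl 0
    · exact div_nonneg (by linarith [hγ' i]) (lt_of_le_of_ne (hat0 i) (Ne.symm h)).le
  have hr1 : ∀ i, r i ≤ 1 := by
    intro i
    show (if at' i = 0 then 0 else (β i - γ i) / at' i) ≤ 1
    split_ifs with h
    · norm_num
    · rw [div_le_one (lt_of_le_of_ne (hat0 i) (Ne.symm h))]
      linarith [hat' i]
  -- the sets A i
  set A : Fin n → Set ((Fin n → ℝ) × ℝ) := fun i =>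
    ((fun x : Fin n → ℝ => x i) ⁻¹' (T i)) ×ˢ (Set.univ : Set ℝ) ∪
    ((fun x : Fin n → ℝ => x i) ⁻¹' {k i}) ×ˢ (Set.Iic (r i)) with hA
  have hAmeas : ∀ i, MeasurableSet (A i) := by
    intro i
    exact (((measurable_pi_apply i) (hTmeas i)).prod MeasurableSet.univ).union
      (((measurable_pi_apply i) (measurableSet_singleton _)).prod measurableSet_Iic)
  have hAX : ∀ i, ∀ p, p ∈ A i → p.1 i ∈ T i ∨ p.1 i = k i := by
    intro i p hp
    rcases hp with h | h
    · exact Or.inl h.1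
    · exact Or.inr h.1
  have hAmass : ∀ i, ρ (A i) = ENNReal.ofReal (β i) := by
    intro i
    have hdisj : Disjoint (((fun x : Fin n → ℝ => x i) ⁻¹' (T i)) ×ˢ (Set.univ : Set ℝ))
        (((fun x : Fin n → ℝ => x i) ⁻¹' {k i}) ×ˢ (Set.Iic (r i))) := by
      rw [Set.disjoint_left]
      rintro p ⟨hp1, -⟩ ⟨hp2, -⟩
      simp only [Set.mem_preimage, Set.mem_singleton_iff] at hp1 hp2
      exact hknotT i (hp2 ▸ hp1)
    rw [hA]
    simp only []
    rw [measure_union hdisj (((measurable_pi_apply i) (measurableSet_singleton _)).prod measurableSet_Iic)]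
    rw [Measure.prod_prod, Measure.prod_prod]
    rw [hPmap i _ (hTmeas i), hPmap i _ (measurableSet_singleton _)]
    rw [measure_univ, mul_one, unif_Iic (r i) (hr0 i) (hr1 i)]
    rw [show μ i (T i) = ENNReal.ofReal (γ i) from (ENNReal.ofReal_toReal (measure_ne_top _ _)).symm,
      show μ i {k i} = ENNReal.ofReal (at' i) from (ENNReal.ofReal_toReal (measure_ne_top _ _)).symm]
    rw [← ENNReal.ofReal_mul (hat0 i), ← ENNReal.ofReal_add (by
      exact ENNReal.toReal_nonneg) (mul_nonneg (hat0 i) (hr0 i))]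
    congr 1
    show γ i + at' i * (if at' i = 0 then 0 else (β i - γ i) / at' i) = β i
    split_ifs with h
    · rw [h]
      have h1 := hat' i
      rw [h] at h1
      have h2 := hγ' i
      linarith
    · rw [mul_comm, div_mul_cancel₀ _ h]; ring
  -- the union and its complement
  set E : Set ((Fin n → ℝ) × ℝ) := (⋃ i, A i)ᶜ with hE
  have hEmeas : MeasurableSet E := (MeasurableSet.iUnion hAmeas).compl
  have hUmass : ρ (⋃ i, A i) ≤ ENNReal.ofReal B := by
    refine le_trans (measure_iUnion_le _) ?_
    rw [show (∑' i, ρ (A i)) = ∑ i, ρ (A i) from tsum_fintype _]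
    calc ∑ i, ρ (A i) = ∑ i, ENNReal.ofReal (β i) := Finset.sum_congr rfl (fun i _ => hAmass i)
      _ = ENNReal.ofReal (∑ i, β i) := (ENNReal.ofReal_sum_of_nonneg (fun i _ => (hβ i).le)).symm
      _ ≤ ENNReal.ofReal B := by rw [hB]
  have hEmass : ENNReal.ofReal (1 - B) ≤ ρ E := by
    rw [hE, measure_compl (MeasurableSet.iUnion hAmeas) (measure_ne_top _ _), measure_univ]
    calc ENNReal.ofReal (1 - B) ≤ 1 - ENNReal.ofReal B := by
          rw [← ENNReal.ofReal_one, ← ENNReal.ofReal_sub _ hB0]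
      _ ≤ 1 - ρ (⋃ i, A i) := tsub_le_tsub_left hUmass 1
  obtain ⟨D, hDmeas, hDE, hDmass⟩ := sweep P E hEmeas (1 - B) (by linarith) hEmass
  refine ⟨D, hDmeas, hDmass, ?_, ?_⟩
  · intro i p hp
    intro hT
    exact (hDE hp) (Set.mem_iUnion.2 ⟨i, Or.inl ⟨hT, Set.mem_univ _⟩⟩)
  · intro i
    have hsub : Dᶜ ∩ {p : (Fin n → ℝ) × ℝ | p.1 i ∉ T i ∧ p.1 i ≠ k i} ⊆ Dᶜ \ A i := by
      rintro p ⟨hp1, hp2, hp3⟩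
      refine ⟨hp1, fun hpA => ?_⟩
      rcases hAX i p hpA with h | h
      · exact hp2 h
      · exact hp3 h
    refine le_trans (measure_mono hsub) ?_
    have hAD : A i ⊆ Dᶜ := by
      intro p hp
      intro hpD
      exact (hDE hpD) (Set.mem_iUnion.2 ⟨i, hp⟩)
    rw [measure_diff hAD (hAmeas i).nullMeasurableSet (measure_ne_top _ _)]
    rw [hAmass i, measure_compl hDmeas (measure_ne_top _ _), measure_univ, hDmass]
    rw [show (1:ℝ≥0∞) - ENNReal.ofReal (1 - B) = ENNReal.ofReal B from by
      rw [← ENNReal.ofReal_one, ← ENNReal.ofReal_sub _ (by linarith : (0:ℝ) ≤ 1 - B)]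
      norm_num]
    rw [← ENNReal.ofReal_sub _ (hβ i).le]

set_option maxHeartbeats 1000000 in
theorem stmt9' (n : ℕ) (μ : Fin n → Measure ℝ) (hprob : ∀ i, IsProbabilityMeasure (μ i))
    (C : ℝ) (P : Measure (Fin n → ℝ)) (hPprob : IsProbabilityMeasure P)
    (hPmap : ∀ i, P.map (fun x => x i) = μ i) (hPC : P {x | ∑ i, x i = C} = 1)
    (β : Fin n → ℝ)
    (hβ : ∀ i, β i ∈ Set.Ioo (0 : ℝ) 1) (hsum : ∑ i, β i < 1) :
    ∑ i, avgQuantile (μ i) (β i) (1 - (∑ j, β j) + β i) ≤ C ∧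
    C ≤ ∑ i, avgQuantile (μ i) ((∑ j, β j) - β i) (1 - β i) := by
  classical
  haveI := hPprob
  haveI : ∀ i, IsProbabilityMeasure (μ i) := hprob
  set B := ∑ j, β j with hB
  have hB0 : 0 ≤ B := Finset.sum_nonneg (fun i _ => (hβ i).1.le)
  have hB1 : B < 1 := hsum
  have hβB : ∀ i, β i ≤ B := fun i =>
    Finset.single_le_sum (fun j _ => (hβ j).1.le) (Finset.mem_univ i)
  set ρ : Measure ((Fin n → ℝ) × ℝ) := P.prod unif with hρ
  haveI : IsProbabilityMeasure ρ := by rw [hρ]; infer_instance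
  have hfst : ρ.map Prod.fst = P := by
    rw [hρ, Measure.map_fst_prod, measure_univ, one_smul]
  have hlaw : ∀ i, ρ.map (fun p : (Fin n → ℝ) × ℝ => p.1 i) = μ i := by
    intro i
    have hcomp : (fun p : (Fin n → ℝ) × ℝ => p.1 i) = (fun x : Fin n → ℝ => x i) ∘ Prod.fst := rfl
    rw [hcomp, ← Measure.map_map (measurable_pi_apply i) measurable_fst, hfst, hPmap i]
  have hsummeas : Measurable (fun x : Fin n → ℝ => ∑ i, x i) :=
    Finset.measurable_sum Finset.univ (fun i _ => measurable_pi_apply i)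
  have hGmeas : MeasurableSet {x : Fin n → ℝ | ∑ i, x i = C} :=
    hsummeas (measurableSet_singleton C)
  have hcenter : ρ {p : (Fin n → ℝ) × ℝ | ∑ i, p.1 i = C} = 1 := by
    have hpre : {p : (Fin n → ℝ) × ℝ | ∑ i, p.1 i = C}
        = Prod.fst ⁻¹' {x : Fin n → ℝ | ∑ i, x i = C} := rfl
    rw [hpre, ← Measure.map_apply measurable_fst hGmeas, hfst, hPC]
  have hGmeas2 : MeasurableSet {p : (Fin n → ℝ) × ℝ | ∑ i, p.1 i = C} :=
    hGmeas.preimage measurable_fst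
  have hcae : ∀ᵐ p ∂ρ, ∑ i, p.1 i = C := by
    rw [ae_iff]
    have hcompl : {p : (Fin n → ℝ) × ℝ | ¬ ∑ i, p.1 i = C}
        = {p : (Fin n → ℝ) × ℝ | ∑ i, p.1 i = C}ᶜ := rfl
    rw [hcompl, measure_compl hGmeas2 (measure_ne_top _ _), hcenter,
      measure_univ, tsub_self]
  have toReal_compl : ∀ i (s : Set ℝ), MeasurableSet s → ((μ i) sᶜ).toReal = 1 - ((μ i) s).toReal := by
    intro i s hs
    rw [measure_compl hs (measure_ne_top _ _), measure_univ,
      ENNReal.toReal_sub_of_le prob_le_one one_ne_top, ENNReal.toReal_one]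
  have meas_le_ofReal : ∀ i (s : Set ℝ) (c : ℝ), ((μ i) s).toReal ≤ c → (μ i) s ≤ ENNReal.ofReal c := by
    intro i s c h
    rw [← ENNReal.ofReal_toReal (measure_ne_top (μ i) s)]
    exact ENNReal.ofReal_le_ofReal h
  constructor
  · -- LOWER BOUND: ∑ avg over (βᵢ, 1-B+βᵢ] ≤ C
    set k : Fin n → ℝ := fun i => quantile (μ i) (β i) with hk
    have hγ : ∀ i, (μ i) (Set.Iio (k i)) ≤ ENNReal.ofReal (β i) :=
      fun i => meas_le_ofReal i _ _ (Iio_quantile_le (hβ i).1)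
    have hatom : ∀ i, ENNReal.ofReal (β i) ≤ (μ i) (Set.Iio (k i)) + (μ i) {k i} := by
      intro i
      have hsplit : Set.Iio (k i) ∪ {k i} = Set.Iic (k i) := by
        ext x; simp only [Set.mem_union, Set.mem_Iio, Set.mem_singleton_iff, Set.mem_Iic]
        constructor
        · rintro (h | rfl); exacts [h.le, le_rfl]
        · intro h; rcases lt_or_eq_of_le h with h | h; exacts [Or.inl h, Or.inr h]
      have := measure_union_le (μ := μ i) (Set.Iio (k i)) {k i}
      rw [hsplit] at this
      refine le_trans ?_ this
      rw [← ENNReal.ofReal_toReal (measure_ne_top (μ i) (Set.Iic (k i)))]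
      exact ENNReal.ofReal_le_ofReal (le_F_quantile (hβ i).1 (hβ i).2)
    obtain ⟨D, hDmeas, hDmass, hDavoid, hDcompl⟩ := buildD n P μ hPmap β (fun i => (hβ i).1)
      hsum (fun i => Set.Iio (k i)) k (fun i => measurableSet_Iio)
      (fun i => by simp) hγ hatom
    have hDge : ∀ i, ∀ p ∈ D, k i ≤ p.1 i :=
      fun i p hp => not_lt.1 (fun h => hDavoid i p hp h)
    have hkey : ∀ i, IntegrableOn (fun p : (Fin n → ℝ) × ℝ => p.1 i) D ρ ∧
        IntegrableOn (quantile (μ i)) (Set.Ioc (β i) (1 - B + β i)) volume ∧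
        ∫ t in Set.Ioc (β i) (1 - B + β i), quantile (μ i) t ≤ ∫ p in D, p.1 i ∂ρ := by
      intro i
      refine key_lower ρ (fun p => p.1 i) (by exact (measurable_pi_apply i).comp measurable_fst)
        (μ i) (hlaw i) (β i) (1 - B + β i) (hβ i).1 (by linarith) (by linarith [hβB i]) D hDmeas
        ?_ (fun p hp => hDge i p hp) ?_ (C - (∑ j, k j) + k i) ?_
      · rw [show (1 - B + β i) - β i = 1 - B by ring]; exact hDmass
      · rw [show (1:ℝ) - (1 - B + β i) = B - β i by ring]
        refine le_trans (measure_mono ?_) (hDcompl i)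
        rintro p ⟨hp1, hp2⟩
        simp only [Set.mem_setOf_eq] at hp2
        refine ⟨hp1, fun h => ?_, fun h => ?_⟩
        · simp only [Set.mem_Iio] at h; linarith
        · rw [h] at hp2; exact lt_irrefl _ hp2
      · filter_upwards [ae_restrict_mem hDmeas, ae_restrict_of_ae hcae] with p hpD hpC
        have hall : ∀ j, k j ≤ p.1 j := fun j => hDge j p hpD
        have h1 : ∑ j ∈ Finset.univ.erase i, k j ≤ ∑ j ∈ Finset.univ.erase i, p.1 j :=
          Finset.sum_le_sum (fun j _ => hall j)
        have h2 : ∑ j ∈ Finset.univ.erase i, p.1 j = C - p.1 i := by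
          rw [Finset.sum_erase_eq_sub (Finset.mem_univ i), hpC]
        have h3 : ∑ j ∈ Finset.univ.erase i, k j = (∑ j, k j) - k i :=
          Finset.sum_erase_eq_sub (Finset.mem_univ i)
        rw [h3, h2] at h1
        linarith
    have hintsum : ∫ p in D, (∑ i, p.1 i) ∂ρ = ∑ i, ∫ p in D, p.1 i ∂ρ :=
      integral_finset_sum Finset.univ (fun i _ => (hkey i).1)
    have hCint : ∫ p in D, (∑ i, p.1 i) ∂ρ = (1 - B) * C := by
      rw [integral_congr_ae (g := fun _ => C) ((ae_restrict_of_ae hcae).mono (fun p hp => hp))]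
      rw [setIntegral_const, measureReal_def, hDmass, ENNReal.toReal_ofReal (by linarith)]
      simp [smul_eq_mul, hB]
    have hmain : ∑ i, ∫ t in Set.Ioc (β i) (1 - B + β i), quantile (μ i) t ≤ (1 - B) * C := by
      rw [← hCint, hintsum]
      exact Finset.sum_le_sum (fun i _ => (hkey i).2.2)
    have havg : ∀ i, avgQuantile (μ i) (β i) (1 - B + β i)
        = (1 - B)⁻¹ * ∫ t in Set.Ioc (β i) (1 - B + β i), quantile (μ i) t := by
      intro i
      rw [avgQuantile, intervalIntegral.integral_of_le (by linarith : β i ≤ 1 - B + β i)]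
      rw [show (1 - B + β i) - β i = 1 - B by ring]
    calc ∑ i, avgQuantile (μ i) (β i) (1 - B + β i)
        = (1 - B)⁻¹ * ∑ i, ∫ t in Set.Ioc (β i) (1 - B + β i), quantile (μ i) t := by
          rw [Finset.mul_sum]
          exact Finset.sum_congr rfl (fun i _ => havg i)
      _ ≤ (1 - B)⁻¹ * ((1 - B) * C) := by
          apply mul_le_mul_of_nonneg_left hmain (inv_nonneg.2 (by linarith))
      _ = C := by
          rw [← mul_assoc, inv_mul_cancel₀ (by linarith : (1:ℝ) - B ≠ 0), one_mul]
  · -- UPPER BOUND: C ≤ ∑ avg over (B-βᵢ, 1-βᵢ]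
    set k : Fin n → ℝ := fun i => quantile (μ i) (1 - β i) with hk
    have hγ : ∀ i, (μ i) (Set.Ioi (k i)) ≤ ENNReal.ofReal (β i) := by
      intro i
      apply meas_le_ofReal
      have h1 : 1 - β i ≤ ((μ i) (Set.Iic (k i))).toReal :=
        le_F_quantile (by linarith [(hβ i).2]) (by linarith [(hβ i).1])
      have h2 : Set.Ioi (k i) = (Set.Iic (k i))ᶜ := by simp
      rw [h2, toReal_compl i _ measurableSet_Iic]
      linarith
    have hatom : ∀ i, ENNReal.ofReal (β i) ≤ (μ i) (Set.Ioi (k i)) + (μ i) {k i} := by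
      intro i
      have hsplit : Set.Ioi (k i) ∪ {k i} = Set.Ici (k i) := by
        ext x; simp only [Set.mem_union, Set.mem_Ioi, Set.mem_singleton_iff, Set.mem_Ici]
        constructor
        · rintro (h | rfl); exacts [h.le, le_rfl]
        · intro h; rcases lt_or_eq_of_le h with h | h; exacts [Or.inl h, Or.inr h.symm]
      have hle := measure_union_le (μ := μ i) (Set.Ioi (k i)) {k i}
      rw [hsplit] at hle
      refine le_trans ?_ hle
      rw [← ENNReal.ofReal_toReal (measure_ne_top (μ i) (Set.Ici (k i)))]
      apply ENNReal.ofReal_le_ofReal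
      have h2 : Set.Ici (k i) = (Set.Iio (k i))ᶜ := by simp
      rw [h2, toReal_compl i _ measurableSet_Iio]
      have := Iio_quantile_le (μ := μ i) (t := 1 - β i) (by linarith [(hβ i).2])
      linarith
    obtain ⟨D, hDmeas, hDmass, hDavoid, hDcompl⟩ := buildD n P μ hPmap β (fun i => (hβ i).1)
      hsum (fun i => Set.Ioi (k i)) k (fun i => measurableSet_Ioi)
      (fun i => by simp) hγ hatom
    have hDle : ∀ i, ∀ p ∈ D, p.1 i ≤ k i :=
      fun i p hp => not_lt.1 (fun h => hDavoid i p hp h)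
    have hkey : ∀ i, IntegrableOn (fun p : (Fin n → ℝ) × ℝ => p.1 i) D ρ ∧
        IntegrableOn (quantile (μ i)) (Set.Ioc (B - β i) (1 - β i)) volume ∧
        ∫ p in D, p.1 i ∂ρ ≤ ∫ t in Set.Ioc (B - β i) (1 - β i), quantile (μ i) t := by
      intro i
      refine key_upper ρ (fun p => p.1 i) (by exact (measurable_pi_apply i).comp measurable_fst)
        (μ i) (hlaw i) (B - β i) (1 - β i) (by linarith [hβB i]) (by linarith)
        (by linarith [(hβ i).1]) D hDmeas
        ?_ (fun p hp => hDle i p hp) ?_ (C - (∑ j, k j) + k i) ?_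
      · rw [show (1 - β i) - (B - β i) = 1 - B by ring]; exact hDmass
      · refine le_trans (measure_mono ?_) (hDcompl i)
        rintro p ⟨hp1, hp2⟩
        simp only [Set.mem_setOf_eq] at hp2
        refine ⟨hp1, fun h => ?_, fun h => ?_⟩
        · simp only [Set.mem_Ioi] at h; linarith
        · rw [h] at hp2; exact lt_irrefl _ hp2
      · filter_upwards [ae_restrict_mem hDmeas, ae_restrict_of_ae hcae] with p hpD hpC
        have hall : ∀ j, p.1 j ≤ k j := fun j => hDle j p hpD
        have h1 : ∑ j ∈ Finset.univ.erase i, p.1 j ≤ ∑ j ∈ Finset.univ.erase i, k j :=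
          Finset.sum_le_sum (fun j _ => hall j)
        have h2 : ∑ j ∈ Finset.univ.erase i, p.1 j = C - p.1 i := by
          rw [Finset.sum_erase_eq_sub (Finset.mem_univ i), hpC]
        have h3 : ∑ j ∈ Finset.univ.erase i, k j = (∑ j, k j) - k i :=
          Finset.sum_erase_eq_sub (Finset.mem_univ i)
        rw [h3, h2] at h1
        linarith
    have hintsum : ∫ p in D, (∑ i, p.1 i) ∂ρ = ∑ i, ∫ p in D, p.1 i ∂ρ :=
      integral_finset_sum Finset.univ (fun i _ => (hkey i).1)
    have hCint : ∫ p in D, (∑ i, p.1 i) ∂ρ = (1 - B) * C := by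
      rw [integral_congr_ae (g := fun _ => C) ((ae_restrict_of_ae hcae).mono (fun p hp => hp))]
      rw [setIntegral_const, measureReal_def, hDmass, ENNReal.toReal_ofReal (by linarith)]
      simp [smul_eq_mul, hB]
    have hmain : (1 - B) * C ≤ ∑ i, ∫ t in Set.Ioc (B - β i) (1 - β i), quantile (μ i) t := by
      rw [← hCint, hintsum]
      exact Finset.sum_le_sum (fun i _ => (hkey i).2.2)
    have havg : ∀ i, avgQuantile (μ i) (B - β i) (1 - β i)
        = (1 - B)⁻¹ * ∫ t in Set.Ioc (B - β i) (1 - β i), quantile (μ i) t := by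
      intro i
      rw [avgQuantile, intervalIntegral.integral_of_le (by linarith : B - β i ≤ 1 - β i)]
      rw [show (1 - β i) - (B - β i) = 1 - B by ring]
    calc C = (1 - B)⁻¹ * ((1 - B) * C) := by
          rw [← mul_assoc, inv_mul_cancel₀ (by linarith : (1:ℝ) - B ≠ 0), one_mul]
      _ ≤ (1 - B)⁻¹ * ∑ i, ∫ t in Set.Ioc (B - β i) (1 - β i), quantile (μ i) t := by
          apply mul_le_mul_of_nonneg_left hmain (inv_nonneg.2 (by linarith))
      _ = ∑ i, avgQuantile (μ i) (B - β i) (1 - β i) := by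
          rw [Finset.mul_sum]
          exact Finset.sum_congr rfl (fun i _ => (havg i).symm)


theorem stmt9 (n : ℕ) (μ : Fin n → Measure ℝ) (hprob : ∀ i, IsProbabilityMeasure (μ i))
    (C : ℝ) (hJM : IsJointMix n μ C) (β : Fin n → ℝ)
    (hβ : ∀ i, β i ∈ Set.Ioo (0 : ℝ) 1) (hsum : ∑ i, β i < 1) :
    ∑ i, avgQuantile (μ i) (β i) (1 - (∑ j, β j) + β i) ≤ C ∧
    C ≤ ∑ i, avgQuantile (μ i) ((∑ j, β j) - β i) (1 - β i) := by
  obtain ⟨P, hPprob, hPmap, hPC⟩ := hJM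
  exact stmt9' n μ hprob C P hPprob hPmap hPC β hβ hsum
end
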